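/- arXiv:2012.15135 — 12 statements merged into one kernel-verified Lean document; each statement's English description precedes it below -/
import Mathlib

section
/- Let s ≥ 1 and t_1, …, t_s ∈ {−1, 0, 1}, and set S*(X) = 1 − t_1 X − t_2 X^2 − ⋯ − t_s X^s. Let P(X) = 1 + a_1 X + ⋯ + a_d X^d ∈ ℤ[X] with d ≥ 1 and height H = max(1, max_{1≤i≤d} |a_i|). Then there exist polynomials A(X) ∈ ℤ[X] with deg A ≤ d and constant term A(0) = −1, and U(X) ∈ ℤ[X] with deg U ≤ s − 1 and height at most (2^d − 1)H + 2^d, such that A(X)·S*(X) = −P(X) + X^{d+1} U(X). -/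
open Polynomial

/-- Coefficient recursion for the rewriting trail. -/
def rtCC (t a : ℕ → ℤ) : ℕ → ℤ
  | 0 => 1
  | k + 1 => a (k + 1) + ∑ j ∈ Finset.range (k + 1), t (j + 1) * rtCC t a (k - j)
decreasing_by exact Nat.lt_succ_of_le (Nat.sub_le k j)

/-- The rewriting-trail polynomial identity: after `d` steps of the rewriting
trail from `S*` to `P`, one gets `A · S* = -P + X^{d+1} U` with explicit
bounds on the degree and height of `A` and `U`. -/
theorem stmt_1
    (s : ℕ) (hs : 1 ≤ s)
    (t : ℕ → ℤ) (ht : ∀ i, 1 ≤ i → i ≤ s → t i = -1 ∨ t i = 0 ∨ t i = 1)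
    (Sstar : Polynomial ℤ)
    (hS : Sstar = 1 - ∑ i ∈ Finset.Icc 1 s, C (t i) * X ^ i)
    (d : ℕ) (hd : 1 ≤ d) (a : ℕ → ℤ) (ha0 : a 0 = 1)
    (P : Polynomial ℤ)
    (hP : P = ∑ i ∈ Finset.range (d + 1), C (a i) * X ^ i)
    (H : ℕ) (hH : H = max 1 ((Finset.Icc 1 d).sup fun i => (a i).natAbs)) :
    ∃ A U : Polynomial ℤ,
      A.natDegree ≤ d ∧ A.coeff 0 = -1 ∧
      U.natDegree ≤ s - 1 ∧
      (∀ j, |U.coeff j| ≤ (2 ^ d - 1) * (H : ℤ) + 2 ^ d) ∧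
      A * Sstar = -P + X ^ (d + 1) * U := by
  set t' : ℕ → ℤ := fun j => if 1 ≤ j ∧ j ≤ s then t j else 0 with ht'
  set c : ℕ → ℤ := rtCC t' a with hc
  -- coefficients of Sstar
  have hScoeff : ∀ j, Sstar.coeff j = (if j = 0 then 1 else 0) - t' j := by
    intro j
    subst hS
    simp only [coeff_sub, coeff_one, finset_sum_coeff, coeff_C_mul, coeff_X_pow, mul_ite,
      mul_one, mul_zero, Finset.sum_ite_eq, Finset.mem_Icc, ht']
  have habs_t' : ∀ j, |t' j| ≤ 1 := by
    intro j
    simp only [ht']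
    split
    · rcases ht j (by omega) (by omega) with h | h | h <;> simp [h]
    · simp
  have habs_S : ∀ j, |Sstar.coeff j| ≤ 1 := by
    intro j
    rw [hScoeff]
    rcases Nat.eq_zero_or_pos j with h | h
    · simp only [h, if_pos rfl]
      have : t' 0 = 0 := by simp [ht']
      simp [this]
    · have : ¬ j = 0 := by omega
      simp only [this, if_neg]
      simpa using habs_t' j
  -- the polynomial A
  set A : Polynomial ℤ := -∑ k ∈ Finset.range (d + 1), C (c k) * X ^ k with hA
  have hAcoeff : ∀ k, A.coeff k = -(if k ≤ d then c k else 0) := by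
    intro k
    simp only [hA, coeff_neg, finset_sum_coeff, coeff_C_mul, coeff_X_pow, mul_ite, mul_one,
      mul_zero, Finset.sum_ite_eq, Finset.mem_range, Nat.lt_succ_iff]
  have hPcoeff : ∀ k, P.coeff k = if k ≤ d then a k else 0 := by
    intro k
    simp only [hP, finset_sum_coeff, coeff_C_mul, coeff_X_pow, mul_ite, mul_one,
      mul_zero, Finset.sum_ite_eq, Finset.mem_range, Nat.lt_succ_iff]
  -- product coefficients
  have hmul : ∀ k, (A * Sstar).coeff k
      = ∑ i ∈ Finset.range (k + 1), A.coeff i * Sstar.coeff (k - i) := by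
    intro k
    rw [coeff_mul, Finset.Nat.sum_antidiagonal_eq_sum_range_succ_mk]
  -- low coefficients
  have hmul_lo : ∀ k, k ≤ d → (A * Sstar).coeff k = -a k := by
    intro k hk
    rw [hmul, Finset.sum_range_succ]
    have h1 : A.coeff k * Sstar.coeff (k - k) = -c k := by
      rw [hAcoeff, if_pos hk, Nat.sub_self, hScoeff]
      have : t' 0 = 0 := by simp [ht']
      simp [this]
    have h2 : ∀ i ∈ Finset.range k, A.coeff i * Sstar.coeff (k - i)
        = t' (k - i) * c i := by
      intro i hi
      rw [Finset.mem_range] at hi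
      rw [hAcoeff, if_pos (by omega), hScoeff, if_neg (by omega)]
      ring
    rw [Finset.sum_congr rfl h2, h1]
    cases k with
    | zero => simp [hc, rtCC, ha0]
    | succ m =>
      have hck : c (m + 1) = a (m + 1) + ∑ j ∈ Finset.range (m + 1), t' (j + 1) * c (m - j) := by
        rw [hc]; rw [rtCC]
      have hre : ∑ j ∈ Finset.range (m + 1), t' (j + 1) * c (m - j)
          = ∑ i ∈ Finset.range (m + 1), t' (m + 1 - i) * c i := by
        rw [← Finset.sum_range_reflect (fun i => t' (m + 1 - i) * c i) (m + 1)]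
        apply Finset.sum_congr rfl
        intro j hj
        rw [Finset.mem_range] at hj
        congr 2 <;> omega
      rw [hck, hre]
      ring
  -- high coefficients
  have hmul_hi : ∀ k, d + s < k → (A * Sstar).coeff k = 0 := by
    intro k hk
    rw [hmul]
    apply Finset.sum_eq_zero
    intro i hi
    rw [Finset.mem_range] at hi
    by_cases h : i ≤ d
    · have : Sstar.coeff (k - i) = 0 := by
        rw [hScoeff, if_neg (by omega)]
        have : t' (k - i) = 0 := by
          simp only [ht', if_neg]; omega
        simp [this]
      simp [this]
    · rw [hAcoeff, if_neg h]; simp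
  -- bound on |a i|
  have ha_bd : ∀ i, 1 ≤ i → i ≤ d → |a i| ≤ (H : ℤ) := by
    intro i h1 h2
    have hn : (a i).natAbs ≤ H := by
      rw [hH]
      exact le_max_of_le_right (Finset.le_sup (f := fun i => (a i).natAbs)
        (Finset.mem_Icc.mpr ⟨h1, h2⟩))
    calc |a i| = ((a i).natAbs : ℤ) := Int.abs_eq_natAbs _
      _ ≤ (H : ℤ) := by exact_mod_cast hn
  have hH1 : (1 : ℤ) ≤ (H : ℤ) := by
    rw [hH]; exact_mod_cast le_max_left 1 _
  -- bound on partial sums of |c|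
  have hT : ∀ k, k ≤ d → ∑ i ∈ Finset.range (k + 1), |c i|
      ≤ 2 ^ k * ((H : ℤ) + 1) - H := by
    intro k
    induction k with
    | zero =>
      intro _
      simp [hc, rtCC]
    | succ m ih =>
      intro hmd
      have ihm := ih (by omega)
      have hcb : |c (m + 1)| ≤ (H : ℤ) + ∑ i ∈ Finset.range (m + 1), |c i| := by
        have hck : c (m + 1) = a (m + 1) + ∑ j ∈ Finset.range (m + 1), t' (j + 1) * c (m - j) := by
          rw [hc]; rw [rtCC]
        rw [hck]
        calc |a (m + 1) + ∑ j ∈ Finset.range (m + 1), t' (j + 1) * c (m - j)|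
            ≤ |a (m + 1)| + |∑ j ∈ Finset.range (m + 1), t' (j + 1) * c (m - j)| :=
              abs_add_le _ _
          _ ≤ (H : ℤ) + ∑ i ∈ Finset.range (m + 1), |c i| := by
              apply add_le_add (ha_bd (m + 1) (by omega) (by omega))
              calc |∑ j ∈ Finset.range (m + 1), t' (j + 1) * c (m - j)|
                  ≤ ∑ j ∈ Finset.range (m + 1), |t' (j + 1) * c (m - j)| :=
                    Finset.abs_sum_le_sum_abs _ _
                _ ≤ ∑ j ∈ Finset.range (m + 1), |c (m - j)| := by
                    apply Finset.sum_le_sum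
                    intro j _
                    rw [abs_mul]
                    calc |t' (j + 1)| * |c (m - j)| ≤ 1 * |c (m - j)| :=
                      mul_le_mul_of_nonneg_right (habs_t' _) (abs_nonneg _)
                    _ = |c (m - j)| := one_mul _
                _ = ∑ i ∈ Finset.range (m + 1), |c i| := by
                    rw [← Finset.sum_range_reflect (fun i => |c i|) (m + 1)]
                    apply Finset.sum_congr rfl
                    intro j hj
                    rw [Finset.mem_range] at hj
                    have hmj : m + 1 - 1 - j = m - j := by omega
                    rw [hmj]
      rw [Finset.sum_range_succ]
      have h2 : (2 : ℤ) ^ (m + 1) = 2 * 2 ^ m := by ring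
      nlinarith [ihm, hcb]
  -- the polynomial U
  set u : ℕ → ℤ := fun j => (A * Sstar).coeff (d + 1 + j) with hu
  set U : Polynomial ℤ := ∑ j ∈ Finset.range s, C (u j) * X ^ j with hU
  have hUcoeff : ∀ j, U.coeff j = if j < s then u j else 0 := by
    intro j
    simp only [hU, finset_sum_coeff, coeff_C_mul, coeff_X_pow, mul_ite, mul_one,
      mul_zero, Finset.sum_ite_eq, Finset.mem_range]
  have hbd_nonneg : (0 : ℤ) ≤ (2 ^ d - 1) * (H : ℤ) + 2 ^ d := by
    have h2 : (0 : ℤ) < 2 ^ d := by positivity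
    have h0 : (0 : ℤ) ≤ (H : ℤ) := Int.natCast_nonneg H
    nlinarith
  have hu_bd : ∀ j, |u j| ≤ (2 ^ d - 1) * (H : ℤ) + 2 ^ d := by
    intro j
    have h1 : u j = ∑ i ∈ Finset.range (d + 1), A.coeff i * Sstar.coeff (d + 1 + j - i) := by
      show (A * Sstar).coeff (d + 1 + j) = _
      rw [hmul]
      symm
      apply Finset.sum_subset
      · intro i hi
        rw [Finset.mem_range] at hi ⊢
        omega
      · intro i _ hi
        rw [Finset.mem_range, not_lt] at hi
        rw [hAcoeff, if_neg (by omega)]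
        simp
    rw [h1]
    calc |∑ i ∈ Finset.range (d + 1), A.coeff i * Sstar.coeff (d + 1 + j - i)|
        ≤ ∑ i ∈ Finset.range (d + 1), |A.coeff i * Sstar.coeff (d + 1 + j - i)| :=
          Finset.abs_sum_le_sum_abs _ _
      _ ≤ ∑ i ∈ Finset.range (d + 1), |c i| := by
          apply Finset.sum_le_sum
          intro i hi
          rw [Finset.mem_range] at hi
          rw [abs_mul, hAcoeff, if_pos (by omega), abs_neg]
          calc |c i| * |Sstar.coeff (d + 1 + j - i)| ≤ |c i| * 1 :=
            mul_le_mul_of_nonneg_left (habs_S _) (abs_nonneg _)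
          _ = |c i| := mul_one _
      _ ≤ 2 ^ d * ((H : ℤ) + 1) - H := hT d le_rfl
      _ = (2 ^ d - 1) * (H : ℤ) + 2 ^ d := by ring
  refine ⟨A, U, ?_, ?_, ?_, ?_, ?_⟩
  · -- natDegree A ≤ d
    rw [hA, natDegree_neg]
    apply Polynomial.natDegree_sum_le_of_forall_le
    intro i hi
    rw [Finset.mem_range] at hi
    exact (natDegree_C_mul_X_pow_le _ _).trans (by omega)
  · -- A.coeff 0 = -1
    rw [hAcoeff, if_pos (by omega)]
    simp [hc, rtCC]
  · -- natDegree U ≤ s - 1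
    rw [hU]
    apply Polynomial.natDegree_sum_le_of_forall_le
    intro i hi
    rw [Finset.mem_range] at hi
    exact (natDegree_C_mul_X_pow_le _ _).trans (by omega)
  · -- coefficient bound for U
    intro j
    rw [hUcoeff]
    split
    · exact hu_bd j
    · simpa using hbd_nonneg
  · -- the identity
    ext k
    rw [coeff_add, coeff_neg, X_pow_mul, coeff_mul_X_pow', hPcoeff]
    by_cases hk : k ≤ d
    · rw [hmul_lo k hk, if_pos hk, if_neg (by omega)]
      ring
    · rw [if_neg hk, if_pos (by omega : d + 1 ≤ k), hUcoeff]
      by_cases hj : k - (d + 1) < s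
      · rw [if_pos hj, neg_zero, zero_add]
        show (A * Sstar).coeff k = (A * Sstar).coeff (d + 1 + (k - (d + 1)))
        congr 1
        omega
      · rw [if_neg hj, hmul_hi k (by omega)]
        simp
end

section
/- Let s ≥ 1 and t_1, …, t_s ∈ {−1, 0, 1}, and let γ > 1 be a real number such that 1 − t_1 γ^{−1} − t_2 γ^{−2} − ⋯ − t_s γ^{−s} = 0. Let P(X) = 1 + a_1 X + ⋯ + a_d X^d ∈ ℤ[X] with d ≥ 1 and height H = max(1, max_{1≤i≤d} |a_i|). Then there exist integers h_0, h_1, …, h_{s−1} with |h_j| ≤ (2^d − 1)H + 2^d for all j, such that P(γ^{−1}) = Σ_{j=0}^{s−1} h_j γ^{−d−1−j}. -/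
/-- Rewriting sequence: `rwSeq t' a0 k` is the coefficient vector after
eliminating the coefficients at positions `0, …, k-1`. -/
def rwSeq (t' a0 : ℕ → ℤ) : ℕ → ℕ → ℤ
  | 0 => a0
  | k+1 => fun i => if i ≤ k then 0 else rwSeq t' a0 k i + rwSeq t' a0 k k * t' (i - k)

lemma rwSeq_lt (t' a0 : ℕ → ℤ) (k i : ℕ) (h : i < k) : rwSeq t' a0 k i = 0 := by
  cases k with
  | zero => omega
  | succ k => simp [rwSeq, Nat.lt_succ_iff.mp h]

lemma rwSeq_step (t' a0 : ℕ → ℤ) (k i : ℕ) (h : k < i) :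
    rwSeq t' a0 (k+1) i = rwSeq t' a0 k i + rwSeq t' a0 k k * t' (i - k) := by
  simp only [rwSeq]
  rw [if_neg (by omega)]

lemma rwSeq_high (t' a0 : ℕ → ℤ) (d s : ℕ)
    (h0 : ∀ i, d < i → a0 i = 0) (ht' : ∀ j, s < j → t' j = 0) :
    ∀ k, k ≤ d + 1 → ∀ i, d + s + 1 ≤ i → rwSeq t' a0 k i = 0 := by
  intro k
  induction k with
  | zero => intro _ i hi; exact h0 i (by omega)
  | succ k ih =>
    intro hk i hi
    have h1 : rwSeq t' a0 k i = 0 := ih (by omega) i hi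
    have h2 : t' (i - k) = 0 := ht' _ (by omega)
    simp [rwSeq, h1, h2]

/-- The value `P(γ⁻¹)` can be written as a finite sum
`Σ_{j=0}^{s-1} h_j γ^{-d-1-j}` with integer digits `h_j` of size at most
`(2^d - 1)H + 2^d`. -/
theorem stmt_2
    (s : ℕ) (hs : 1 ≤ s)
    (t : ℕ → ℤ) (ht : ∀ i, 1 ≤ i → i ≤ s → t i = -1 ∨ t i = 0 ∨ t i = 1)
    (γ : ℝ) (hγ : 1 < γ)
    (hroot : 1 - ∑ i ∈ Finset.Icc 1 s, (t i : ℝ) * γ⁻¹ ^ i = 0)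
    (d : ℕ) (hd : 1 ≤ d) (a : ℕ → ℤ) (ha0 : a 0 = 1)
    (H : ℕ) (hH : H = max 1 ((Finset.Icc 1 d).sup fun i => (a i).natAbs)) :
    ∃ h : ℕ → ℤ,
      (∀ j, j < s → |h j| ≤ (2 ^ d - 1) * (H : ℤ) + 2 ^ d) ∧
      ∑ i ∈ Finset.range (d + 1), (a i : ℝ) * γ⁻¹ ^ i
        = ∑ j ∈ Finset.range s, (h j : ℝ) * γ⁻¹ ^ (d + 1 + j) := by
  set x : ℝ := γ⁻¹ with hx
  -- basic facts
  have hH1 : 1 ≤ H := by rw [hH]; exact le_max_left _ _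
  have haH : ∀ i, 1 ≤ i → i ≤ d → |a i| ≤ (H : ℤ) := by
    intro i h1 h2
    have h3 : (a i).natAbs ≤ (Finset.Icc 1 d).sup fun i => (a i).natAbs :=
      Finset.le_sup (f := fun i => (a i).natAbs) (Finset.mem_Icc.mpr ⟨h1, h2⟩)
    have h4 : (a i).natAbs ≤ H := by rw [hH]; omega
    rw [Int.abs_eq_natAbs]
    exact_mod_cast h4
  -- truncated digit sequence and initial coefficients
  set t' : ℕ → ℤ := fun j => if 1 ≤ j ∧ j ≤ s then t j else 0 with ht'def
  set a0 : ℕ → ℤ := fun i => if i ≤ d then a i else 0 with ha0def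
  have ht'abs : ∀ j, |t' j| ≤ 1 := by
    intro j
    simp only [ht'def]
    split
    · rcases ht j (by omega) (by omega) with h | h | h <;> simp [h]
    · simp
  have ht'high : ∀ j, s < j → t' j = 0 := by
    intro j hj; simp only [ht'def]; rw [if_neg (by omega)]
  have ha0high : ∀ i, d < i → a0 i = 0 := by
    intro i hi; simp only [ha0def]; rw [if_neg (by omega)]
  set c : ℕ → ℕ → ℤ := rwSeq t' a0 with hc
  have hclt : ∀ k i, i < k → c k i = 0 := fun k i h => rwSeq_lt t' a0 k i h
  have hcstep : ∀ k i, k < i → c (k+1) i = c k i + c k k * t' (i - k) :=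
    fun k i h => rwSeq_step t' a0 k i h
  have hc0 : ∀ i, c 0 i = a0 i := fun _ => rfl
  set N : ℕ := d + s + 1 with hN
  -- key identity : x^k = Σ_{j=1}^{s} t j x^{k+j}
  have hx1 : (1 : ℝ) = ∑ i ∈ Finset.Icc 1 s, (t i : ℝ) * x ^ i := by linarith
  have hkey : ∀ k, k ≤ d → (x : ℝ) ^ k = ∑ i ∈ Finset.Ico (k+1) N, (t' (i - k) : ℝ) * x ^ i := by
    intro k hk
    have step1 : ∑ i ∈ Finset.Ico (k+1) N, (t' (i - k) : ℝ) * x ^ i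
        = ∑ j ∈ Finset.Ico 1 (N - k), (t' j : ℝ) * x ^ (j + k) := by
      rw [Finset.sum_Ico_eq_sum_range, Finset.sum_Ico_eq_sum_range]
      apply Finset.sum_congr (by congr 1 <;> omega)
      intro i _
      rw [show k + 1 + i - k = 1 + i from by omega, show k + 1 + i = 1 + i + k from by omega]
    rw [step1]
    have hsub : Finset.Ico 1 (s+1) ⊆ Finset.Ico 1 (N - k) :=
      Finset.Ico_subset_Ico le_rfl (by omega)
    rw [← Finset.sum_subset hsub]
    · have step2 : ∑ j ∈ Finset.Ico 1 (s+1), (t' j : ℝ) * x ^ (j + k)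
          = (∑ j ∈ Finset.Icc 1 s, (t j : ℝ) * x ^ j) * x ^ k := by
        rw [Finset.sum_mul, ← Finset.Ico_add_one_right_eq_Icc]
        apply Finset.sum_congr rfl
        intro j hj
        rw [Finset.mem_Ico] at hj
        have : t' j = t j := by simp only [ht'def]; rw [if_pos ⟨hj.1, by omega⟩]
        rw [this, mul_assoc, ← pow_add]
      rw [step2, ← hx1, one_mul]
    · intro j hj hnj
      rw [Finset.mem_Ico] at hj hnj
      have : t' j = 0 := ht'high j (by omega)
      simp [this]
  -- the sum invariant
  have hinv : ∀ k, k ≤ d + 1 →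
      ∑ i ∈ Finset.range N, (c k i : ℝ) * x ^ i
        = ∑ i ∈ Finset.range N, (c 0 i : ℝ) * x ^ i := by
    intro k
    induction k with
    | zero => intro _; rfl
    | succ k ih =>
      intro hk
      rw [← ih (by omega)]
      have hsplit : ∀ m : ℕ → ℤ, ∑ i ∈ Finset.range N, (m i : ℝ) * x ^ i
          = ∑ i ∈ Finset.range (k+1), (m i : ℝ) * x ^ i
            + ∑ i ∈ Finset.Ico (k+1) N, (m i : ℝ) * x ^ i := by
        intro m
        rw [Finset.range_eq_Ico, ← Finset.sum_Ico_consecutive _ (Nat.zero_le (k+1)) (by omega), ← Finset.range_eq_Ico]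
      rw [hsplit (c (k+1)), hsplit (c k)]
      have h1 : ∑ i ∈ Finset.range (k+1), (c (k+1) i : ℝ) * x ^ i = 0 := by
        apply Finset.sum_eq_zero
        intro i hi
        rw [Finset.mem_range] at hi
        rw [hclt (k+1) i hi]
        simp
      have h2 : ∑ i ∈ Finset.range (k+1), (c k i : ℝ) * x ^ i = (c k k : ℝ) * x ^ k := by
        rw [Finset.sum_range_succ]
        have : ∑ i ∈ Finset.range k, (c k i : ℝ) * x ^ i = 0 := by
          apply Finset.sum_eq_zero
          intro i hi
          rw [Finset.mem_range] at hi
          rw [hclt k i hi]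
          simp
        rw [this, zero_add]
      rw [h1, h2, zero_add]
      have h3 : ∀ i ∈ Finset.Ico (k+1) N, (c (k+1) i : ℝ) * x ^ i
          = (c k i : ℝ) * x ^ i + (c k k : ℝ) * ((t' (i - k) : ℝ) * x ^ i) := by
        intro i hi
        rw [Finset.mem_Ico] at hi
        rw [hcstep k i (by omega)]
        push_cast
        ring
      rw [Finset.sum_congr rfl h3, Finset.sum_add_distrib, ← Finset.mul_sum,
        ← hkey k (by omega)]
      ring
  -- the bound
  have hbound : ∀ k, k + 1 ≤ d + 1 → ∀ i, k + 1 ≤ i →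
      |c (k+1) i| ≤ (if i ≤ d then (H : ℤ) else 0) + (2 ^ k + (2 ^ k - 1) * H) := by
    intro k
    induction k with
    | zero =>
      intro _ i hi
      have hc1 : c 1 i = a0 i + a0 0 * t' (i - 0) := by
        rw [hcstep 0 i (by omega)]; rfl
      rw [hc1]
      have ha00 : a0 0 = 1 := by simp only [ha0def]; rw [if_pos (by omega)]; exact ha0
      have habs : |a0 i| ≤ (if i ≤ d then (H : ℤ) else 0) := by
        simp only [ha0def]
        split
        · exact haH i (by omega) (by omega)
        · simp
      calc |a0 i + a0 0 * t' (i - 0)| ≤ |a0 i| + |a0 0 * t' (i - 0)| := abs_add_le _ _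
        _ ≤ (if i ≤ d then (H : ℤ) else 0) + 1 := by
            apply add_le_add habs
            rw [abs_mul, ha00, abs_one, one_mul]
            exact ht'abs _
        _ ≤ _ := by norm_num
    | succ k ih =>
      intro hk i hi
      rw [hcstep (k+1) i (by omega)]
      have h1 : |c (k+1) i| ≤ (if i ≤ d then (H : ℤ) else 0) + (2 ^ k + (2 ^ k - 1) * H) :=
        ih (by omega) i (by omega)
      have h2 : |c (k+1) (k+1)| ≤ (H : ℤ) + (2 ^ k + (2 ^ k - 1) * H) := by
        have := ih (by omega) (k+1) le_rfl
        rwa [if_pos (by omega)] at this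
      calc |c (k+1) i + c (k+1) (k+1) * t' (i - (k+1))|
          ≤ |c (k+1) i| + |c (k+1) (k+1)| * |t' (i - (k+1))| := by
            rw [← abs_mul]; exact abs_add_le _ _
        _ ≤ |c (k+1) i| + |c (k+1) (k+1)| * 1 := by
            apply add_le_add le_rfl
            exact mul_le_mul_of_nonneg_left (ht'abs _) (abs_nonneg _)
        _ ≤ ((if i ≤ d then (H : ℤ) else 0) + (2 ^ k + (2 ^ k - 1) * H))
            + ((H : ℤ) + (2 ^ k + (2 ^ k - 1) * H)) := by
            rw [mul_one]; exact add_le_add h1 h2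
        _ = (if i ≤ d then (H : ℤ) else 0) + (2 ^ (k+1) + (2 ^ (k+1) - 1) * H) := by ring
  -- put everything together
  refine ⟨fun j => c (d+1) (d+1+j), ?_, ?_⟩
  · intro j hj
    have := hbound d le_rfl (d+1+j) (by omega)
    rwa [if_neg (by omega), zero_add, add_comm ((2:ℤ)^d)] at this
  · have hstart : ∑ i ∈ Finset.range (d + 1), (a i : ℝ) * x ^ i
        = ∑ i ∈ Finset.range N, (c 0 i : ℝ) * x ^ i := by
      have hcongr : ∀ i ∈ Finset.range (d+1), (a i : ℝ) * x ^ i = (c 0 i : ℝ) * x ^ i := by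
        intro i hi
        rw [Finset.mem_range] at hi
        have : c 0 i = a i := by
          rw [hc0]; simp only [ha0def]; rw [if_pos (by omega)]
        rw [this]
      rw [Finset.sum_congr rfl hcongr]
      apply Finset.sum_subset (Finset.range_subset_range.mpr (by omega))
      intro i _ hi
      rw [Finset.mem_range] at hi
      rw [hc0, ha0high i (by omega)]
      simp
    rw [hstart, ← hinv (d+1) le_rfl]
    -- now reduce the sum over range N to the sum over Ico (d+1) N
    have hsplit : ∑ i ∈ Finset.range N, (c (d+1) i : ℝ) * x ^ i
        = ∑ i ∈ Finset.Ico (d+1) N, (c (d+1) i : ℝ) * x ^ i := by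
      rw [Finset.range_eq_Ico, ← Finset.sum_Ico_consecutive _ (Nat.zero_le (d+1)) (by omega)]
      have : ∑ i ∈ Finset.Ico 0 (d+1), (c (d+1) i : ℝ) * x ^ i = 0 := by
        apply Finset.sum_eq_zero
        intro i hi
        rw [Finset.mem_Ico] at hi
        rw [hclt (d+1) i (by omega)]
        simp
      rw [this, zero_add]
    rw [hsplit, Finset.sum_Ico_eq_sum_range]
    exact Finset.sum_congr (by congr 1 <;> omega) (fun j _ => rfl)
end

section
/- Let α be an algebraic integer of degree d with |α| > 1, whose Galois conjugates α_1 = α, α_2, …, α_d (the complex roots of its minimal polynomial) all satisfy |α_i| ≠ 1; order them so that |α_1| ≥ |α_2| ≥ ⋯ ≥ |α_d| and let j_0 = #{i : |α_i| > 1} (so j_0 ≥ 1). Then for every real t ≥ 1 there exists an integer N ≥ 1 such that the monic polynomial P_{α,N}(X) = ∏_{i=1}^d (X − α_i^N) has integer coefficients and, writing P_{α,N}(X) = Σ_{j=0}^d g_j(N) X^{d−j} with g_0(N) = 1, one has |g_{j_0}(N)| > t · Σ_{j ∈ {0,1,…,d}, j ≠ j_0} |g_j(N)|. In particular Q(X)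 := P_{α,N}(X^N) is an integer polynomial of degree dN vanishing at α whose coefficient of X^{(d−j_0)N} exceeds t times the sum of the absolute values of all its other coefficients. -/
open Polynomial

lemma exists_int_lift (α : ℂ) (hint : IsIntegral ℤ α)
    {d : ℕ} (αs : Fin d → ℂ)
    (hroots : (minpoly ℚ α).map (algebraMap ℚ ℂ) = ∏ i, (X - C (αs i)))
    (N : ℕ) :
    ∃ G : Polynomial ℤ, G.map (Int.castRingHom ℂ) = ∏ i, (X - C (αs i ^ N)) := by
  classical
  set p := minpoly ℚ α with hp
  have hintQ : IsIntegral ℚ α := hint.tower_top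
  have hsep : p.Separable := (minpoly.irreducible hintQ).separable
  have hsplits : (p.map (algebraMap ℚ ℂ)).Splits := by
    rw [hroots]
    exact Splits.prod fun i _ => Splits.X_sub_C _
  set K := p.SplittingField with hK
  have hKsplit : (p.map (algebraMap ℚ K)).Splits :=
    SplittingField.splits p
  set m := (p.map (algebraMap ℚ K)).roots with hm
  -- members of m are integral over ℤ
  set q := minpoly ℤ α with hq
  have hpq : p = q.map (algebraMap ℤ ℚ) :=
    minpoly.isIntegrallyClosed_eq_field_fractions ℚ ℂ hint
  have hqK : q.map (algebraMap ℤ K) = p.map (algebraMap ℚ K) := by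
    have h1 : (q.map (algebraMap ℤ ℚ)).map (algebraMap ℚ K) = q.map (algebraMap ℤ K) := by
      rw [Polynomial.map_map, ← IsScalarTower.algebraMap_eq]
    exact (h1.symm.trans (congrArg (fun r : ℚ[X] => r.map (algebraMap ℚ K)) hpq.symm))
  have hint_m : ∀ r ∈ m, IsIntegral ℤ r := by
    intro r hr
    refine ⟨q, minpoly.monic hint, ?_⟩
    have hr' := isRoot_of_mem_roots hr
    rw [← eval_map, hqK]
    exact hr'
  set F : K[X] := ((m.map fun r => r ^ N).map fun r => X - C r).prod with hF
  have hFmonic : F.Monic :=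
    monic_multiset_prod_of_monic _ _ (by
      intro f hf
      obtain ⟨r, _, rfl⟩ := Multiset.mem_map.1 hf
      exact monic_X_sub_C _)
  have hcard : Multiset.card (m.map fun r => r ^ N) = Multiset.card m := Multiset.card_map _ _
  have hFint : ∀ k, IsIntegral ℤ (F.coeff k) := by
    intro k
    by_cases hk : k ≤ Multiset.card (m.map fun r => r ^ N)
    · rw [hF, Multiset.prod_X_sub_C_coeff _ hk]
      have h1 : ((-1 : K) ^ (Multiset.card (m.map fun r => r ^ N) - k)) ∈ integralClosure ℤ K :=
        Subalgebra.pow_mem _ (Subalgebra.neg_mem _ (Subalgebra.one_mem _)) _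
      have h2 : (m.map fun r => r ^ N).esymm (Multiset.card (m.map fun r => r ^ N) - k)
          ∈ integralClosure ℤ K := by
        unfold Multiset.esymm
        refine multiset_sum_mem _ ?_
        intro x hx
        obtain ⟨t, ht, rfl⟩ := Multiset.mem_map.1 hx
        refine multiset_prod_mem _ ?_
        intro a ha
        have hale : a ∈ m.map fun r => r ^ N :=
          Multiset.mem_of_le (Multiset.mem_powersetCard.1 ht).1 ha
        obtain ⟨r, hr, rfl⟩ := Multiset.mem_map.1 hale
        exact ((hint_m r hr).pow N : IsIntegral ℤ _)
      exact Subalgebra.mul_mem _ h1 h2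
    · have hdeg : F.natDegree = Multiset.card (m.map fun r => r ^ N) :=
        natDegree_multiset_prod_X_sub_C_eq_card _
      rw [coeff_eq_zero_of_natDegree_lt (by omega)]
      exact isIntegral_zero
  have key : ∀ (L : Type) (_ : CommRing L), ∀ ψ : K →+* L,
      F.map ψ = (Multiset.map (fun r => X - C r)
        (Multiset.map (fun r => r ^ N) (m.map ⇑ψ))).prod := by
    intro L _ ψ
    conv_lhs => rw [hF]
    simp only [← Polynomial.coe_mapRingHom, map_multiset_prod]
    simp only [Polynomial.coe_mapRingHom, Multiset.map_map, Function.comp_def,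
      Polynomial.map_sub, Polynomial.map_X, Polynomial.map_C]
    congr 1
    exact Multiset.map_congr rfl (fun r _ => by simp [map_pow])
  -- Galois invariance
  haveI : IsSplittingField ℚ K p := Polynomial.IsSplittingField.splittingField p
  haveI : IsGalois ℚ K := IsGalois.of_separable_splitting_field hsep
  have hfix : ∀ (σ : K ≃ₐ[ℚ] K) (k : ℕ), σ (F.coeff k) = F.coeff k := by
    intro σ k
    set σr : K →+* K := σ.toAlgHom.toRingHom with hσr
    have hcomp : σr.comp (algebraMap ℚ K) = algebraMap ℚ K := RingHom.ext fun x => σ.commutes x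
    have hmσ : m.map σr = m := by
      have h1 := hKsplit.roots_map σr
      rw [Polynomial.map_map, hcomp] at h1
      exact h1.symm
    have hFσ : F.map σr = F := by
      rw [key K inferInstance σr, hmσ, ← hF]
    conv_rhs => rw [← hFσ]
    rw [coeff_map]
    rfl
  have hbot : ∀ k, ∃ a : ℚ, algebraMap ℚ K a = F.coeff k := by
    intro k
    have hFF : IntermediateField.fixedField (⊤ : Subgroup (K ≃ₐ[ℚ] K)) = ⊥ := by
      have h := IsGalois.fixedField_fixingSubgroup (⊥ : IntermediateField ℚ K)
      rwa [IntermediateField.fixingSubgroup_bot] at h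
    have hxmem : F.coeff k ∈ IntermediateField.fixedField (⊤ : Subgroup (K ≃ₐ[ℚ] K)) :=
      fun σ => hfix σ.1 k
    rw [hFF, IntermediateField.mem_bot] at hxmem
    exact hxmem
  have hcoeffZ : ∀ k, ∃ n : ℤ, (algebraMap ℤ K) n = F.coeff k := by
    intro k
    obtain ⟨a, ha⟩ := hbot k
    have hai : IsIntegral ℤ a := by
      have h := hFint k
      rw [← ha] at h
      exact (isIntegral_algebraMap_iff (algebraMap ℚ K).injective).mp h
    obtain ⟨n, hn⟩ := IsIntegrallyClosed.isIntegral_iff.mp hai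
    refine ⟨n, ?_⟩
    rw [IsScalarTower.algebraMap_apply ℤ ℚ K, hn, ha]
  obtain ⟨G, hG⟩ := (mem_lifts _).1 ((lifts_iff_coeff_lifts F).2 fun k => hcoeffZ k)
  refine ⟨G, ?_⟩
  -- transfer to ℂ
  set φ : K →ₐ[ℚ] ℂ := Polynomial.IsSplittingField.lift K p hsplits with hφ
  set φr : K →+* ℂ := φ.toRingHom with hφr
  have hφcomp : φr.comp (algebraMap ℚ K) = algebraMap ℚ ℂ := φ.comp_algebraMap
  have hmφ : m.map φr = Finset.univ.val.map αs := by
    have h2 : (p.map (algebraMap ℚ ℂ)).roots = Finset.univ.val.map αs := by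
      rw [hroots, Finset.prod_eq_multiset_prod]
      have h4 : (Multiset.map (fun i => X - C (αs i)) Finset.univ.val)
          = Multiset.map (fun z : ℂ => X - C z) (Multiset.map αs Finset.univ.val) := by
        rw [Multiset.map_map]; rfl
      rw [h4]
      exact roots_multiset_prod_X_sub_C _
    have h3 : p.map (algebraMap ℚ ℂ) = (p.map (algebraMap ℚ K)).map φr := by
      rw [Polynomial.map_map, hφcomp]
    rw [← hKsplit.roots_map φr, ← h3, h2]
  have hmapφ : F.map φr = ∏ i, (X - C (αs i ^ N)) := by
    rw [key ℂ inferInstance φr, hmφ, Finset.prod_eq_multiset_prod, Multiset.map_map,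
      Multiset.map_map]
    rfl
  rw [← hmapφ, ← hG, Polynomial.map_map]
  congr 1
  exact RingHom.ext_int _ _

/-- For every `t ≥ 1` there is an `N ≥ 1` such that
`P_{α,N}(X) = ∏ (X - α_i^N)` is an integer polynomial whose `j₀`-th
coefficient is `t`-dominant; in particular `Q(X) = P_{α,N}(X^N)` is an
integer polynomial vanishing at `α` with a `t`-dominant coefficient. -/
theorem stmt_3
    (α : ℂ) (hint : IsIntegral ℤ α) (hα : 1 < ‖α‖)
    (d : ℕ) (hd : d = (minpoly ℚ α).natDegree) (hd1 : 0 < d)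
    (αs : Fin d → ℂ)
    (hroots : (minpoly ℚ α).map (algebraMap ℚ ℂ) = ∏ i, (X - C (αs i)))
    (hα0 : αs ⟨0, hd1⟩ = α)
    (hord : ∀ i j : Fin d, i ≤ j → ‖αs j‖ ≤ ‖αs i‖)
    (hmod : ∀ i, ‖αs i‖ ≠ 1)
    (j0 : ℕ) (hj0 : j0 = (Finset.univ.filter fun i => 1 < ‖αs i‖).card) :
    ∀ t : ℝ, 1 ≤ t →
      ∃ N : ℕ, 1 ≤ N ∧ ∃ g : ℕ → ℤ, g 0 = 1 ∧
        (∏ i, (X - C (αs i ^ N)))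
          = ∑ j ∈ Finset.range (d + 1), C ((g j : ℂ)) * X ^ (d - j) ∧
        (((g j0).natAbs : ℝ)
          > t * ∑ j ∈ (Finset.range (d + 1)).erase j0, ((g j).natAbs : ℝ)) ∧
        Polynomial.aeval α
          (∑ j ∈ Finset.range (d + 1), Polynomial.C (g j) * X ^ ((d - j) * N)) = 0 := by
  intro t ht
  -- basic facts about the roots
  have hne0 : ∀ i, αs i ≠ 0 := by
    intro i h
    have hintQ : IsIntegral ℚ α := hint.tower_top
    have hαne : α ≠ 0 := by
      intro h0
      rw [h0] at hα; simp at hα; linarith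
    have h1 : Polynomial.eval 0 ((minpoly ℚ α).map (algebraMap ℚ ℂ)) = 0 := by
      rw [hroots, eval_prod]
      exact Finset.prod_eq_zero (Finset.mem_univ i) (by simp [h])
    have h2 : (minpoly ℚ α).coeff 0 = 0 := by
      have h3 : algebraMap ℚ ℂ ((minpoly ℚ α).coeff 0) = 0 := by
        rw [← coeff_map, coeff_zero_eq_eval_zero, h1]
      exact (map_eq_zero_iff _ (algebraMap ℚ ℂ).injective).1 h3
    exact minpoly.coeff_zero_ne_zero hintQ hαne h2
  have hpos : ∀ i, 0 < ‖αs i‖ := fun i => norm_pos_iff.2 (hne0 i)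
  set S0 : Finset (Fin d) := Finset.univ.filter fun i => 1 < ‖αs i‖ with hS0def
  have hS0card : S0.card = j0 := hj0.symm
  have hS0ne : S0.Nonempty := ⟨⟨0, hd1⟩, by
    rw [hS0def, Finset.mem_filter]
    exact ⟨Finset.mem_univ _, by rw [hα0]; exact hα⟩⟩
  set w : Finset (Fin d) → ℝ := fun A => ∏ i ∈ A, ‖αs i‖ with hwdef
  have hwpos : ∀ A, 0 < w A := fun A => Finset.prod_pos fun i _ => hpos i
  set M : ℝ := w S0 with hMdef
  have hM : 1 < M := by
    rw [hMdef, hwdef]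
    have h5 : ∏ _i ∈ S0, (1 : ℝ) < ∏ i ∈ S0, ‖αs i‖ := by
      refine Finset.prod_lt_prod_of_nonempty (fun i _ => one_pos) ?_ hS0ne
      intro i hi
      exact (Finset.mem_filter.1 hi).2
    rwa [Finset.prod_const_one] at h5
  have hkey : ∀ A : Finset (Fin d), A ≠ S0 → w A < M := by
    intro A hA
    by_cases hsub : A ⊆ S0
    · have hne : (S0 \ A).Nonempty := by
        rw [Finset.sdiff_nonempty]
        intro h
        exact hA (Finset.Subset.antisymm hsub h)
      have hMsplit : (∏ i ∈ S0 \ A, ‖αs i‖) * w A = M := Finset.prod_sdiff hsub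
      have h1 : 1 < ∏ i ∈ S0 \ A, ‖αs i‖ := by
        have h5 : ∏ _i ∈ S0 \ A, (1 : ℝ) < ∏ i ∈ S0 \ A, ‖αs i‖ := by
          refine Finset.prod_lt_prod_of_nonempty (fun i _ => one_pos) ?_ hne
          intro i hi
          exact (Finset.mem_filter.1 (Finset.mem_sdiff.1 hi).1).2
        rwa [Finset.prod_const_one] at h5
      nlinarith [hwpos A]
    · obtain ⟨i0, hi0A, hi0S⟩ := Finset.not_subset.1 hsub
      have hsplit : w (A ∩ S0) * w (A \ S0) = w A := by
        rw [hwdef]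
        exact Finset.prod_inter_mul_prod_diff A S0 _
      have hAS : A ∩ S0 ⊆ S0 := Finset.inter_subset_right
      have h1 : w (A ∩ S0) ≤ M := by
        have h2 : (∏ i ∈ S0 \ (A ∩ S0), ‖αs i‖) * w (A ∩ S0) = M := Finset.prod_sdiff hAS
        have h3 : 1 ≤ ∏ i ∈ S0 \ (A ∩ S0), ‖αs i‖ := by
          have h4 : ∏ _i ∈ S0 \ (A ∩ S0), (1 : ℝ) ≤ ∏ i ∈ S0 \ (A ∩ S0), ‖αs i‖ :=
            Finset.prod_le_prod (fun i _ => zero_le_one)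
              (fun i hi => le_of_lt (Finset.mem_filter.1 (Finset.mem_sdiff.1 hi).1).2)
          rwa [Finset.prod_const_one] at h4
        nlinarith [hwpos (A ∩ S0)]
      have h2 : w (A \ S0) < 1 := by
        have hne' : (A \ S0).Nonempty := ⟨i0, Finset.mem_sdiff.2 ⟨hi0A, hi0S⟩⟩
        rw [hwdef]
        have h5 : ∏ i ∈ A \ S0, ‖αs i‖ < ∏ _i ∈ A \ S0, (1 : ℝ) := by
          refine Finset.prod_lt_prod_of_nonempty (fun i _ => hpos i) ?_ hne'
          intro i hi
          have hiS : i ∉ S0 := (Finset.mem_sdiff.1 hi).2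
          have : ¬ 1 < ‖αs i‖ := fun hgt => hiS (Finset.mem_filter.2 ⟨Finset.mem_univ _, hgt⟩)
          exact lt_of_le_of_ne (not_lt.1 this) (hmod i)
        rwa [Finset.prod_const_one] at h5
      nlinarith [hwpos (A ∩ S0), hwpos (A \ S0), hwpos A]
  -- the collection of all other subsets
  set 𝒜 : Finset (Finset (Fin d)) := Finset.univ.powerset.erase S0 with h𝒜def
  have h𝒜ne : 𝒜.Nonempty := ⟨∅, by
    rw [h𝒜def, Finset.mem_erase]
    exact ⟨fun h => hS0ne.ne_empty h.symm, Finset.mem_powerset.2 (Finset.empty_subset _)⟩⟩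
  have h𝒜mem : ∀ A : Finset (Fin d), A ≠ S0 → A ∈ 𝒜 := by
    intro A hA
    rw [h𝒜def, Finset.mem_erase]
    exact ⟨hA, Finset.mem_powerset.2 (Finset.subset_univ _)⟩
  set c : ℝ := 𝒜.sup' h𝒜ne w with hcdef
  have hc1 : (1 : ℝ) ≤ c := by
    have h7 : w ∅ ≤ c := Finset.le_sup' w (h𝒜mem ∅ (fun h => hS0ne.ne_empty h.symm))
    have h8 : w ∅ = 1 := Finset.prod_empty
    rw [h8] at h7
    exact h7
  have hcpos : (0 : ℝ) < c := lt_of_lt_of_le one_pos hc1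
  have hcM : c < M := by
    rw [hcdef]
    exact (Finset.sup'_lt_iff h𝒜ne).2 fun A hA => hkey A (Finset.mem_erase.1 hA).1
  have hcw : ∀ A : Finset (Fin d), A ≠ S0 → w A ≤ c := fun A hA =>
    Finset.le_sup' w (h𝒜mem A hA)
  -- choose N
  have hMc1 : (1 : ℝ) < M / c := (one_lt_div hcpos).2 hcM
  obtain ⟨N₀, hN₀⟩ := pow_unbounded_of_one_lt (R := ℝ) ((t + 1) * 𝒜.card) hMc1
  set N : ℕ := N₀ + 1 with hNdef
  have hNineq : (t + 1) * 𝒜.card < (M / c) ^ N :=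
    lt_of_lt_of_le hN₀ (pow_le_pow_right₀ (le_of_lt hMc1) (Nat.le_succ N₀))
  have hcpow : (0 : ℝ) < c ^ N := pow_pos hcpos N
  have hMain : (t + 1) * (𝒜.card * c ^ N) < M ^ N := by
    rw [div_pow] at hNineq
    have h := (lt_div_iff₀ hcpow).1 hNineq
    nlinarith
  refine ⟨N, Nat.le_add_left 1 N₀, ?_⟩
  -- get the integer polynomial
  obtain ⟨G, hG⟩ := exists_int_lift α hint αs hroots N
  set P : ℂ[X] := ∏ i, (X - C (αs i ^ N)) with hPdef
  have hmonic : P.Monic := monic_prod_of_monic _ _ fun i _ => monic_X_sub_C _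
  have hPrw : P = ((Finset.univ.val.map fun i => αs i ^ N).map fun r => X - C r).prod := by
    rw [hPdef, Finset.prod_eq_multiset_prod, Multiset.map_map]
    rfl
  have hcardm : Multiset.card (Finset.univ.val.map fun i => αs i ^ N) = d := by simp
  have hPdeg : P.natDegree = d := by
    rw [hPrw, natDegree_multiset_prod_X_sub_C_eq_card, hcardm]
  have hVieta : ∀ j, j ≤ d → P.coeff (d - j)
      = (-1) ^ j * ∑ A ∈ Finset.powersetCard j Finset.univ, ∏ i ∈ A, αs i ^ N := by
    intro j hj
    have hk : d - j ≤ Multiset.card (Finset.univ.val.map fun i => αs i ^ N) := by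
      rw [hcardm]; omega
    rw [hPrw, Multiset.prod_X_sub_C_coeff _ hk, hcardm]
    have hdj : d - (d - j) = j := by omega
    rw [hdj, Finset.esymm_map_val]
  set g : ℕ → ℤ := fun j => G.coeff (d - j) with hgdef
  have hcoeff : ∀ k, P.coeff k = ((G.coeff k : ℤ) : ℂ) := by
    intro k
    rw [← hG, coeff_map]
    rfl
  have hg0 : g 0 = 1 := by
    have h1 : P.coeff d = 1 := by
      have := hmonic
      rw [Monic, Polynomial.leadingCoeff, hPdeg] at this
      exact this
    have h2 : ((G.coeff d : ℤ) : ℂ) = 1 := by rw [← hcoeff, h1]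
    have h3 : G.coeff d = 1 := by exact_mod_cast h2
    simp [hgdef, h3]
  have hgj : ∀ j, j ≤ d → ((g j : ℤ) : ℂ) = P.coeff (d - j) := by
    intro j hj
    rw [hgdef, hcoeff]
  -- the expansion identity
  have hsum : P = ∑ j ∈ Finset.range (d + 1), C ((g j : ℂ)) * X ^ (d - j) := by
    have hexp : P = ∑ k ∈ Finset.range (d + 1), C (P.coeff k) * X ^ k := by
      conv_lhs => rw [P.as_sum_range' (d + 1) (by rw [hPdeg]; exact Nat.lt_succ_self d)]
      exact Finset.sum_congr rfl fun k _ => (C_mul_X_pow_eq_monomial).symm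
    have hrefl : ∑ j ∈ Finset.range (d + 1), C (P.coeff (d - j)) * X ^ (d - j)
        = ∑ k ∈ Finset.range (d + 1), C (P.coeff k) * X ^ k := by
      have := Finset.sum_range_reflect (fun k => C (P.coeff k) * X ^ k) (d + 1)
      simpa using this
    rw [hexp, ← hrefl]
    refine Finset.sum_congr rfl fun j hj => ?_
    rw [hgj j (Nat.lt_succ_iff.1 (Finset.mem_range.1 hj))]
  refine ⟨g, hg0, hsum, ?_, ?_⟩
  · -- the dominance estimate
    have hnat : ∀ j, j ≤ d → ((g j).natAbs : ℝ)
        = ‖∑ A ∈ Finset.powersetCard j Finset.univ, ∏ i ∈ A, αs i ^ N‖ := by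
      intro j hj
      have h1 : ((g j).natAbs : ℝ) = ‖((g j : ℤ) : ℂ)‖ := by
        rw [Complex.norm_intCast, Nat.cast_natAbs, Int.cast_abs]
      rw [h1, hgj j hj, hVieta j hj]
      rw [norm_mul, norm_pow, norm_neg, norm_one, one_pow, one_mul]
    have hwA : ∀ A : Finset (Fin d), ‖∏ i ∈ A, αs i ^ N‖ = w A ^ N := by
      intro A
      rw [norm_prod]
      rw [hwdef, ← Finset.prod_pow]
      exact Finset.prod_congr rfl fun i _ => norm_pow _ _
    set T : ℝ := ∑ A ∈ 𝒜, w A ^ N with hTdef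
    have hT0 : 0 ≤ T := Finset.sum_nonneg fun A _ => le_of_lt (pow_pos (hwpos A) N)
    have hTc : T ≤ 𝒜.card * c ^ N := by
      rw [hTdef]
      have h6 : ∑ A ∈ 𝒜, w A ^ N ≤ ∑ _A ∈ 𝒜, c ^ N := by
        refine Finset.sum_le_sum fun A hA => ?_
        exact pow_le_pow_left₀ (le_of_lt (hwpos A)) (hcw A (Finset.mem_erase.1 hA).1) N
      rw [Finset.sum_const, nsmul_eq_mul] at h6
      exact h6
    have hj0d : j0 ≤ d := by
      rw [← hS0card]
      have h9 : S0.card ≤ (Finset.univ : Finset (Fin d)).card :=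
        Finset.card_le_card (Finset.subset_univ _)
      simpa using h9
    -- upper bound on the other coefficients
    have hup : ∑ j ∈ (Finset.range (d + 1)).erase j0, ((g j).natAbs : ℝ) ≤ T := by
      have hstep : ∀ j ∈ (Finset.range (d + 1)).erase j0,
          ((g j).natAbs : ℝ) ≤ ∑ A ∈ Finset.powersetCard j Finset.univ, w A ^ N := by
        intro j hj
        have hjd : j ≤ d := by
          have := (Finset.mem_erase.1 hj).2
          rw [Finset.mem_range] at this
          omega
        rw [hnat j hjd]
        calc ‖∑ A ∈ Finset.powersetCard j Finset.univ, ∏ i ∈ A, αs i ^ N‖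
            ≤ ∑ A ∈ Finset.powersetCard j Finset.univ, ‖∏ i ∈ A, αs i ^ N‖ :=
          norm_sum_le _ _
        _ = ∑ A ∈ Finset.powersetCard j Finset.univ, w A ^ N :=
          Finset.sum_congr rfl fun A _ => hwA A
      calc ∑ j ∈ (Finset.range (d + 1)).erase j0, ((g j).natAbs : ℝ)
          ≤ ∑ j ∈ (Finset.range (d + 1)).erase j0,
            ∑ A ∈ Finset.powersetCard j Finset.univ, w A ^ N :=
        Finset.sum_le_sum hstep
      _ = ∑ A ∈ ((Finset.range (d + 1)).erase j0).biUnion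
            (fun j => Finset.powersetCard j Finset.univ), w A ^ N := by
        rw [Finset.sum_biUnion]
        intro x hx y hy hxy
        refine Finset.disjoint_left.2 fun A hAx hAy => ?_
        exact hxy ((Finset.mem_powersetCard.1 hAx).2.symm ▸ (Finset.mem_powersetCard.1 hAy).2)
      _ ≤ T := by
        rw [hTdef]
        refine Finset.sum_le_sum_of_subset_of_nonneg ?_
          (fun A _ _ => le_of_lt (pow_pos (hwpos A) N))
        intro A hA
        obtain ⟨j, hj, hAj⟩ := Finset.mem_biUnion.1 hA
        refine h𝒜mem A fun hAS => ?_
        have h1 : A.card = j := (Finset.mem_powersetCard.1 hAj).2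
        have h2 := (Finset.mem_erase.1 hj).1
        rw [hAS, hS0card] at h1
        exact h2 h1.symm
    -- lower bound on the main coefficient
    have hlow : M ^ N - T ≤ ((g j0).natAbs : ℝ) := by
      rw [hnat j0 hj0d]
      have hS0mem : S0 ∈ Finset.powersetCard j0 Finset.univ :=
        Finset.mem_powersetCard.2 ⟨Finset.subset_univ _, hS0card⟩
      have hsplit : ∑ A ∈ Finset.powersetCard j0 Finset.univ, ∏ i ∈ A, αs i ^ N
          = (∏ i ∈ S0, αs i ^ N)
            + ∑ A ∈ (Finset.powersetCard j0 Finset.univ).erase S0, ∏ i ∈ A, αs i ^ N :=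
        (Finset.add_sum_erase _ _ hS0mem).symm
      rw [hsplit]
      have hnormS0 : ‖∏ i ∈ S0, αs i ^ N‖ = M ^ N := hwA S0
      have hErest : ‖∑ A ∈ (Finset.powersetCard j0 Finset.univ).erase S0,
          ∏ i ∈ A, αs i ^ N‖ ≤ T := by
        calc ‖∑ A ∈ (Finset.powersetCard j0 Finset.univ).erase S0, ∏ i ∈ A, αs i ^ N‖
            ≤ ∑ A ∈ (Finset.powersetCard j0 Finset.univ).erase S0, ‖∏ i ∈ A, αs i ^ N‖ :=
          norm_sum_le _ _
        _ = ∑ A ∈ (Finset.powersetCard j0 Finset.univ).erase S0, w A ^ N :=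
          Finset.sum_congr rfl fun A _ => hwA A
        _ ≤ T := by
          rw [hTdef]
          refine Finset.sum_le_sum_of_subset_of_nonneg ?_
            (fun A _ _ => le_of_lt (pow_pos (hwpos A) N))
          intro A hA
          exact h𝒜mem A (Finset.mem_erase.1 hA).1
      set a := ∏ i ∈ S0, αs i ^ N
      set b := ∑ A ∈ (Finset.powersetCard j0 Finset.univ).erase S0, ∏ i ∈ A, αs i ^ N
      have h1 : ‖a‖ ≤ ‖a + b‖ + ‖b‖ := by
        calc ‖a‖ = ‖(a + b) + (-b)‖ := by ring_nf
        _ ≤ ‖a + b‖ + ‖-b‖ := norm_add_le _ _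
        _ = ‖a + b‖ + ‖b‖ := by rw [norm_neg]
      rw [hnormS0] at h1
      linarith
    have hfinal1 : t * ∑ j ∈ (Finset.range (d + 1)).erase j0, ((g j).natAbs : ℝ) ≤ t * T :=
      mul_le_mul_of_nonneg_left hup (by linarith)
    have hfinal2 : (t + 1) * T ≤ (t + 1) * (𝒜.card * c ^ N) :=
      mul_le_mul_of_nonneg_left hTc (by linarith)
    have : t * T < M ^ N - T := by nlinarith
    calc t * ∑ j ∈ (Finset.range (d + 1)).erase j0, ((g j).natAbs : ℝ)
        ≤ t * T := hfinal1
    _ < M ^ N - T := this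
    _ ≤ ((g j0).natAbs : ℝ) := hlow
  · -- vanishing at α
    have hPeval : Polynomial.eval (α ^ N) P = 0 := by
      rw [hPdef, eval_prod]
      refine Finset.prod_eq_zero (Finset.mem_univ ⟨0, hd1⟩) ?_
      rw [eval_sub, eval_X, eval_C, hα0, sub_self]
    have haq : Polynomial.aeval α
        (∑ j ∈ Finset.range (d + 1), Polynomial.C (g j) * X ^ ((d - j) * N))
        = Polynomial.eval (α ^ N) P := by
      rw [hsum]
      rw [map_sum, eval_finset_sum]
      refine Finset.sum_congr rfl fun j hj => ?_
      rw [map_mul, aeval_C, map_pow, aeval_X, eval_mul, eval_C, eval_pow, eval_X]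
      have h1 : (α ^ N) ^ (d - j) = α ^ ((d - j) * N) := by
        rw [← pow_mul, mul_comm]
      rw [h1]
      norm_cast
    rw [haq, hPeval]
end

section
/- Let j_0 ≥ 1 and d ≥ j_0, and let α_1, …, α_d be complex numbers with |α_1| ≥ |α_2| ≥ ⋯ ≥ |α_{j_0}| > 1 > |α_{j_0+1}| ≥ ⋯ ≥ |α_d|. For 0 ≤ j ≤ d let e_j(x_1,…,x_d) denote the j-th elementary symmetric polynomial (with e_0 = 1). Then lim_{n→∞} e_j(α_1^n, …, α_d^n) / (α_1^n α_2^n ⋯ α_{j_0}^n) = 1 if j = j_0, and = 0 for every j ∈ {0, 1, …, d} with j ≠ j_0. -/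
open Filter

/-- Limit of the normalized elementary symmetric functions of the `n`-th
powers: only the `j₀`-th one survives. -/
theorem stmt_4
    (d j0 : ℕ) (hj0 : 1 ≤ j0) (hj0d : j0 ≤ d)
    (α : Fin d → ℂ)
    (hord : ∀ i k : Fin d, i ≤ k → ‖α k‖ ≤ ‖α i‖)
    (hbig : ∀ i : Fin d, (i : ℕ) < j0 → 1 < ‖α i‖)
    (hsmall : ∀ i : Fin d, j0 ≤ (i : ℕ) → ‖α i‖ < 1) :
    ∀ j, j ≤ d →
      Tendsto
        (fun n : ℕ =>
          (∑ T ∈ Finset.powersetCard j (Finset.univ : Finset (Fin d)),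
              ∏ i ∈ T, α i ^ n) /
            ∏ i ∈ Finset.univ.filter (fun i : Fin d => (i : ℕ) < j0), α i ^ n)
        atTop (nhds (if j = j0 then 1 else 0)) := by
  intro j hj
  set B : Finset (Fin d) := Finset.univ.filter (fun i : Fin d => (i : ℕ) < j0) with hB
  have hBmem : ∀ i : Fin d, i ∈ B ↔ (i : ℕ) < j0 := by
    intro i; simp [hB]
  have hBcard : B.card = j0 := by
    have : B = Finset.map (Fin.castLEEmb hj0d) Finset.univ := by
      ext i
      simp only [hBmem, Finset.mem_map, Finset.mem_univ, true_and, Fin.castLEEmb,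
        Function.Embedding.coeFn_mk]
      constructor
      · intro h; exact ⟨⟨i, h⟩, by ext; simp [Fin.castLE]⟩
      · rintro ⟨a, rfl⟩; exact a.isLt
    rw [this]; simp
  have key : ∀ T : Finset (Fin d),
      Tendsto (fun n : ℕ => (∏ i ∈ T, α i ^ n) / ∏ i ∈ B, α i ^ n) atTop
        (nhds (if T = B then 1 else 0)) := by
    intro T
    by_cases hT : T = B
    · subst hT
      simp only [if_pos rfl]
      have h1 : (fun n : ℕ => (∏ i ∈ B, α i ^ n) / ∏ i ∈ B, α i ^ n) = fun _ => (1:ℂ) := by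
        funext n
        apply div_self
        apply Finset.prod_ne_zero_iff.mpr
        intro i hi
        have h2 : 1 < ‖α i‖ := hbig i ((hBmem i).mp hi)
        have hne : α i ≠ 0 := by
          intro h; rw [h, norm_zero] at h2; linarith
        exact pow_ne_zero n hne
      rw [h1]
      exact tendsto_const_nhds
    · simp only [if_neg hT]
      set rT : ℝ := ∏ i ∈ T, ‖α i‖ with hrT
      set rB : ℝ := ∏ i ∈ B, ‖α i‖ with hrB
      have hsmall1 : ∀ s : Finset (Fin d), (∀ i ∈ s, i ∉ B) → ∏ i ∈ s, ‖α i‖ ≤ 1 := by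
        intro s hs
        apply Finset.prod_le_one
        · intro i _; exact norm_nonneg _
        · intro i hi
          exact le_of_lt (hsmall i (le_of_not_gt fun h => hs i hi ((hBmem i).mpr h)))
      have hbig1 : ∀ s : Finset (Fin d), (∀ i ∈ s, i ∈ B) → 1 ≤ ∏ i ∈ s, ‖α i‖ := by
        intro s hs
        have := Finset.prod_le_prod (f := fun _ : Fin d => (1:ℝ)) (g := fun i => ‖α i‖)
          (fun i _ => zero_le_one)
          (fun i hi => le_of_lt (hbig i ((hBmem i).mp (hs i hi)))) (s := s)
        simpa using this
      have hc : rT < rB := by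
        have hTsplit : rT = (∏ i ∈ T ∩ B, ‖α i‖) * ∏ i ∈ T \ B, ‖α i‖ := by
          rw [hrT, Finset.prod_inter_mul_prod_diff]
        have hBsplit : rB = (∏ i ∈ T ∩ B, ‖α i‖) * ∏ i ∈ B \ T, ‖α i‖ := by
          rw [hrB, Finset.inter_comm, ← Finset.prod_inter_mul_prod_diff B T (fun i => ‖α i‖)]
        have hpos : (0:ℝ) < ∏ i ∈ T ∩ B, ‖α i‖ := by
          apply Finset.prod_pos
          intro i hi
          have := hbig i ((hBmem i).mp (Finset.mem_of_mem_inter_right hi))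
          linarith
        rw [hTsplit, hBsplit]
        apply mul_lt_mul_of_pos_left _ hpos
        by_cases hBT : (B \ T).Nonempty
        · obtain ⟨i0, hi0⟩ := hBT
          have h1 : ∏ i ∈ T \ B, ‖α i‖ ≤ 1 := hsmall1 _ (fun i hi => (Finset.mem_sdiff.mp hi).2)
          have h2 : 1 < ∏ i ∈ B \ T, ‖α i‖ := by
            rw [← Finset.mul_prod_erase _ _ hi0]
            have hrest : 1 ≤ ∏ i ∈ (B \ T).erase i0, ‖α i‖ :=
              hbig1 _ (fun i hi => (Finset.mem_sdiff.mp (Finset.mem_of_mem_erase hi)).1)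
            have hi0b : 1 < ‖α i0‖ := hbig i0 ((hBmem i0).mp (Finset.mem_sdiff.mp hi0).1)
            nlinarith
          linarith
        · have hBsub : B ⊆ T := by
            intro i hi
            by_contra h
            exact hBT ⟨i, Finset.mem_sdiff.mpr ⟨hi, h⟩⟩
          have hTB : (T \ B).Nonempty := by
            rw [Finset.sdiff_nonempty]
            intro h
            exact hT (Finset.Subset.antisymm h hBsub)
          obtain ⟨i0, hi0⟩ := hTB
          have hempty : B \ T = ∅ := by
            rw [Finset.sdiff_eq_empty_iff_subset]; exact hBsub
          rw [hempty, Finset.prod_empty]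
          have hi0s : ‖α i0‖ < 1 := by
            have := (Finset.mem_sdiff.mp hi0).2
            exact hsmall i0 (le_of_not_gt fun h => this ((hBmem i0).mpr h))
          have hrest : ∏ i ∈ (T \ B).erase i0, ‖α i‖ ≤ 1 :=
            hsmall1 _ (fun i hi => (Finset.mem_sdiff.mp (Finset.mem_of_mem_erase hi)).2)
          have hrestpos : 0 ≤ ∏ i ∈ (T \ B).erase i0, ‖α i‖ :=
            Finset.prod_nonneg (fun i _ => norm_nonneg _)
          rw [← Finset.mul_prod_erase _ _ hi0]
          have h0 : (0:ℝ) ≤ ‖α i0‖ := norm_nonneg _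
          nlinarith
      have hrBpos : (0:ℝ) < rB := by
        apply Finset.prod_pos
        intro i hi
        have := hbig i ((hBmem i).mp hi)
        linarith
      have hrTnn : (0:ℝ) ≤ rT := Finset.prod_nonneg (fun i _ => norm_nonneg _)
      have hratio : rT / rB < 1 := (div_lt_one hrBpos).mpr hc
      have hratio0 : 0 ≤ rT / rB := div_nonneg hrTnn hrBpos.le
      have hnorm : ∀ n : ℕ, ‖(∏ i ∈ T, α i ^ n) / ∏ i ∈ B, α i ^ n‖ = (rT / rB) ^ n := by
        intro n
        rw [norm_div]
        simp only [norm_prod, norm_pow]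
        rw [Finset.prod_pow, Finset.prod_pow, ← div_pow]
      have := tendsto_pow_atTop_nhds_zero_of_lt_one hratio0 hratio
      apply squeeze_zero_norm (fun n => le_of_eq (hnorm n)) this
  have H := tendsto_finset_sum (Finset.powersetCard j (Finset.univ : Finset (Fin d)))
    (fun T _ => key T)
  have hsum : (∑ T ∈ Finset.powersetCard j (Finset.univ : Finset (Fin d)),
      (if T = B then (1:ℂ) else 0)) = if j = j0 then 1 else 0 := by
    rw [Finset.sum_ite_eq' (Finset.powersetCard j (Finset.univ : Finset (Fin d))) B
      (fun _ => (1:ℂ))]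
    by_cases h : j = j0
    · rw [if_pos h, if_pos]
      simp [Finset.mem_powersetCard, hBcard, h]
    · rw [if_neg h, if_neg]
      intro hmem
      rw [Finset.mem_powersetCard] at hmem
      exact h (hBcard ▸ hmem.2.symm)
  rw [hsum] at H
  refine H.congr fun n => ?_
  rw [Finset.sum_div]
end

section
/- Let α be an algebraic integer of degree d with |α| > 1 whose Galois conjugates α_1 = α, α_2, …, α_d all satisfy |α_i| ≠ 1, and let j_0 = #{i : |α_i| > 1}. Let N ≥ 1 be an integer such that, writing ∏_{i=1}^d (X − α_i^N) = Σ_{j=0}^d g_j(N) X^{d−j} with g_0(N) = 1, one has |g_{j_0}(N)| > Σ_{j ≠ j_0} |g_j(N)|. Then the integer m := ⌈(|g_{j_0}(N)| − 1)/2⌉ + Σ_{j ≠ j_0} |g_j(N)| satisfies m ≥ ⌈(Δ_N(α)/2 − 1)/2⌉, where Δ_N(α) = |∏_{i=1}^d (1 − α_i^N)| is the N-th Pierce number of α. -/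
open Polynomial

/-- Lower bound for the bound `m` of the maximal alphabet in terms of the
`N`-th Pierce number `Δ_N(α) = |∏ (1 - α_i^N)|`. -/
theorem stmt_6
    (α : ℂ) (hint : IsIntegral ℤ α) (hα : 1 < ‖α‖)
    (d : ℕ) (hd : d = (minpoly ℚ α).natDegree) (hd1 : 0 < d)
    (αs : Fin d → ℂ)
    (hroots : (minpoly ℚ α).map (algebraMap ℚ ℂ) = ∏ i, (X - C (αs i)))
    (hα0 : αs ⟨0, hd1⟩ = α)
    (hmod : ∀ i, ‖αs i‖ ≠ 1)
    (j0 : ℕ) (hj0 : j0 = (Finset.univ.filter fun i => 1 < ‖αs i‖).card)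
    (N : ℕ) (hN : 1 ≤ N)
    (g : ℕ → ℤ) (hg0 : g 0 = 1)
    (hgdef : (∏ i, (X - C (αs i ^ N)))
      = ∑ j ∈ Finset.range (d + 1), C ((g j : ℂ)) * X ^ (d - j))
    (hdom : |g j0| > ∑ j ∈ (Finset.range (d + 1)).erase j0, |g j|)
    (m : ℤ)
    (hm : m = ⌈((|g j0| : ℚ) - 1) / 2⌉
      + ∑ j ∈ (Finset.range (d + 1)).erase j0, |g j|) :
    m ≥ ⌈(‖∏ i, (1 - αs i ^ N)‖ / 2 - 1) / 2⌉ := by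
  have hj0mem : j0 ∈ Finset.range (d + 1) := by
    rw [Finset.mem_range, hj0]
    have : (Finset.univ.filter fun i => 1 < ‖αs i‖).card ≤ d := by
      simpa using Finset.card_filter_le (Finset.univ : Finset (Fin d)) _
    omega
  have he : (∏ i, (1 - αs i ^ N)) = ∑ j ∈ Finset.range (d + 1), (g j : ℂ) := by
    have h := congrArg (Polynomial.eval 1) hgdef
    simpa [eval_prod, eval_finset_sum] using h
  have hnorm : ‖∏ i, (1 - αs i ^ N)‖
      ≤ ((∑ j ∈ Finset.range (d + 1), |g j| : ℤ) : ℝ) := by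
    rw [he]
    refine le_trans (norm_sum_le _ _) ?_
    push_cast
    refine le_of_eq (Finset.sum_congr rfl fun j _ => ?_)
    simp
  have hsplit : (∑ j ∈ Finset.range (d + 1), |g j|)
      = |g j0| + ∑ j ∈ (Finset.range (d + 1)).erase j0, |g j| :=
    (Finset.add_sum_erase _ _ hj0mem).symm
  have hS : (0 : ℤ) ≤ ∑ j ∈ (Finset.range (d + 1)).erase j0, |g j| :=
    Finset.sum_nonneg fun j _ => abs_nonneg _
  have hA : (0 : ℤ) ≤ |g j0| := abs_nonneg _
  have hceil : ((|g j0| : ℚ) - 1) / 2 ≤ (⌈((|g j0| : ℚ) - 1) / 2⌉ : ℚ) :=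
    Int.le_ceil _
  rw [ge_iff_le, Int.ceil_le]
  have hmR : ((|g j0| : ℝ) - 1) / 2
      + ((∑ j ∈ (Finset.range (d + 1)).erase j0, |g j| : ℤ) : ℝ) ≤ (m : ℝ) := by
    have h1 : (((|g j0| : ℚ) - 1) / 2 : ℚ) ≤ ((⌈((|g j0| : ℚ) - 1) / 2⌉ : ℤ) : ℚ) := hceil
    have h1' := (Rat.cast_le (K := ℝ)).mpr h1
    push_cast at h1' ⊢
    rw [hm]
    push_cast
    linarith
  have hSR : (0 : ℝ) ≤ ((∑ j ∈ (Finset.range (d + 1)).erase j0, |g j| : ℤ) : ℝ) := by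
    exact_mod_cast hS
  have hAR : (0 : ℝ) ≤ ((|g j0| : ℤ) : ℝ) := by exact_mod_cast hA
  have hnorm' : ‖∏ i, (1 - αs i ^ N)‖
      ≤ ((|g j0| : ℤ) : ℝ) + ((∑ j ∈ (Finset.range (d + 1)).erase j0, |g j| : ℤ) : ℝ) := by
    rw [hsplit] at hnorm
    push_cast at hnorm ⊢
    linarith
  push_cast at hmR hnorm' hAR hSR
  linarith
end

section
/- Let γ ∈ ℂ with |γ| > 1, let (a_k)_{k≥0} be an eventually periodic sequence of integers (there exist N ≥ 0 and p ≥ 1 with a_{k+p} = a_k for all k ≥ N), and set x = Σ_{k=0}^∞ a_k γ^{−k}. Let σ : ℂ → ℂ be a ring homomorphism such that |σ(γ)| > 1. Then σ(x) = Σ_{k=0}^∞ a_k σ(γ)^{−k}, both series being absolutely convergent. -/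
lemma stmt_7_bound (a : ℕ → ℤ) (N p : ℕ) (hp : 1 ≤ p)
    (hper : ∀ k, N ≤ k → a (k + p) = a k) :
    ∃ C : ℝ, ∀ k, ‖(a k : ℂ)‖ ≤ C := by
  have key : ∀ k, ∃ j, j < N + p ∧ a k = a j := by
    intro k
    induction k using Nat.strong_induction_on with
    | _ k ih =>
      by_cases hk : k < N + p
      · exact ⟨k, hk, rfl⟩
      · push_neg at hk
        have hkp : p ≤ k := le_trans (Nat.le_add_left p N) hk
        have h1 : N ≤ k - p := by omega
        have h2 : k - p + p = k := Nat.sub_add_cancel hkp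
        obtain ⟨j, hj, hje⟩ := ih (k - p) (by omega)
        exact ⟨j, hj, by rw [← hje, ← hper (k - p) h1, h2]⟩
  refine ⟨∑ j ∈ Finset.range (N + p), ‖(a j : ℂ)‖, fun k => ?_⟩
  obtain ⟨j, hj, hje⟩ := key k
  rw [hje]
  exact Finset.single_le_sum (f := fun j => ‖(a j : ℂ)‖)
    (fun i _ => norm_nonneg _) (Finset.mem_range.2 hj)

lemma stmt_7_summable (a : ℕ → ℤ) (C : ℝ) (hC : ∀ k, ‖(a k : ℂ)‖ ≤ C)
    (z : ℂ) (hz : 1 < ‖z‖) :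
    Summable (fun k : ℕ => ‖(a k : ℂ) * z⁻¹ ^ k‖) := by
  have hw : ‖z⁻¹‖ < 1 := by
    rw [norm_inv]
    exact inv_lt_one_of_one_lt₀ hz
  refine Summable.of_nonneg_of_le (fun k => norm_nonneg _) (fun k => ?_)
    ((summable_geometric_of_lt_one (norm_nonneg _) hw).mul_left C)
  rw [norm_mul, norm_pow]
  exact mul_le_mul_of_nonneg_right (hC k) (pow_nonneg (norm_nonneg _) k)

lemma stmt_7_formula (a : ℕ → ℤ) (N p : ℕ) (hp : 1 ≤ p)
    (hper : ∀ k, N ≤ k → a (k + p) = a k)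
    (z : ℂ) (hz : 1 < ‖z‖) :
    ∑' k : ℕ, (a k : ℂ) * z⁻¹ ^ k =
      (∑ k ∈ Finset.range N, (a k : ℂ) * z⁻¹ ^ k) +
        (∑ j ∈ Finset.range p, (a (N + j) : ℂ) * z⁻¹ ^ (N + j)) * (1 - z⁻¹ ^ p)⁻¹ := by
  obtain ⟨C, hC⟩ := stmt_7_bound a N p hp hper
  set f : ℕ → ℂ := fun k => (a k : ℂ) * z⁻¹ ^ k with hf_def
  have hf : Summable f := (stmt_7_summable a C hC z hz).of_norm
  have hw : ‖z⁻¹‖ < 1 := by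
    rw [norm_inv]; exact inv_lt_one_of_one_lt₀ hz
  have hne : (1 : ℂ) - z⁻¹ ^ p ≠ 0 := by
    intro h
    rw [sub_eq_zero] at h
    have h1 : ‖z⁻¹ ^ p‖ < 1 := by
      rw [norm_pow]
      exact pow_lt_one₀ (norm_nonneg _) hw (by omega)
    rw [← h] at h1
    simp at h1
  have hg : Summable (fun j => f (j + N)) := (summable_nat_add_iff N).2 hf
  have h1 : (∑ k ∈ Finset.range N, f k) + ∑' j, f (j + N) = ∑' k, f k :=
    Summable.sum_add_tsum_nat_add N hf
  have h3 : (∑ j ∈ Finset.range p, f (j + N)) + ∑' j, f (j + p + N) = ∑' j, f (j + N) :=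
    Summable.sum_add_tsum_nat_add p hg
  have h2 : ∑' j, f (j + p + N) = z⁻¹ ^ p * ∑' j, f (j + N) := by
    rw [← tsum_mul_left]
    apply tsum_congr
    intro j
    have hae : a (j + p + N) = a (j + N) := by
      rw [show j + p + N = (j + N) + p by ring]
      exact hper (j + N) (Nat.le_add_left N j)
    simp only [hf_def, hae]
    rw [show j + p + N = p + (j + N) by ring, pow_add]
    ring
  have hT_eq : ∑' j, f (j + N) =
      (∑ j ∈ Finset.range p, f (j + N)) * (1 - z⁻¹ ^ p)⁻¹ := by
    rw [eq_mul_inv_iff_mul_eq₀ hne, mul_sub, mul_one]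
    rw [h2] at h3
    linear_combination -h3
  have hS : (∑ j ∈ Finset.range p, f (j + N)) =
      ∑ j ∈ Finset.range p, (a (N + j) : ℂ) * z⁻¹ ^ (N + j) := by
    apply Finset.sum_congr rfl
    intro j _
    simp [hf_def, Nat.add_comm j N]
  rw [← h1, hT_eq, hS]

/-- An eventually periodic expansion in a base `γ` of modulus `> 1` can be
conjugated term by term under any ring homomorphism `σ : ℂ → ℂ` with
`|σ(γ)| > 1`; both series are absolutely convergent. -/
theorem stmt_7
    (γ : ℂ) (hγ : 1 < ‖γ‖)
    (a : ℕ → ℤ)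
    (hper : ∃ N p : ℕ, 1 ≤ p ∧ ∀ k, N ≤ k → a (k + p) = a k)
    (x : ℂ) (hx : x = ∑' k : ℕ, (a k : ℂ) * γ⁻¹ ^ k)
    (σ : ℂ →+* ℂ) (hσ : 1 < ‖σ γ‖) :
    Summable (fun k : ℕ => ‖(a k : ℂ) * γ⁻¹ ^ k‖) ∧
    Summable (fun k : ℕ => ‖(a k : ℂ) * (σ γ)⁻¹ ^ k‖) ∧
    σ x = ∑' k : ℕ, (a k : ℂ) * (σ γ)⁻¹ ^ k := by
  obtain ⟨N, p, hp, hperiod⟩ := hper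
  obtain ⟨C, hC⟩ := stmt_7_bound a N p hp hperiod
  refine ⟨stmt_7_summable a C hC γ hγ, stmt_7_summable a C hC (σ γ) hσ, ?_⟩
  rw [hx, stmt_7_formula a N p hp hperiod γ hγ,
      stmt_7_formula a N p hp hperiod (σ γ) hσ]
  simp only [map_add, map_mul, map_sum, map_intCast, map_inv₀, map_pow, map_sub, map_one]
end

section
/- Let β > 1 be a real number and let T_β : [0,1) → [0,1) be the β-transformation T_β(x) = βx − ⌊βx⌋. If every rational number in [0,1) has a finite forward orbit under T_β (equivalently, an eventually periodic β-expansion), then β is either a Pisot number or a Salem number. -/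
open Polynomial Finset

namespace Stmt10Aux

/-- digits of the β-expansion -/
noncomputable def dig (β : ℝ) (T : ℝ → ℝ) (x : ℝ) (k : ℕ) : ℤ := ⌊β * T^[k] x⌋

/-- companion polynomial -/
noncomputable def pol (t : ℚ) (d : ℕ → ℤ) (n : ℕ) : ℚ[X] :=
  C t * X ^ n - ∑ k ∈ range n, C ((d k : ℚ)) * X ^ (n - 1 - k)

lemma pol_zero (t : ℚ) (d : ℕ → ℤ) : pol t d 0 = C t := by
  simp [pol]

lemma pol_succ (t : ℚ) (d : ℕ → ℤ) (n : ℕ) :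
    pol t d (n + 1) = X * pol t d n - C ((d n : ℚ)) := by
  unfold pol
  rw [Finset.sum_range_succ]
  have h1 : ∀ k ∈ Finset.range n,
      (C ((d k : ℚ)) * X ^ (n + 1 - 1 - k) : ℚ[X]) = X * (C ((d k : ℚ)) * X ^ (n - 1 - k)) := by
    intro k hk
    rw [Finset.mem_range] at hk
    have he : n + 1 - 1 - k = (n - 1 - k) + 1 := by omega
    rw [he, pow_succ]; ring
  rw [Finset.sum_congr rfl h1]
  have h2 : n + 1 - 1 - n = 0 := by omega
  rw [h2, show (X * (C t * X ^ n - ∑ k ∈ range n, C ((d k:ℚ)) * X ^ (n - 1 - k)) : ℚ[X])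
      = X * (C t * X ^ n) - ∑ k ∈ range n, X * (C ((d k:ℚ)) * X ^ (n - 1 - k)) by
    rw [mul_sub, Finset.mul_sum]]
  ring

lemma iterate_mem {β : ℝ} {T : ℝ → ℝ} (hT : ∀ x, T x = β * x - ⌊β * x⌋)
    {x : ℝ} (hx : x ∈ Set.Ico (0:ℝ) 1) (n : ℕ) : T^[n] x ∈ Set.Ico (0:ℝ) 1 := by
  induction n with
  | zero => exact hx
  | succ n ih =>
    rw [Function.iterate_succ_apply', hT]
    exact ⟨Int.fract_nonneg _, Int.fract_lt_one _⟩

lemma dig_nonneg {β : ℝ} (hβ : 0 < β) {T : ℝ → ℝ} (hT : ∀ x, T x = β * x - ⌊β * x⌋)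
    {x : ℝ} (hx : x ∈ Set.Ico (0:ℝ) 1) (k : ℕ) : 0 ≤ dig β T x k := by
  have h := iterate_mem hT hx k
  exact Int.floor_nonneg.mpr (mul_nonneg hβ.le h.1)

lemma dig_lt {β : ℝ} (hβ : 0 < β) {T : ℝ → ℝ} (hT : ∀ x, T x = β * x - ⌊β * x⌋)
    {x : ℝ} (hx : x ∈ Set.Ico (0:ℝ) 1) (k : ℕ) : ((dig β T x k : ℝ)) ≤ β := by
  have h := iterate_mem hT hx k
  have h1 : ((dig β T x k : ℝ)) ≤ β * T^[k] x := Int.floor_le _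
  nlinarith [h.1, h.2]

lemma aeval_pol_orbit {β : ℝ} {T : ℝ → ℝ} (hT : ∀ x, T x = β * x - ⌊β * x⌋)
    (q : ℚ) (n : ℕ) :
    aeval β (pol q (dig β T (q:ℝ)) n) = T^[n] (q:ℝ) := by
  induction n with
  | zero => simp [pol_zero]
  | succ n ih =>
    rw [pol_succ, map_sub, map_mul, aeval_X, ih, aeval_C, Function.iterate_succ_apply', hT]
    have : ((((dig β T (q:ℝ) n : ℚ)) : ℝ)) = ((dig β T (q:ℝ) n : ℝ)) := by push_cast; rfl
    simp only [eq_ratCast, Rat.cast_intCast]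
    rfl

lemma exists_period (T : ℝ → ℝ) (x : ℝ) (hfin : {y : ℝ | ∃ n : ℕ, T^[n] x = y}.Finite) :
    ∃ m p : ℕ, 0 < p ∧ T^[m + p] x = T^[m] x := by
  have hninj : ¬ Function.Injective (fun n : ℕ => T^[n] x) := by
    intro hinj
    exact Set.infinite_range_of_injective hinj hfin
  rw [Function.not_injective_iff] at hninj
  obtain ⟨a, b, hab, hne⟩ := hninj
  rcases hne.lt_or_gt with h | h
  · refine ⟨a, b - a, by omega, ?_⟩
    have : a + (b - a) = b := by omega
    rw [this]; exact hab.symm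
  · refine ⟨b, a - b, by omega, ?_⟩
    have : b + (a - b) = a := by omega
    rw [this]; exact hab

lemma aeval_pol {K : Type*} [Field K] [CharZero K] (t : ℚ) (d : ℕ → ℤ) (n : ℕ) (z : K) :
    aeval z (pol t d n) = (t : K) * z ^ n - ∑ k ∈ range n, ((d k : K)) * z ^ (n - 1 - k) := by
  simp [pol, eq_ratCast]

lemma isIntegral {β : ℝ} (hβ : 1 < β) {T : ℝ → ℝ} (hT : ∀ x, T x = β * x - ⌊β * x⌋)
    (hfin : {y : ℝ | ∃ n : ℕ, T^[n] (((1/2 : ℚ)) : ℝ) = y}.Finite) : IsIntegral ℤ β := by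
  obtain ⟨m, p, hp, hper⟩ := exists_period T _ hfin
  set q : ℚ := 1/2 with hq
  set d := dig β T (q:ℝ) with hd
  have h1 : aeval β (pol q d (m+p)) = aeval β (pol q d m) := by
    rw [hd, aeval_pol_orbit hT, aeval_pol_orbit hT, hper]
  rw [aeval_pol, aeval_pol] at h1
  refine ⟨X^(m+p) - (X^m + ∑ k ∈ range (m+p), C (2 * d k) * X^(m+p-1-k)
      - ∑ k ∈ range m, C (2 * d k) * X^(m-1-k)), ?_, ?_⟩
  · apply monic_X_pow_sub
    have hxm : (X^m : ℤ[X]).degree < ((m+p : ℕ) : WithBot ℕ) := by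
      rw [degree_X_pow]
      exact_mod_cast (by omega : m < m + p)
    have hsum : ∀ (N : ℕ), N ≤ m + p → N ≠ 0 →
        (∑ k ∈ range N, (C (2 * d k) * X^(N-1-k) : ℤ[X])).degree < ((m+p : ℕ) : WithBot ℕ) := by
      intro N hN hN0
      refine lt_of_le_of_lt (degree_sum_le _ _) ?_
      rw [Finset.sup_lt_iff (WithBot.bot_lt_coe _)]
      intro k hk
      refine lt_of_le_of_lt (degree_mul_le _ _) ?_
      refine lt_of_le_of_lt (add_le_add degree_C_le (degree_X_pow (n := N-1-k)).le) ?_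
      rw [zero_add]
      exact_mod_cast (by omega : N - 1 - k < m + p)
    have hs1 := hsum (m+p) le_rfl (by omega)
    rcases Nat.eq_zero_or_pos m with hm0 | hm0
    · subst hm0
      simp only [range_zero, Finset.sum_empty, sub_zero]
      exact lt_of_le_of_lt (degree_add_le _ _) (max_lt hxm hs1)
    · have hs2 := hsum m (by omega) (by omega)
      exact lt_of_le_of_lt (degree_sub_le _ _)
        (max_lt (lt_of_le_of_lt (degree_add_le _ _) (max_lt hxm hs1)) hs2)
  · rw [← Polynomial.aeval_def]
    have e0 : ∀ (N : ℕ), aeval β (∑ k ∈ range N, (C (2 * d k) * X^(N-1-k) : ℤ[X]))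
        = 2 * ∑ k ∈ range N, ((d k : ℝ)) * β^(N-1-k) := by
      intro N
      rw [map_sum, Finset.mul_sum]
      refine Finset.sum_congr rfl fun k _ => ?_
      rw [map_mul, aeval_C, aeval_X_pow]
      push_cast
      norm_num
      ring
    rw [map_sub, map_sub, map_add, aeval_X_pow, aeval_X_pow, e0, e0]
    have hqc : ((q : ℝ)) = 1/2 := by rw [hq]; push_cast; norm_num
    rw [hqc] at h1
    linarith [h1]

lemma geo_aux {r : ℝ} (h0 : 0 ≤ r) (h1 : r < 1) : ∀ N, ∑ i ∈ range N, r^i ≤ 1/(1-r) := by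
  have h1r : 0 < 1 - r := by linarith
  intro N
  induction N with
  | zero =>
    rw [Finset.sum_range_zero]
    exact le_of_lt (div_pos one_pos h1r)
  | succ N ih =>
    rw [Finset.sum_range_succ' (fun i => r^i) N]
    have e1 : ∑ i ∈ range N, r^(i+1) = r * ∑ i ∈ range N, r^i := by
      rw [Finset.mul_sum]
      exact Finset.sum_congr rfl fun i _ => by ring
    rw [e1]
    have h2 : r * ∑ i ∈ range N, r^i ≤ r * (1/(1-r)) := mul_le_mul_of_nonneg_left ih h0
    have h3 : r * (1/(1-r)) + r^0 = 1/(1-r) := by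
      field_simp
      ring
    linarith

lemma key {β : ℝ} (hβ : 1 < β) {T : ℝ → ℝ} (hT : ∀ x, T x = β * x - ⌊β * x⌋)
    (hfin : ∀ q : ℚ, (q : ℝ) ∈ Set.Ico (0 : ℝ) 1 →
      {y : ℝ | ∃ n : ℕ, T^[n] (q : ℝ) = y}.Finite)
    (z : ℂ) (hz : Polynomial.aeval z (minpoly ℚ β) = 0) (hz1 : 1 < ‖z‖) : z = (β : ℂ) := by
  have hβ0 : (0:ℝ) < β := by linarith
  have hβip : 0 < β⁻¹ := inv_pos.mpr hβ0
  have hβi : β⁻¹ < 1 := by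
    rw [inv_lt_one_iff₀]; right; exact hβ
  have hz0 : z ≠ 0 := by
    intro h; rw [h] at hz1; simp at hz1; linarith
  set r : ℝ := ‖z‖⁻¹ with hrdef
  have hr0 : 0 < r := inv_pos.mpr (by linarith)
  have hr1 : r < 1 := by
    rw [hrdef, inv_lt_one_iff₀]; right; exact hz1
  set K : ℝ := β * r / (1 - r) with hKdef
  have hK0 : 0 ≤ K := by
    exact div_nonneg (mul_nonneg hβ0.le hr0.le) (by linarith)
  have main : ∀ n : ℕ, ‖((β:ℂ))⁻¹ - z⁻¹‖ ≤ K * r^(n+1) + (β⁻¹)^(n+1) := by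
    intro n
    set δ : ℝ := min ((β⁻¹)^(n+1)) (1 - β⁻¹) with hδdef
    have hδ0 : 0 < δ := lt_min (pow_pos hβip _) (by linarith)
    obtain ⟨q, hq1, hq2⟩ := exists_rat_btwn (lt_add_of_pos_right β⁻¹ hδ0)
    have hδ1 : δ ≤ (β⁻¹)^(n+1) := min_le_left _ _
    have hδ2 : δ ≤ 1 - β⁻¹ := min_le_right _ _
    have hqI : (q:ℝ) ∈ Set.Ico (0:ℝ) 1 := ⟨by linarith, by linarith⟩
    set ε : ℝ := (q:ℝ) - β⁻¹ with hεdef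
    have hε0 : 0 < ε := by rw [hεdef]; linarith
    have hεδ : ε < δ := by rw [hεdef]; linarith
    have hpow : ∀ j : ℕ, j ≤ n+1 → β^j * ε < 1 := by
      intro j hj
      have h1 : β^j * ε < β^j * δ := mul_lt_mul_of_pos_left hεδ (pow_pos hβ0 _)
      have h2 : β^j * δ ≤ β^j * (β⁻¹)^(n+1) :=
        mul_le_mul_of_nonneg_left hδ1 (pow_pos hβ0 _).le
      have h3 : β^j * (β⁻¹)^(n+1) = (β⁻¹)^(n+1-j) := by
        have e : (β⁻¹)^(n+1) = (β⁻¹)^j * (β⁻¹)^(n+1-j) := by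
          rw [← pow_add]; congr 1; omega
        rw [e, ← mul_assoc, ← mul_pow, mul_inv_cancel₀ (ne_of_gt hβ0), one_pow, one_mul]
      have h4 : (β⁻¹)^(n+1-j) ≤ 1 := pow_le_one₀ hβip.le hβi.le
      calc β^j * ε < β^j * δ := h1
        _ ≤ β^j * (β⁻¹)^(n+1) := h2
        _ = (β⁻¹)^(n+1-j) := h3
        _ ≤ 1 := h4
    set d := dig β T (q:ℝ) with hd
    have hbq : β * (q:ℝ) = 1 + β * ε := by
      rw [hεdef, mul_sub, mul_inv_cancel₀ (ne_of_gt hβ0)]; ring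
    have hβε1 : β * ε < 1 := by
      have := hpow 1 (by omega); rwa [pow_one] at this
    have hfl : ⌊β * (q:ℝ)⌋ = 1 := by
      rw [hbq, Int.floor_eq_iff]
      constructor
      · push_cast; nlinarith
      · push_cast; linarith
    have hd0 : d 0 = 1 := by
      rw [hd]; unfold dig; rw [Function.iterate_zero_apply]; exact hfl
    have hiter : ∀ k : ℕ, k ≤ n → T^[k+1] (q:ℝ) = β^(k+1) * ε := by
      intro k
      induction k with
      | zero =>
        intro _
        rw [Function.iterate_one, hT, hfl, hbq]
        push_cast; ring
      | succ k ih =>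
        intro hk
        have hk' : k ≤ n := by omega
        rw [Function.iterate_succ_apply', ih hk', hT]
        have he : β * (β^(k+1) * ε) = β^(k+2) * ε := by ring
        have h0 : ⌊β * (β^(k+1) * ε)⌋ = 0 := by
          rw [he, Int.floor_eq_zero_iff]
          constructor
          · positivity
          · exact hpow (k+2) (by omega)
        rw [h0, he]
        push_cast; ring
    have hdk : ∀ k, 1 ≤ k → k ≤ n → d k = 0 := by
      intro k h1k hkn
      have hk : T^[k] (q:ℝ) = β^k * ε := by
        have := hiter (k-1) (by omega)
        rwa [show k-1+1 = k by omega] at this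
      rw [hd]; unfold dig; rw [hk]
      rw [show β * (β^k * ε) = β^(k+1) * ε by ring, Int.floor_eq_zero_iff]
      exact ⟨by positivity, hpow (k+1) (by omega)⟩
    obtain ⟨M, P, hP, hper⟩ := exists_period T (q:ℝ) (hfin q hqI)
    set ρ : ℕ → ℂ := fun j => aeval z (pol q d j) with hρ
    have hρrec : ∀ j, ρ (j+1) = z * ρ j - ((d j : ℂ)) := by
      intro j
      rw [hρ]
      simp only
      rw [pol_succ, map_sub, map_mul, aeval_X, aeval_C, eq_ratCast]
      push_cast
      ring
    have hρper : ρ (M+P) = ρ M := by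
      have h0 : aeval β (pol q d (M+P) - pol q d M) = 0 := by
        rw [map_sub, hd, aeval_pol_orbit hT, aeval_pol_orbit hT, hper, sub_self]
      obtain ⟨g, hg⟩ := minpoly.dvd ℚ β h0
      have h2 : aeval z (pol q d (M+P) - pol q d M) = 0 := by
        rw [hg, map_mul, hz, zero_mul]
      rw [map_sub, sub_eq_zero] at h2
      exact h2
    have hdper : ∀ i, d (M+i+P) = d (M+i) := by
      intro i
      have hTp : T^[M+i+P] (q:ℝ) = T^[M+i] (q:ℝ) := by
        rw [show M+i+P = i+(M+P) by omega, Function.iterate_add_apply, hper,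
          ← Function.iterate_add_apply, show i+M = M+i by omega]
      rw [hd]; unfold dig; rw [hTp]
    have hρperAll : ∀ i, ρ (M+i+P) = ρ (M+i) := by
      intro i
      induction i with
      | zero => simpa using hρper
      | succ i ih =>
        have e1 : M+(i+1)+P = (M+i+P)+1 := by omega
        rw [e1, hρrec, ih, hdper, show M+(i+1) = (M+i)+1 from rfl, hρrec]
    have hne : (range (M+P+1)).Nonempty := nonempty_range_iff.mpr (by omega)
    set B : ℝ := (range (M+P+1)).sup' hne (fun j => ‖ρ j‖) with hB
    have hBb : ∀ j, ‖ρ j‖ ≤ B := by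
      intro j
      induction j using Nat.strong_induction_on with
      | _ j IH =>
        by_cases hj : j ≤ M+P
        · exact Finset.le_sup' (fun j => ‖ρ j‖) (mem_range.mpr (by omega))
        · have e : ρ j = ρ (j - P) := by
            calc ρ j = ρ (M + (j-M-P) + P) := by congr 1; omega
              _ = ρ (M + (j-M-P)) := hρperAll _
              _ = ρ (j-P) := by congr 1; omega
          rw [e]
          exact IH _ (by omega)
    have hdbd : ∀ j, ‖((d j : ℂ))‖ ≤ β := by
      intro j
      rw [show ((d j : ℂ)) = (((d j : ℝ) : ℂ)) by push_cast; rfl, Complex.norm_real,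
        Real.norm_eq_abs, abs_of_nonneg (by exact_mod_cast dig_nonneg hβ0 hT hqI j)]
      exact dig_lt hβ0 hT hqI j
    have hKb : ∀ N j, ‖ρ j‖ ≤ B * r^N + β * ∑ i ∈ range N, r^(i+1) := by
      intro N
      induction N with
      | zero => intro j; simpa using hBb j
      | succ N ih =>
        intro j
        have e1 : ρ j = z⁻¹ * (ρ (j+1) + ((d j : ℂ))) := by
          rw [hρrec]
          field_simp
          ring
        have e2 : ∑ i ∈ range (N+1), r^(i+1) = r * (∑ i ∈ range N, r^(i+1)) + r := by
          rw [Finset.sum_range_succ' (fun i => r^(i+1)) N, Finset.mul_sum]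
          congr 1
          · exact Finset.sum_congr rfl fun i _ => by ring
          · exact pow_one r
        have h3 : ‖ρ (j+1) + ((d j:ℂ))‖ ≤ (B * r^N + β * ∑ i ∈ range N, r^(i+1)) + β :=
          le_trans (norm_add_le _ _) (add_le_add (ih (j+1)) (hdbd j))
        calc ‖ρ j‖ = r * ‖ρ (j+1) + ((d j:ℂ))‖ := by
              rw [e1, norm_mul, norm_inv]
          _ ≤ r * ((B * r^N + β * ∑ i ∈ range N, r^(i+1)) + β) :=
              mul_le_mul_of_nonneg_left h3 hr0.le
          _ = B * r^(N+1) + β * (r * (∑ i ∈ range N, r^(i+1)) + r) := by ring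
          _ = B * r^(N+1) + β * ∑ i ∈ range (N+1), r^(i+1) := by rw [e2]
    have hgeo : ∀ N, β * ∑ i ∈ range N, r^(i+1) ≤ K := by
      intro N
      have e1 : ∑ i ∈ range N, r^(i+1) = r * ∑ i ∈ range N, r^i := by
        rw [Finset.mul_sum]
        exact Finset.sum_congr rfl fun i _ => by ring
      rw [e1, hKdef]
      have h2 : r * (∑ i ∈ range N, r^i) ≤ r * (1/(1-r)) :=
        mul_le_mul_of_nonneg_left (geo_aux hr0.le hr1 N) hr0.le
      have h3 : β * (r * (∑ i ∈ range N, r^i)) ≤ β * (r * (1/(1-r))) :=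
        mul_le_mul_of_nonneg_left h2 hβ0.le
      calc β * (r * ∑ i ∈ range N, r^i) ≤ β * (r * (1/(1-r))) := h3
        _ = β * r / (1-r) := by ring
    have hρK : ∀ j, ‖ρ j‖ ≤ K := by
      intro j
      have hlim : Filter.Tendsto (fun N : ℕ => B * r^N + K) Filter.atTop (nhds (B * 0 + K)) :=
        (((tendsto_pow_atTop_nhds_zero_of_lt_one hr0.le hr1).const_mul B)).add tendsto_const_nhds
      have h4 : ∀ N : ℕ, ‖ρ j‖ ≤ B * r^N + K := fun N =>
        le_trans (hKb N j) (by linarith [hgeo N])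
      have := ge_of_tendsto hlim (Filter.Eventually.of_forall h4)
      linarith [this]
    have hcf : ρ (n+1) = (q:ℂ) * z^(n+1) - z^n := by
      rw [hρ]
      simp only
      rw [aeval_pol]
      congr 1
      have hterm : ∀ k ∈ range (n+1), ((d k:ℂ)) * z^(n+1-1-k) = if k = 0 then z^n else 0 := by
        intro k hk
        rw [mem_range] at hk
        rcases eq_or_ne k 0 with h|h
        · subst h
          rw [hd0]
          simp
        · rw [hdk k (by omega) (by omega)]
          simp [h]
      rw [Finset.sum_congr rfl hterm, Finset.sum_ite_eq' (range (n+1)) 0 (fun _ => z^n)]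
      simp
    have hqz : ‖(q:ℂ) - z⁻¹‖ ≤ K * r^(n+1) := by
      have e : (q:ℂ) - z⁻¹ = (z⁻¹)^(n+1) * ρ (n+1) := by
        rw [hcf]
        have hA : z⁻¹ ^ (n+1) * z ^ (n+1) = 1 := by
          rw [← mul_pow, inv_mul_cancel₀ hz0, one_pow]
        have hB : z⁻¹ ^ (n+1) * z ^ n = z⁻¹ := by
          rw [pow_succ', mul_assoc, ← mul_pow, inv_mul_cancel₀ hz0, one_pow, mul_one]
        linear_combination (-(q:ℂ)) * hA + hB
      rw [e, norm_mul, norm_pow, norm_inv]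
      calc r^(n+1) * ‖ρ (n+1)‖ ≤ r^(n+1) * K :=
            mul_le_mul_of_nonneg_left (hρK (n+1)) (by positivity)
        _ = K * r^(n+1) := by ring
    have hqβ : ‖(q:ℂ) - ((β:ℂ))⁻¹‖ ≤ (β⁻¹)^(n+1) := by
      have e : ((q:ℂ)) - ((β:ℂ))⁻¹ = (((q:ℝ) - β⁻¹ : ℝ) : ℂ) := by push_cast; ring
      rw [e, Complex.norm_real, Real.norm_eq_abs, abs_of_nonneg (by linarith)]
      linarith
    calc ‖((β:ℂ))⁻¹ - z⁻¹‖ ≤ ‖((β:ℂ))⁻¹ - (q:ℂ)‖ + ‖(q:ℂ) - z⁻¹‖ := by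
          have := norm_add_le (((β:ℂ))⁻¹ - (q:ℂ)) ((q:ℂ) - z⁻¹)
          simpa using this
      _ ≤ (β⁻¹)^(n+1) + K * r^(n+1) := by
          rw [norm_sub_rev]
          exact add_le_add hqβ hqz
      _ = K * r^(n+1) + (β⁻¹)^(n+1) := by ring
  have hlim2 : Filter.Tendsto (fun n : ℕ => K * r^(n+1) + (β⁻¹)^(n+1)) Filter.atTop (nhds 0) := by
    have l1 : Filter.Tendsto (fun n : ℕ => K * r^n) Filter.atTop (nhds 0) := by
      have := (tendsto_pow_atTop_nhds_zero_of_lt_one hr0.le hr1).const_mul K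
      simpa using this
    have l2 : Filter.Tendsto (fun n : ℕ => (β⁻¹)^n) Filter.atTop (nhds 0) :=
      tendsto_pow_atTop_nhds_zero_of_lt_one hβip.le hβi
    have l3 := (l1.comp (Filter.tendsto_add_atTop_nat 1)).add
      (l2.comp (Filter.tendsto_add_atTop_nat 1))
    simpa using l3
  have h0 : ‖((β:ℂ))⁻¹ - z⁻¹‖ ≤ 0 := ge_of_tendsto hlim2 (Filter.Eventually.of_forall main)
  have h1 : ((β:ℂ))⁻¹ = z⁻¹ := by
    rw [← sub_eq_zero]
    exact norm_le_zero_iff.mp h0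
  exact (inv_injective h1).symm

end Stmt10Aux

/-- Schmidt's theorem, part (1): if every rational in `[0,1)` has a finite
forward orbit under the `β`-transformation, then `β` is a Pisot number or a
Salem number. -/
theorem stmt_10
    (β : ℝ) (hβ : 1 < β)
    (T : ℝ → ℝ) (hT : ∀ x, T x = β * x - ⌊β * x⌋)
    (hfin : ∀ q : ℚ, (q : ℝ) ∈ Set.Ico (0 : ℝ) 1 →
      {y : ℝ | ∃ n : ℕ, T^[n] (q : ℝ) = y}.Finite) :
    (IsIntegral ℤ β ∧
      ∀ z : ℂ, Polynomial.aeval z (minpoly ℚ β) = 0 → z ≠ (β : ℂ) → ‖z‖ < 1) ∨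
    (IsIntegral ℤ β ∧
      (∀ z : ℂ, Polynomial.aeval z (minpoly ℚ β) = 0 → z ≠ (β : ℂ) → ‖z‖ ≤ 1) ∧
      ∃ z : ℂ, Polynomial.aeval z (minpoly ℚ β) = 0 ∧ ‖z‖ = 1) := by
  have hZ : IsIntegral ℤ β := Stmt10Aux.isIntegral hβ hT (hfin (1/2) (by norm_num))
  have hle : ∀ z : ℂ, Polynomial.aeval z (minpoly ℚ β) = 0 → z ≠ (β : ℂ) → ‖z‖ ≤ 1 := by
    intro z hz hne
    by_contra h
    push_neg at h
    exact hne (Stmt10Aux.key hβ hT hfin z hz h)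
  by_cases hex : ∃ z : ℂ, Polynomial.aeval z (minpoly ℚ β) = 0 ∧ ‖z‖ = 1
  · exact Or.inr ⟨hZ, hle, hex⟩
  · push_neg at hex
    refine Or.inl ⟨hZ, fun z hz hne => ?_⟩
    exact lt_of_le_of_ne (hle z hz hne) (hex z hz)
end

section
/- Let β be a Pisot number and let T_β : [0,1) → [0,1) be the β-transformation T_β(x) = βx − ⌊βx⌋. Then a real number x ∈ [0,1) has a finite forward orbit under T_β (equivalently, an eventually periodic β-expansion) if and only if x ∈ ℚ(β). -/
open Polynomial

lemma aeval_modByMonic_eq {R S : Type*} [CommRing R] [CommRing S] [Algebra R S]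
    (s : S) (p q : R[X]) (hq : q.Monic) (hs : aeval s q = 0) :
    aeval s (p %ₘ q) = aeval s p := by
  have h := Polynomial.modByMonic_eq_sub_mul_div p q
  rw [h, map_sub, map_mul, hs, zero_mul, sub_zero]

lemma rep_int (β : ℝ) (hβint : IsIntegral ℤ β) (x : ℝ)
    (hx : x ∈ Subfield.closure ({β} : Set ℝ)) :
    ∃ (g : ℤ[X]) (q : ℤ), 0 < q ∧ (q : ℝ) * x = aeval β g := by
  have hβQ : IsIntegral ℚ β := hβint.tower_top
  -- x ∈ ℚ⟮β⟯
  have h1 : Subfield.closure ({β} : Set ℝ) ≤ (IntermediateField.adjoin ℚ ({β} : Set ℝ)).toSubfield := by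
    rw [Subfield.closure_le]
    intro y hy
    rw [Set.mem_singleton_iff] at hy
    rw [hy]
    exact IntermediateField.mem_adjoin_simple_self ℚ β
  have h2 : x ∈ IntermediateField.adjoin ℚ ({β} : Set ℝ) := h1 hx
  have h3 : x ∈ Algebra.adjoin ℚ ({β} : Set ℝ) := by
    rw [← IntermediateField.adjoin_simple_toSubalgebra_of_isAlgebraic hβQ.isAlgebraic]
    exact h2
  rw [Algebra.adjoin_singleton_eq_range_aeval] at h3
  obtain ⟨f, hf⟩ := h3
  have hf' : aeval β f = x := hf
  obtain ⟨b, hb⟩ := IsLocalization.integerNormalization_map_to_map (nonZeroDivisors ℤ) f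
  set g := IsLocalization.integerNormalization (nonZeroDivisors ℤ) f with hg
  have hb0 : (b : ℤ) ≠ 0 := nonZeroDivisors.coe_ne_zero b
  have key : aeval β g = ((b : ℤ) : ℝ) * x := by
    have : aeval β (g.map (algebraMap ℤ ℚ)) = aeval β ((b : ℤ) • f) := by rw [hb]
    rw [aeval_map_algebraMap] at this
    rw [this, map_zsmul, hf', zsmul_eq_mul]
  rcases lt_or_gt_of_ne hb0 with hneg | hpos
  · refine ⟨-g, -(b : ℤ), by omega, ?_⟩
    rw [map_neg, key]; push_cast; ring
  · exact ⟨g, b, hpos, by rw [key]⟩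


lemma orbit_affine (β : ℝ) (T : ℝ → ℝ) (hT : ∀ x, T x = β * x - ⌊β * x⌋) (x : ℝ) :
    ∀ k : ℕ, ∃ c ∈ Subfield.closure ({β} : Set ℝ), T^[k] x = β ^ k * x - c := by
  intro k
  induction k with
  | zero => exact ⟨0, zero_mem _, by simp⟩
  | succ n ih =>
    obtain ⟨c, hc, hcx⟩ := ih
    have hβmem : β ∈ Subfield.closure ({β} : Set ℝ) :=
      Subfield.subset_closure rfl
    refine ⟨β * c + (⌊β * T^[n] x⌋ : ℤ), ?_, ?_⟩
    · exact add_mem (mul_mem hβmem hc) (Subfield.intCast_mem _ _)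
    · rw [Function.iterate_succ_apply', hT, hcx]
      ring

lemma easy_dir (β : ℝ) (hβ : 1 < β) (T : ℝ → ℝ) (hT : ∀ x, T x = β * x - ⌊β * x⌋)
    (x : ℝ) (hfin : {y : ℝ | ∃ n : ℕ, T^[n] x = y}.Finite) :
    x ∈ Subfield.closure ({β} : Set ℝ) := by
  obtain ⟨m, n, hmn, heq⟩ := Set.Finite.exists_lt_map_eq_of_forall_mem
    (f := fun n : ℕ => T^[n] x) (fun k => show ∃ n, T^[n] x = T^[k] x from ⟨k, rfl⟩) hfin
  obtain ⟨cm, hcm, hm⟩ := orbit_affine β T hT x m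
  obtain ⟨cn, hcn, hn⟩ := orbit_affine β T hT x n
  have hβmem : β ∈ Subfield.closure ({β} : Set ℝ) := Subfield.subset_closure rfl
  have hpow : β ^ m < β ^ n := pow_lt_pow_right₀ hβ hmn
  have hx : x = (cm - cn) / (β ^ m - β ^ n) := by
    have h : β ^ m * x - cm = β ^ n * x - cn := by rw [← hm, ← hn, heq]
    rw [eq_div_iff (sub_ne_zero.mpr (ne_of_lt hpow))]
    linear_combination h
  rw [hx]
  exact Subfield.div_mem _ (sub_mem hcm hcn)
    (sub_mem (pow_mem hβmem m) (pow_mem hβmem n))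


lemma bounded_int_vec_finite {d : ℕ} (K : ℝ) :
    {c : Fin d → ℤ | ∀ i, |(c i : ℝ)| ≤ K}.Finite := by
  apply Set.Finite.subset (Set.finite_Icc (fun _ : Fin d => -⌈K⌉) (fun _ => ⌈K⌉))
  intro c hc
  constructor <;> intro i
  · have h := (abs_le.mp (hc i)).1
    have : (-⌈K⌉ : ℝ) ≤ (c i : ℝ) := le_trans (by simpa using neg_le_neg (Int.le_ceil K)) h
    exact_mod_cast this
  · have h := (abs_le.mp (hc i)).2
    have : (c i : ℝ) ≤ (⌈K⌉ : ℝ) := le_trans h (Int.le_ceil K)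
    exact_mod_cast this

lemma vandermonde_inv_bound {d : ℕ} (r : Fin d → ℂ) (hr : Function.Injective r) :
    ∃ K : ℝ, ∀ (C : ℝ), 0 ≤ C → ∀ c : Fin d → ℂ,
      (∀ j, ‖∑ i, c i * r j ^ (i : ℕ)‖ ≤ C) → ∀ i, ‖c i‖ ≤ K * C := by
  set M := Matrix.vandermonde r with hM
  have hdet : M.det ≠ 0 := by
    rw [hM, Matrix.det_vandermonde]
    apply Finset.prod_ne_zero_iff.mpr
    intro i _
    apply Finset.prod_ne_zero_iff.mpr
    intro j hj
    have hij : i < j := Finset.mem_Ioi.mp hj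
    exact sub_ne_zero.mpr fun h => (ne_of_lt hij) (hr h.symm)
  have hunit : IsUnit M.det := isUnit_iff_ne_zero.mpr hdet
  refine ⟨∑ i, ∑ j, ‖M⁻¹ i j‖, fun C hC c hc i => ?_⟩
  have hcc : c = M⁻¹.mulVec (M.mulVec c) := by
    rw [Matrix.mulVec_mulVec, Matrix.nonsing_inv_mul M hunit, Matrix.one_mulVec]
  have hMc : ∀ j, ‖M.mulVec c j‖ ≤ C := by
    intro j
    have : M.mulVec c j = ∑ i, c i * r j ^ (i : ℕ) := by
      simp [Matrix.mulVec, dotProduct, hM, Matrix.vandermonde, mul_comm]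
    rw [this]; exact hc j
  calc ‖c i‖ = ‖∑ j, M⁻¹ i j * M.mulVec c j‖ := by
        conv_lhs => rw [hcc]
        rfl
    _ ≤ ∑ j, ‖M⁻¹ i j * M.mulVec c j‖ := norm_sum_le _ _
    _ ≤ ∑ j, ‖M⁻¹ i j‖ * C := by
        apply Finset.sum_le_sum
        intro j _
        rw [norm_mul]
        exact mul_le_mul_of_nonneg_left (hMc j) (norm_nonneg _)
    _ = (∑ j, ‖M⁻¹ i j‖) * C := by rw [Finset.sum_mul]
    _ ≤ (∑ i, ∑ j, ‖M⁻¹ i j‖) * C := by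
        apply mul_le_mul_of_nonneg_right _ hC
        exact Finset.single_le_sum (f := fun i => ∑ j, ‖M⁻¹ i j‖)
          (fun i _ => Finset.sum_nonneg fun j _ => norm_nonneg _) (Finset.mem_univ i)

lemma hard_dir (β : ℝ) (hβ : 1 < β) (hβint : IsIntegral ℤ β)
    (hpisot : ∀ z : ℂ, Polynomial.aeval z (minpoly ℚ β) = 0 → z ≠ (β : ℂ) → ‖z‖ < 1)
    (T : ℝ → ℝ) (hT : ∀ x, T x = β * x - ⌊β * x⌋)
    (x : ℝ) (hx : x ∈ Set.Ico (0 : ℝ) 1)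
    (g₀ : ℤ[X]) (q : ℤ) (hq : 0 < q) (hgx : (q : ℝ) * x = aeval β g₀) :
    {y : ℝ | ∃ n : ℕ, T^[n] x = y}.Finite := by
  have hβ0 : (0:ℝ) < β := lt_trans one_pos hβ
  set P := minpoly ℤ β with hPdef
  have hPmonic : P.Monic := minpoly.monic hβint
  have hPβ : aeval β P = 0 := minpoly.aeval ℤ β
  set d := P.natDegree with hddef
  have hd : 0 < d := minpoly.natDegree_pos hβint
  -- orbit points
  set xs : ℕ → ℝ := fun n => T^[n] x with hxs
  have hxs0 : xs 0 = x := rfl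
  have hx01 : ∀ n, 0 ≤ xs n ∧ xs n < 1 := by
    intro n
    induction n with
    | zero => exact ⟨hx.1, hx.2⟩
    | succ n ih =>
      have h1 : xs (n+1) = Int.fract (β * xs n) := by
        show T^[n+1] x = _
        rw [Function.iterate_succ_apply', hT]
        rfl
      rw [h1]
      exact ⟨Int.fract_nonneg _, Int.fract_lt_one _⟩
  set a : ℕ → ℤ := fun n => ⌊β * xs n⌋ with ha
  have hxss : ∀ n, xs (n+1) = β * xs n - a n := by
    intro n
    show T^[n+1] x = _
    rw [Function.iterate_succ_apply', hT]
  have hab : ∀ n, 0 ≤ (a n : ℝ) ∧ (a n : ℝ) ≤ β := by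
    intro n
    have h1 : 0 ≤ β * xs n := mul_nonneg (le_of_lt hβ0) (hx01 n).1
    constructor
    · exact_mod_cast Int.floor_nonneg.mpr h1
    · calc (a n : ℝ) ≤ β * xs n := Int.floor_le _
        _ ≤ β * 1 := by nlinarith [(hx01 n).2]
        _ = β := mul_one β
  -- polynomial recursion
  set G : ℕ → ℤ[X] := fun n => Nat.rec (g₀ %ₘ P)
    (fun m gm => (Polynomial.X * gm - Polynomial.C (q * a m)) %ₘ P) n with hG
  have hG0 : G 0 = g₀ %ₘ P := rfl
  have hGs : ∀ n, G (n+1) = (Polynomial.X * G n - Polynomial.C (q * a n)) %ₘ P :=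
    fun n => rfl
  have hA : ∀ n, aeval β (G n) = q * xs n := by
    intro n
    induction n with
    | zero => rw [hG0, aeval_modByMonic_eq β _ P hPmonic hPβ, hxs0]; exact hgx.symm
    | succ n ih =>
      rw [hGs n, aeval_modByMonic_eq β _ P hPmonic hPβ, map_sub, map_mul, aeval_X,
        aeval_C, ih, hxss n]
      simp only [algebraMap_int_eq, eq_intCast]
      push_cast
      ring
  have hdeg : ∀ n, (G n).natDegree < d := by
    have key : ∀ g : ℤ[X], (g %ₘ P).natDegree < d := by
      intro g
      by_cases h0 : g %ₘ P = 0
      · rw [h0]; simpa using hd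
      · exact Polynomial.natDegree_lt_natDegree h0 (Polynomial.degree_modByMonic_lt g hPmonic)
    intro n
    cases n with
    | zero => exact key g₀
    | succ m => rw [hGs m]; exact key _
  -- roots over ℂ
  set Pc : ℂ[X] := P.map (algebraMap ℤ ℂ) with hPc
  have hPc0 : Pc ≠ 0 := (hPmonic.map _).ne_zero
  have hPcdeg : Pc.natDegree = d := hPmonic.natDegree_map _
  have hcard : Multiset.card Pc.roots = d := by
    rw [← hPcdeg]
    exact (Polynomial.splits_iff_card_roots).mp (IsAlgClosed.splits Pc)
  have hβQ : IsIntegral ℚ β := hβint.tower_top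
  have hPQ : minpoly ℚ β = P.map (algebraMap ℤ ℚ) :=
    minpoly.isIntegrallyClosed_eq_field_fractions ℚ ℝ hβint
  have hPceq : Pc = (minpoly ℚ β).map (algebraMap ℚ ℂ) := by
    rw [hPQ, Polynomial.map_map, ← IsScalarTower.algebraMap_eq]
  have hnodup : Pc.roots.Nodup := by
    rw [hPceq]
    exact Polynomial.nodup_roots ((minpoly.irreducible hβQ).separable.map)
  have hroot_aeval : ∀ z ∈ Pc.roots, aeval z P = 0 := by
    intro z hz
    have h := Polynomial.isRoot_of_mem_roots hz
    rwa [Polynomial.IsRoot, hPc, Polynomial.eval_map, ← Polynomial.aeval_def] at h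
  -- recursion at roots
  have hvrec : ∀ z ∈ Pc.roots, ∀ n,
      aeval z (G (n+1)) = z * aeval z (G n) - ((q * a n : ℤ) : ℂ) := by
    intro z hz n
    rw [hGs n, aeval_modByMonic_eq z _ P hPmonic (hroot_aeval z hz), map_sub, map_mul,
      aeval_X, aeval_C]
    simp
  -- bound at small roots
  have hsmall : ∀ z ∈ Pc.roots, ‖z‖ < 1 → ∀ n,
      ‖aeval z (G n)‖ ≤ max ‖aeval z (G 0)‖ ((q * β) / (1 - ‖z‖)) := by
    intro z hz hz1
    set B := max ‖aeval z (G 0)‖ ((q * β) / (1 - ‖z‖)) with hB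
    have h1z : 0 < 1 - ‖z‖ := by linarith
    have hBge : (q * β) / (1 - ‖z‖) ≤ B := le_max_right _ _
    have hqB : (q:ℝ) * β ≤ (1 - ‖z‖) * B := by
      rw [div_le_iff₀ h1z] at hBge
      linarith
    intro n
    induction n with
    | zero => exact le_max_left _ _
    | succ n ih =>
      rw [hvrec z hz n]
      have step1 : ‖z * aeval z (G n) - ((q * a n : ℤ) : ℂ)‖ ≤
          ‖z‖ * ‖aeval z (G n)‖ + ‖((q * a n : ℤ) : ℂ)‖ := by
        calc _ ≤ ‖z * aeval z (G n)‖ + ‖((q * a n : ℤ) : ℂ)‖ := norm_sub_le _ _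
          _ = _ := by rw [norm_mul]
      have step2 : ‖((q * a n : ℤ) : ℂ)‖ ≤ (q:ℝ) * β := by
        rw [Complex.norm_intCast]
        push_cast
        rw [abs_mul, abs_of_nonneg (le_of_lt (by exact_mod_cast hq : (0:ℝ) < q)),
          abs_of_nonneg (hab n).1]
        have h2 := (hab n).2
        have hq' : (0:ℝ) ≤ q := by exact_mod_cast le_of_lt hq
        exact mul_le_mul_of_nonneg_left h2 hq'
      have := mul_le_mul_of_nonneg_left ih (norm_nonneg z)
      nlinarith [norm_nonneg z, step1]
  -- value at the root β
  have hbig : ∀ n, ‖aeval ((β:ℂ)) (G n)‖ ≤ (q:ℝ) := by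
    intro n
    have e : aeval ((β:ℂ)) (G n) = ((aeval β (G n) : ℝ) : ℂ) := by
      have h := Polynomial.aeval_algebraMap_apply ℂ β (G n)
      rwa [Complex.coe_algebraMap] at h
    have hq' : (0:ℝ) < q := by exact_mod_cast hq
    rw [e, Complex.norm_real, hA n, Real.norm_eq_abs, abs_of_nonneg
      (mul_nonneg (le_of_lt hq') (hx01 n).1)]
    nlinarith [(hx01 n).2, (hx01 n).1]
  -- β is a root
  have hβc : ((β:ℂ)) ∈ Pc.roots := by
    rw [Polynomial.mem_roots hPc0]
    rw [Polynomial.IsRoot, hPc, Polynomial.eval_map, ← Polynomial.aeval_def]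
    have h := Polynomial.aeval_algebraMap_apply ℂ β P
    rw [Complex.coe_algebraMap] at h
    rw [h, hPβ]
    simp
  -- uniform bound over all roots
  set Bz : ℂ → ℝ := fun z => max (q:ℝ) (max ‖aeval z (G 0)‖ ((q * β) / (1 - ‖z‖))) with hBzdef
  have hallroot : ∀ z ∈ Pc.roots, ∀ n, ‖aeval z (G n)‖ ≤ Bz z := by
    intro z hz n
    by_cases hzβ : z = (β:ℂ)
    · rw [hzβ]; exact le_trans (hbig n) (le_max_left _ _)
    · have hz1 : ‖z‖ < 1 := by
        apply hpisot z _ hzβ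
        rw [hPQ, aeval_map_algebraMap]
        exact hroot_aeval z hz
      exact le_trans (hsmall z hz hz1 n) (le_max_right _ _)
  have hne : Pc.roots.toFinset.Nonempty := by
    rw [← Finset.card_pos, Multiset.toFinset_card_of_nodup hnodup, hcard]
    exact hd
  set C := Pc.roots.toFinset.sup' hne Bz with hCdef
  have hCroot : ∀ z ∈ Pc.roots, ∀ n, ‖aeval z (G n)‖ ≤ C := fun z hz n =>
    le_trans (hallroot z hz n) (Finset.le_sup' Bz (Multiset.mem_toFinset.mpr hz))
  have hC0 : 0 ≤ C := by
    obtain ⟨z, hz⟩ := hne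
    refine le_trans (le_trans ?_ (le_max_left (q:ℝ) _)) (Finset.le_sup' Bz hz)
    exact_mod_cast le_of_lt hq
  -- enumerate the roots
  have hcardF : Pc.roots.toFinset.card = d := by
    rw [Multiset.toFinset_card_of_nodup hnodup, hcard]
  set e := Pc.roots.toFinset.equivFin with he
  set r : Fin d → ℂ := fun i => (e.symm (Fin.cast hcardF.symm i) : ℂ) with hr
  have hrinj : Function.Injective r := by
    intro i j hij
    have h1 : e.symm (Fin.cast hcardF.symm i) = e.symm (Fin.cast hcardF.symm j) :=
      Subtype.ext hij
    have h2 := e.symm.injective h1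
    simpa [Fin.ext_iff] using h2
  have hrroot : ∀ i, r i ∈ Pc.roots := fun i =>
    Multiset.mem_toFinset.mp (e.symm (Fin.cast hcardF.symm i)).2
  obtain ⟨K, hK⟩ := vandermonde_inv_bound r hrinj
  set cv : ℕ → (Fin d → ℤ) := fun n i => (G n).coeff i with hcv
  have hsumC : ∀ n (z : ℂ), aeval z (G n) = ∑ i : Fin d, ((cv n i : ℂ)) * z ^ (i:ℕ) := by
    intro n z
    rw [Polynomial.aeval_eq_sum_range' (hdeg n) z, ← Fin.sum_univ_eq_sum_range]
    simp [hcv, zsmul_eq_mul]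
  have hcvK : ∀ n i, |(cv n i : ℝ)| ≤ K * C := by
    intro n i
    have h := hK C hC0 (fun i => (cv n i : ℂ))
      (fun j => by rw [← hsumC n (r j)]; exact hCroot (r j) (hrroot j) n) i
    rwa [Complex.norm_intCast] at h
  -- conclude
  have hsumR : ∀ n, aeval β (G n) = ∑ i : Fin d, ((cv n i : ℝ)) * β ^ (i:ℕ) := by
    intro n
    rw [Polynomial.aeval_eq_sum_range' (hdeg n) β, ← Fin.sum_univ_eq_sum_range]
    simp [hcv, zsmul_eq_mul]
  have hq0 : (q:ℝ) ≠ 0 := by exact_mod_cast ne_of_gt hq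
  apply Set.Finite.subset (Set.Finite.image
    (fun v : Fin d → ℤ => (∑ i : Fin d, (v i : ℝ) * β ^ (i:ℕ)) / q)
    (bounded_int_vec_finite (K * C)))
  rintro y ⟨n, rfl⟩
  refine ⟨cv n, fun i => hcvK n i, ?_⟩
  show (∑ i : Fin d, ((cv n i : ℝ)) * β ^ (i:ℕ)) / q = xs n
  rw [← hsumR n, hA n]
  exact mul_div_cancel_left₀ _ hq0


/-- Schmidt's theorem, part (2): for a Pisot number `β`, a point
`x ∈ [0,1)` has a finite forward orbit under the `β`-transformation if and
only if `x ∈ ℚ(β)`. -/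
theorem stmt_11
    (β : ℝ) (hβ : 1 < β) (hβint : IsIntegral ℤ β)
    (hpisot : ∀ z : ℂ, Polynomial.aeval z (minpoly ℚ β) = 0 → z ≠ (β : ℂ) → ‖z‖ < 1)
    (T : ℝ → ℝ) (hT : ∀ x, T x = β * x - ⌊β * x⌋)
    (x : ℝ) (hx : x ∈ Set.Ico (0 : ℝ) 1) :
    {y : ℝ | ∃ n : ℕ, T^[n] x = y}.Finite ↔ x ∈ Subfield.closure ({β} : Set ℝ) := by
  constructor
  · exact easy_dir β hβ T hT x
  · intro hmem
    obtain ⟨g₀, q, hq, hgx⟩ := rep_int β hβint x hmem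
    exact hard_dir β hβ hβint hpisot T hT x hx g₀ q hq hgx
end

section
/- Let β be a Pisot number with 1 < β < 2. Then ℚ(β) = Per_{{−1,0,1}}(β): every x ∈ ℚ(β) admits an eventually periodic (β, {−1,0,1})-representation x = Σ_{k≥−L} a_k β^{−k} with digits a_k ∈ {−1,0,1}, and conversely every complex number admitting such a representation lies in ℚ(β). -/
open Finset in
theorem aux_expansion (β : ℝ) (hβ1 : 1 < β) (hβ2 : β < 2)
    (y : ℝ) (hy0 : 0 ≤ y) (hy1 : y < 1) :
    ∃ d : ℕ → ℤ, (∀ k, d k = 0 ∨ d k = 1) ∧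
      (∀ m n : ℕ, (fun z : ℝ => Int.fract (β * z))^[m] y = (fun z => Int.fract (β * z))^[n] y →
        ∀ j, d (m + j) = d (n + j)) ∧
      HasSum (fun k : ℕ => (d k : ℝ) * β ^ (-(k : ℤ) - 1)) y := by
  have hβ0 : (0:ℝ) < β := by linarith
  have hβne : β ≠ 0 := ne_of_gt hβ0
  set T : ℝ → ℝ := fun z => Int.fract (β * z) with hT
  set u : ℕ → ℝ := fun n => T^[n] y with hu
  have hu0 : u 0 = y := rfl
  have husucc : ∀ n, u (n + 1) = Int.fract (β * u n) := by
    intro n; simp [hu, Function.iterate_succ_apply']; rfl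
  set d : ℕ → ℤ := fun n => ⌊β * u n⌋ with hd
  have hubd : ∀ n, 0 ≤ u n ∧ u n < 1 := by
    intro n; induction n with
    | zero => exact ⟨hy0, hy1⟩
    | succ n ih => rw [husucc]; exact ⟨Int.fract_nonneg _, Int.fract_lt_one _⟩
  have hdbd : ∀ n, d n = 0 ∨ d n = 1 := by
    intro n
    have h1 : 0 ≤ β * u n := mul_nonneg hβ0.le (hubd n).1
    have h2 : β * u n < 2 := by
      calc β * u n < β * 1 := by
            rcases lt_or_eq_of_le (hubd n).1 with h | h
            · exact mul_lt_mul_of_pos_left (hubd n).2 hβ0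
            · simpa [← h] using hβ0
          _ < 2 := by linarith
    have h3 : 0 ≤ d n := Int.floor_nonneg.2 h1
    have h4 : d n < 2 := Int.floor_lt.2 (by exact_mod_cast h2)
    omega
  have hrec : ∀ n, u (n + 1) = β * u n - d n := by
    intro n; rw [husucc]; rfl
  have hpartial : ∀ n, y = (∑ k ∈ range n, (d k : ℝ) * β ^ (-(k:ℤ) - 1)) + u n * β ^ (-(n:ℤ)) := by
    intro n; induction n with
    | zero => simp [hu0]
    | succ n ih =>
      rw [Finset.sum_range_succ, ih]
      push_cast
      rw [show -((n:ℤ)+1) = -(n:ℤ) - 1 by ring]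
      have e1 : β ^ (-(n:ℤ)) = β ^ (-(n:ℤ) - 1) * β := by
        rw [← zpow_add_one₀ hβne]; norm_num
      rw [hrec n, e1]; ring
  have hterm_nonneg : ∀ k, 0 ≤ (d k : ℝ) * β ^ (-(k:ℤ) - 1) := by
    intro k
    have : (0:ℝ) ≤ d k := by rcases hdbd k with h | h <;> simp [h]
    exact mul_nonneg this (zpow_nonneg hβ0.le _)
  have hterm_le : ∀ k, (d k : ℝ) * β ^ (-(k:ℤ) - 1) ≤ (β⁻¹) ^ k := by
    intro k
    have h1 : (d k : ℝ) ≤ 1 := by rcases hdbd k with h | h <;> simp [h]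
    calc (d k : ℝ) * β ^ (-(k:ℤ) - 1) ≤ 1 * β ^ (-(k:ℤ) - 1) :=
          mul_le_mul_of_nonneg_right h1 (zpow_nonneg hβ0.le _)
      _ = β ^ (-(k:ℤ) - 1) := one_mul _
      _ ≤ β ^ (-(k:ℤ)) := zpow_le_zpow_right₀ hβ1.le (by omega)
      _ = (β⁻¹) ^ k := by rw [zpow_neg, ← inv_zpow, zpow_natCast]
  have hinvlt : β⁻¹ < 1 := inv_lt_one_of_one_lt₀ hβ1
  have hinvnn : (0:ℝ) ≤ β⁻¹ := inv_nonneg.2 hβ0.le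
  have hsummable : Summable (fun k : ℕ => (d k : ℝ) * β ^ (-(k:ℤ) - 1)) :=
    Summable.of_nonneg_of_le hterm_nonneg hterm_le (summable_geometric_of_lt_one hinvnn hinvlt)
  have htail0 : Filter.Tendsto (fun n : ℕ => u n * β ^ (-(n:ℤ))) Filter.atTop (nhds 0) := by
    have hball : ∀ n : ℕ, |u n * β ^ (-(n:ℤ))| ≤ (β⁻¹) ^ n := by
      intro n
      rw [abs_of_nonneg (mul_nonneg (hubd n).1 (zpow_nonneg hβ0.le _))]
      calc u n * β ^ (-(n:ℤ)) ≤ 1 * β ^ (-(n:ℤ)) :=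
            mul_le_mul_of_nonneg_right (hubd n).2.le (zpow_nonneg hβ0.le _)
        _ = (β⁻¹) ^ n := by rw [one_mul, zpow_neg, ← inv_zpow, zpow_natCast]
    have hg : Filter.Tendsto (fun n : ℕ => (β⁻¹:ℝ) ^ n) Filter.atTop (nhds 0) :=
      tendsto_pow_atTop_nhds_zero_of_lt_one hinvnn hinvlt
    exact squeeze_zero_norm hball hg
  have hhassum : HasSum (fun k : ℕ => (d k : ℝ) * β ^ (-(k:ℤ) - 1)) y := by
    rw [hsummable.hasSum_iff_tendsto_nat]
    have : (fun n : ℕ => ∑ i ∈ range n, (d i : ℝ) * β ^ (-(i:ℤ) - 1))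
        = fun n => y - u n * β ^ (-(n:ℤ)) := by
      funext n; have := hpartial n; linarith
    rw [this]
    simpa using Filter.Tendsto.sub (tendsto_const_nhds (x := y)) htail0
  refine ⟨d, hdbd, ?_, hhassum⟩
  intro m n hmn j
  have hkey : ∀ j, u (m + j) = u (n + j) := by
    intro j; induction j with
    | zero => simpa [hu] using hmn
    | succ j ih => rw [show m + (j+1) = (m+j)+1 by ring, show n + (j+1) = (n+j)+1 by ring,
        husucc, husucc, ih]
  simp [hd, hkey j]

set_option maxHeartbeats 1000000 in

open Finset Polynomial in
theorem aux_orbit (β : ℝ) (hβ1 : 1 < β) (hβ2 : β < 2) (hβint : IsIntegral ℤ β)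
    (hpisot : ∀ z : ℂ, Polynomial.aeval z (minpoly ℚ β) = 0 → z ≠ (β : ℂ) → ‖z‖ < 1)
    (y : ℝ) (hy0 : 0 ≤ y) (hy1 : y < 1)
    (hyK : y ∈ IntermediateField.adjoin ℚ ({β} : Set ℝ)) :
    ∃ m n : ℕ, m < n ∧
      (fun z : ℝ => Int.fract (β * z))^[m] y = (fun z : ℝ => Int.fract (β * z))^[n] y := by
  have hβ0 : (0:ℝ) < β := lt_trans one_pos hβ1
  have hβQ : IsIntegral ℚ β := hβint.tower_top
  set K : IntermediateField ℚ ℝ := IntermediateField.adjoin ℚ ({β} : Set ℝ) with hK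
  haveI : FiniteDimensional ℚ K := IntermediateField.adjoin.finiteDimensional hβQ
  haveI : NumberField K := ⟨⟩
  -- the sequence
  set T : ℝ → ℝ := fun z => Int.fract (β * z) with hT
  set u : ℕ → ℝ := fun n => T^[n] y with hu
  have hu0 : u 0 = y := rfl
  have husucc : ∀ n, u (n + 1) = Int.fract (β * u n) := by
    intro n; simp [hu, Function.iterate_succ_apply']; rfl
  set d : ℕ → ℤ := fun n => ⌊β * u n⌋ with hd
  have hubd : ∀ n, 0 ≤ u n ∧ u n < 1 := by
    intro n; induction n with
    | zero => exact ⟨hy0, hy1⟩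
    | succ n ih => rw [husucc]; exact ⟨Int.fract_nonneg _, Int.fract_lt_one _⟩
  have hdbd : ∀ n, 0 ≤ d n ∧ d n ≤ 1 := by
    intro n
    have h1 : 0 ≤ β * u n := mul_nonneg hβ0.le (hubd n).1
    have h2 : β * u n < 2 := by
      have := mul_le_mul_of_nonneg_left (hubd n).2.le hβ0.le
      nlinarith [(hubd n).2, (hubd n).1]
    have h4 : d n < 2 := Int.floor_lt.2 (by exact_mod_cast h2)
    exact ⟨Int.floor_nonneg.2 h1, by omega⟩
  have hrec : ∀ n, u (n + 1) = β * u n - d n := by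
    intro n; rw [husucc]; rfl
  -- membership in K
  have hβK : β ∈ K := IntermediateField.mem_adjoin_simple_self ℚ β
  have hmemK : ∀ n, u n ∈ K := by
    intro n; induction n with
    | zero => exact hyK
    | succ n ih =>
      rw [hrec n]
      exact sub_mem (mul_mem hβK ih) (intCast_mem K _)
  -- power basis and denominator
  set pb : PowerBasis ℚ K := IntermediateField.adjoin.powerBasis hβQ with hpb
  have hgenR : (algebraMap K ℝ) pb.gen = β := IntermediateField.AdjoinSimple.algebraMap_gen ℚ β
  have hgenint : IsIntegral ℤ pb.gen := by
    rw [← isIntegral_algebraMap_iff (algebraMap K ℝ).injective, hgenR]; exact hβint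
  set yK : K := ⟨y, hyK⟩ with hyKdef
  set c : Fin pb.dim → ℚ := fun i => pb.basis.repr yK i with hc
  set q : ℕ := ∏ i, (c i).den with hq
  have hqpos : 0 < q := Finset.prod_pos (fun i _ => (c i).den_pos)
  have hint : ∀ i, ∃ m : ℤ, ((q:ℚ) * c i) = (m:ℚ) := by
    intro i
    obtain ⟨k, hk⟩ := Finset.dvd_prod_of_mem (fun i => (c i).den) (Finset.mem_univ i)
    refine ⟨(c i).num * k, ?_⟩
    have hden : ((c i).den : ℚ) ≠ 0 := by exact_mod_cast (c i).den_ne_zero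
    have h6 : ((c i).num : ℚ) = (c i) * ((c i).den:ℚ) := by
      have h7 := congrArg (fun t : ℚ => t * ((c i).den:ℚ)) (Rat.num_div_den (c i))
      simpa [div_mul_cancel₀, hden] using h7
    rw [← hq] at hk; rw [hk]
    push_cast
    linear_combination -(k:ℚ) * h6
  -- the subring ℤ[gen]
  set R0 : Subalgebra ℤ K := Algebra.adjoin ℤ ({pb.gen} : Set K) with hR0
  have hgenmem : pb.gen ∈ R0 := Algebra.subset_adjoin rfl
  have hR0int : ∀ x ∈ R0, IsIntegral ℤ x := by
    intro x hx
    have hle : R0 ≤ integralClosure ℤ K :=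
      Algebra.adjoin_le (Set.singleton_subset_iff.2 hgenint)
    exact hle hx
  have hgencoe : ((pb.gen : K) : ℝ) = β := hgenR
  -- z sequence
  set z : ℕ → K := fun n => (q : K) * ⟨u n, hmemK n⟩ with hz
  have hzcoe : ∀ n, ((z n : K) : ℝ) = q * u n := by intro n; push_cast [hz]; rfl
  have hz0mem : z 0 ∈ R0 := by
    have hrepr : yK = ∑ i, c i • pb.gen ^ (i : ℕ) := by
      have h8 := pb.basis.sum_repr yK
      rw [← h8]
      refine Finset.sum_congr rfl (fun i _ => ?_)
      rw [pb.coe_basis]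
    have hzy : z 0 = (q : K) * yK := rfl
    rw [hzy, hrepr, Finset.mul_sum]
    refine Subalgebra.sum_mem _ (fun i _ => ?_)
    obtain ⟨m, hm⟩ := hint i
    have hsw : ((q : ℚ) * c i) • pb.gen ^ (i : ℕ) = (q : K) * (c i • pb.gen ^ (i : ℕ)) := by
      rw [mul_smul, Algebra.smul_def, map_natCast]
    rw [← hsw, hm, Algebra.smul_def]
    have : algebraMap ℚ K ((m : ℤ) : ℚ) = (m : K) := by push_cast; simp
    rw [this]
    exact mul_mem (intCast_mem R0 m) (pow_mem hgenmem i)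
  have hzrec : ∀ n, z (n + 1) = pb.gen * z n - ((q * d n : ℤ) : K) := by
    intro n
    apply Subtype.ext
    show ((z (n+1) : K) : ℝ) = _
    rw [hzcoe, hrec n]
    push_cast
    rw [hgencoe, hzcoe]
    ring
  have hzmem : ∀ n, z n ∈ R0 := by
    intro n; induction n with
    | zero => exact hz0mem
    | succ n ih =>
      rw [hzrec n]
      exact sub_mem (mul_mem hgenmem ih) (intCast_mem R0 _)
  -- embeddings
  haveI : Fintype (K →+* ℂ) := inferInstance
  set ι : K →+* ℂ := Complex.ofRealHom.comp (algebraMap K ℝ) with hι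
  have hιapp : ∀ x : K, ι x = ((x : ℝ) : ℂ) := fun x => rfl
  have hminpoly : minpoly ℚ pb.gen = minpoly ℚ β := by
    have := minpoly.algebraMap_eq (A := ℚ) (algebraMap K ℝ).injective pb.gen
    rw [hgenR] at this
    exact this.symm
  have hroot : ∀ φ : K →+* ℂ, Polynomial.aeval (φ pb.gen) (minpoly ℚ β) = 0 := by
    intro φ
    set φA : K →ₐ[ℚ] ℂ := RingHom.equivRatAlgHom _ _ φ with hφA
    have happ : φA pb.gen = φ pb.gen := rfl
    have h1 : Polynomial.aeval (φA pb.gen) (minpoly ℚ pb.gen) = 0 := by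
      rw [Polynomial.aeval_algHom_apply, minpoly.aeval, map_zero]
    rwa [← hminpoly, ← happ]
  have htop : Algebra.adjoin ℚ ({pb.gen} : Set K) = ⊤ := pb.adjoin_gen_eq_top
  have huniq : ∀ φ : K →+* ℂ, φ pb.gen = ((β : ℝ) : ℂ) → φ = ι := by
    intro φ hw
    have hιgen : ι pb.gen = ((β : ℝ) : ℂ) := by rw [hιapp, hgencoe]
    ext x
    have hx : x ∈ Algebra.adjoin ℚ ({pb.gen} : Set K) := htop ▸ Algebra.mem_top
    induction hx using Algebra.adjoin_induction with
    | mem t ht =>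
      rw [Set.mem_singleton_iff] at ht
      rw [ht, hw, hιgen]
    | algebraMap r =>
      have : algebraMap ℚ K r = (r : K) := rfl
      rw [this, map_ratCast, map_ratCast]
    | add a b _ _ ha hb => rw [map_add, map_add, ha, hb]
    | mul a b _ _ ha hb => rw [map_mul, map_mul, ha, hb]
  -- bounds
  set C : (K →+* ℂ) → ℝ := fun φ => max (max ‖φ (z 0)‖ q) ((q : ℝ) / (1 - ‖φ pb.gen‖)) with hC
  have hne : (Finset.univ : Finset (K →+* ℂ)).Nonempty := ⟨ι, Finset.mem_univ ι⟩
  set B : ℝ := Finset.univ.sup' hne C with hB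
  have hCB : ∀ φ, C φ ≤ B := fun φ => Finset.le_sup' C (Finset.mem_univ φ)
  have hqC : ∀ φ, (q : ℝ) ≤ C φ := fun φ => le_trans (le_max_right _ _) (le_max_left _ _)
  have hbnd : ∀ (φ : K →+* ℂ) (n : ℕ), ‖φ (z n)‖ ≤ C φ := by
    intro φ
    rcases eq_or_ne (φ pb.gen) ((β : ℝ) : ℂ) with hw | hw
    · have hφι : φ = ι := huniq φ hw
      subst hφι
      intro n
      rw [hιapp, hzcoe]
      have h1 : ‖(((q : ℝ) * u n : ℝ) : ℂ)‖ = |(q : ℝ) * u n| := by rw [Complex.norm_real, Real.norm_eq_abs]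
      rw [h1, abs_of_nonneg (mul_nonneg (Nat.cast_nonneg q) (hubd n).1)]
      calc (q : ℝ) * u n ≤ (q : ℝ) * 1 :=
            mul_le_mul_of_nonneg_left (hubd n).2.le (Nat.cast_nonneg q)
        _ = q := mul_one _
        _ ≤ C ι := hqC ι
    · have hwlt : ‖φ pb.gen‖ < 1 := hpisot _ (hroot φ) hw
      have h1w : 0 < 1 - ‖φ pb.gen‖ := by linarith
      have hqle : (q : ℝ) ≤ (1 - ‖φ pb.gen‖) * C φ := by
        have h2 : (q : ℝ) / (1 - ‖φ pb.gen‖) ≤ C φ := le_max_right _ _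
        rw [div_le_iff₀ h1w] at h2
        linarith
      intro n
      induction n with
      | zero => exact le_trans (le_max_left _ _) (le_max_left _ _)
      | succ n ih =>
        have hdn : |(q * d n : ℤ)| ≤ (q : ℤ) := by
          have := hdbd n
          have hq0 : (0:ℤ) ≤ q := Int.ofNat_nonneg q
          rw [abs_of_nonneg (by nlinarith : (0:ℤ) ≤ q * d n)]
          nlinarith
        calc ‖φ (z (n+1))‖ = ‖φ pb.gen * φ (z n) - ((q * d n : ℤ) : ℂ)‖ := by
              rw [hzrec n, map_sub, map_mul, map_intCast]
          _ ≤ ‖φ pb.gen * φ (z n)‖ + ‖((q * d n : ℤ) : ℂ)‖ := norm_sub_le _ _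
          _ = ‖φ pb.gen‖ * ‖φ (z n)‖ + |((q * d n : ℤ) : ℝ)| := by
              rw [norm_mul]
              congr 1
              rw [show ((q * d n : ℤ) : ℂ) = (((q * d n : ℤ) : ℝ) : ℂ) by push_cast; ring]
              rw [Complex.norm_real, Real.norm_eq_abs]
          _ ≤ ‖φ pb.gen‖ * C φ + (q : ℝ) := by
              have h3 : |((q * d n : ℤ) : ℝ)| ≤ (q : ℝ) := by exact_mod_cast hdn
              exact add_le_add (mul_le_mul_of_nonneg_left ih (norm_nonneg _)) h3
          _ ≤ ‖φ pb.gen‖ * C φ + (1 - ‖φ pb.gen‖) * C φ := add_le_add_right hqle _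
          _ = C φ := by ring
  -- finiteness and pigeonhole
  have hSfin : {x : K | IsIntegral ℤ x ∧ ∀ φ : K →+* ℂ, ‖φ x‖ ≤ B}.Finite :=
    NumberField.Embeddings.finite_of_norm_le K ℂ B
  have hmaps : Set.MapsTo z (Set.univ : Set ℕ)
      {x : K | IsIntegral ℤ x ∧ ∀ φ : K →+* ℂ, ‖φ x‖ ≤ B} := by
    intro n _
    exact ⟨hR0int _ (hzmem n), fun φ => le_trans (hbnd φ n) (hCB φ)⟩
  obtain ⟨m, -, n, -, hmn, heq⟩ :=
    Set.infinite_univ.exists_ne_map_eq_of_mapsTo hmaps hSfin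
  have hq0 : (q : ℝ) ≠ 0 := by exact_mod_cast hqpos.ne'
  have humn : u m = u n := by
    have := congrArg (fun t : K => (t : ℝ)) heq
    simp only [hzcoe] at this
    exact mul_left_cancel₀ hq0 this
  rcases lt_or_gt_of_ne hmn with h | h
  · exact ⟨m, n, h, humn⟩
  · exact ⟨n, m, h, humn.symm⟩

open Finset in
/-- For a Pisot number `1 < β < 2`, the field `ℚ(β)` coincides with the set
of complex numbers admitting an eventually periodic
`(β, {-1,0,1})`-representation. -/
theorem stmt_12
    (β : ℝ) (hβ1 : 1 < β) (hβ2 : β < 2) (hβint : IsIntegral ℤ β)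
    (hpisot : ∀ z : ℂ, Polynomial.aeval z (minpoly ℚ β) = 0 → z ≠ (β : ℂ) → ‖z‖ < 1) :
    ∀ x : ℂ,
      x ∈ Subfield.closure ({(β : ℂ)} : Set ℂ) ↔
      ∃ (L : ℤ) (a : ℕ → ℤ),
        (∀ k, a k = -1 ∨ a k = 0 ∨ a k = 1) ∧
        (∃ N p : ℕ, 1 ≤ p ∧ ∀ k, N ≤ k → a (k + p) = a k) ∧
        x = ∑' k : ℕ, (a k : ℂ) * (β : ℂ) ^ (L - (k : ℤ)) := by
  intro x
  have hβ0 : (0:ℝ) < β := lt_trans one_pos hβ1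
  have hβne : β ≠ 0 := ne_of_gt hβ0
  have hβcne : ((β:ℝ) : ℂ) ≠ 0 := by exact_mod_cast hβne
  constructor
  · -- hard direction
    intro hx
    have himg : Subfield.closure ({(β : ℂ)} : Set ℂ)
        = (Subfield.closure ({β} : Set ℝ)).map Complex.ofRealHom := by
      rw [RingHom.map_field_closure]
      congr 1
      simp
    rw [himg, Subfield.mem_map] at hx
    obtain ⟨y, hy, rfl⟩ := hx
    have hβK : β ∈ IntermediateField.adjoin ℚ ({β} : Set ℝ) :=
      IntermediateField.mem_adjoin_simple_self ℚ β
    have hyK : y ∈ IntermediateField.adjoin ℚ ({β} : Set ℝ) := by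
      have hle : Subfield.closure ({β} : Set ℝ) ≤
          (IntermediateField.adjoin ℚ ({β} : Set ℝ)).toSubfield :=
        Subfield.closure_le.2 (Set.singleton_subset_iff.2 hβK)
      exact hle hy
    rcases eq_or_ne y 0 with rfl | hyne
    · refine ⟨0, fun _ => 0, fun k => Or.inr (Or.inl rfl), ⟨0, 1, le_refl 1, fun k _ => rfl⟩, ?_⟩
      simp
    · have hw0 : 0 < |y| := abs_pos.2 hyne
      obtain ⟨n, hn⟩ := pow_unbounded_of_one_lt |y| hβ1
      set y0 : ℝ := |y| * β ^ (-(n:ℤ)) with hy0def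
      have hy00 : 0 ≤ y0 := mul_nonneg (abs_nonneg y) (zpow_nonneg hβ0.le _)
      have hy01 : y0 < 1 := by
        have h2 := (div_lt_one (pow_pos hβ0 n)).2 hn
        rw [hy0def, zpow_neg, zpow_natCast, ← div_eq_mul_inv]
        exact h2
      have hy0K : y0 ∈ IntermediateField.adjoin ℚ ({β} : Set ℝ) := by
        refine mul_mem ?_ (zpow_mem hβK _)
        rcases abs_choice y with h | h <;> rw [h]
        · exact hyK
        · exact neg_mem hyK
      obtain ⟨d, hdbd, hDsame, hhassum⟩ := aux_expansion β hβ1 hβ2 y0 hy00 hy01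
      obtain ⟨m, n', hmn', heq⟩ := aux_orbit β hβ1 hβ2 hβint hpisot y0 hy00 hy01 hy0K
      have hper : ∀ k, m ≤ k → d (k + (n' - m)) = d k := by
        intro k hk
        obtain ⟨j, rfl⟩ := Nat.exists_eq_add_of_le hk
        have h1 := hDsame m n' heq j
        rw [show m + j + (n' - m) = n' + j by omega, ← h1]
      set L : ℤ := (n : ℤ) - 1 with hL
      have hterm : ∀ k : ℕ, β ^ (n:ℤ) * ((d k : ℝ) * β ^ (-(k:ℤ) - 1))
          = (d k : ℝ) * β ^ (L - (k:ℤ)) := by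
        intro k
        rw [show L - (k:ℤ) = (n:ℤ) + (-(k:ℤ) - 1) by rw [hL]; ring, zpow_add₀ hβne]
        ring
      have hys : β ^ (n:ℤ) * y0 = |y| := by
        rw [hy0def, zpow_neg]
        field_simp
      have hsum2 : HasSum (fun k : ℕ => (d k : ℝ) * β ^ (L - (k:ℤ))) |y| := by
        have h3 := hhassum.mul_left (β ^ (n:ℤ))
        simp only [hterm, hys] at h3
        exact h3
      rcases le_or_gt 0 y with hge | hlt
      · rw [abs_of_nonneg hge] at hsum2
        refine ⟨L, d, fun k => by rcases hdbd k with h | h <;> simp [h],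
          ⟨m, n' - m, by omega, hper⟩, ?_⟩
        rw [show Complex.ofRealHom y = ((y:ℝ):ℂ) from rfl, ← hsum2.tsum_eq, Complex.ofReal_tsum]
        exact tsum_congr fun k => by push_cast [Complex.ofReal_zpow]; ring
      · rw [abs_of_neg hlt] at hsum2
        have hsum3 := hsum2.neg
        rw [neg_neg] at hsum3
        refine ⟨L, fun k => -(d k), fun k => by rcases hdbd k with h | h <;> simp [h],
          ⟨m, n' - m, by omega, fun k hk => by
            show -(d (k + (n' - m))) = -(d k)
            rw [hper k hk]⟩, ?_⟩
        rw [show Complex.ofRealHom y = ((y:ℝ):ℂ) from rfl, ← hsum3.tsum_eq, Complex.ofReal_tsum]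
        exact tsum_congr fun k => by push_cast [Complex.ofReal_zpow]; ring
  · -- easy direction
    rintro ⟨L, a, ha, ⟨N, p, hp, hper⟩, hx⟩
    haveI : NeZero p := ⟨by omega⟩
    have hβcmem : ((β:ℝ):ℂ) ∈ Subfield.closure ({(β : ℂ)} : Set ℂ) :=
      Subfield.subset_closure (Set.mem_singleton _)
    set f : ℕ → ℂ := fun k => (a k : ℂ) * ((β:ℝ):ℂ) ^ (L - (k:ℤ)) with hf
    have hfmem : ∀ k, f k ∈ Subfield.closure ({(β : ℂ)} : Set ℂ) := fun k =>
      mul_mem (intCast_mem _ _) (zpow_mem hβcmem _)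
    have hanorm : ∀ k, |(a k : ℝ)| ≤ 1 := by
      intro k; rcases ha k with h | h | h <;> simp [h]
    have hnormβ : ‖((β:ℝ):ℂ)‖ = β := by
      rw [Complex.norm_real, Real.norm_eq_abs, abs_of_pos hβ0]
    have hbound : ∀ k : ℕ, ‖f k‖ ≤ β ^ L * (β⁻¹) ^ k := by
      intro k
      rw [hf]
      simp only []
      rw [norm_mul, norm_zpow, hnormβ]
      have h1 : ‖((a k : ℤ) : ℂ)‖ ≤ 1 := by
        rw [show ((a k : ℤ) : ℂ) = (((a k : ℤ) : ℝ) : ℂ) by push_cast; ring, Complex.norm_real, Real.norm_eq_abs]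
        exact_mod_cast hanorm k
      have h2 : β ^ (L - (k:ℤ)) = β ^ L * (β⁻¹) ^ k := by
        rw [zpow_sub₀ hβne, div_eq_mul_inv, ← inv_zpow, zpow_natCast]
      calc ‖((a k : ℤ) : ℂ)‖ * β ^ (L - (k:ℤ)) ≤ 1 * β ^ (L - (k:ℤ)) :=
            mul_le_mul_of_nonneg_right h1 (zpow_nonneg hβ0.le _)
        _ = β ^ L * (β⁻¹) ^ k := by rw [one_mul, h2]
    have hinv1 : β⁻¹ < 1 := inv_lt_one_of_one_lt₀ hβ1
    have hsummable : Summable f :=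
      Summable.of_norm_bounded
        ((summable_geometric_of_lt_one (inv_nonneg.2 hβ0.le) hinv1).mul_left (β ^ L)) hbound
    set ξ : ℂ := ((β:ℝ):ℂ) ^ (-(p:ℤ)) with hξ
    have hξnorm : ‖ξ‖ < 1 := by
      rw [hξ, norm_zpow, hnormβ, zpow_neg, zpow_natCast, ← inv_pow]
      exact pow_lt_one₀ (inv_nonneg.2 hβ0.le) hinv1 (by omega)
    have hgrec : ∀ k : ℕ, f ((k + p) + N) = ξ * f (k + N) := by
      intro k
      rw [hf]
      simp only []
      have ha1 : a (k + p + N) = a (k + N) := by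
        rw [show k + p + N = (k + N) + p by ring]
        exact hper (k + N) (by omega)
      rw [ha1, hξ]
      rw [show L - ((k + p + N : ℕ) : ℤ) = (-(p:ℤ)) + (L - ((k + N : ℕ):ℤ)) by push_cast; ring,
        zpow_add₀ hβcne]
      ring
    have hgpow : ∀ (j i : ℕ), f ((j * p + i) + N) = ξ ^ j * f (i + N) := by
      intro j
      induction j with
      | zero => intro i; simp
      | succ j ih =>
        intro i
        rw [show (j + 1) * p + i = (j * p + i) + p by ring, hgrec (j * p + i), ih i, pow_succ]
        ring
    have hgsummable : Summable (fun k => f (k + N)) := by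
      rw [summable_nat_add_iff]
      exact hsummable
    have htail : ∑' k : ℕ, f (k + N)
        = (∑ i ∈ Finset.range p, f (i + N)) * (1 - ξ)⁻¹ := by
      have he := ((Nat.divModEquiv p).symm.tsum_eq (fun k => f (k + N))).symm
      rw [he]
      have heval : ∀ x : ℕ × Fin p, f (((Nat.divModEquiv p).symm x) + N)
          = ξ ^ x.1 * f ((x.2 : ℕ) + N) := by
        rintro ⟨j, i⟩
        exact hgpow j i
      rw [tsum_congr heval]
      have hsummprod : Summable (fun x : ℕ × Fin p => ξ ^ x.1 * f ((x.2 : ℕ) + N)) := by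
        have h5 := ((Nat.divModEquiv p).symm.summable_iff (f := fun k => f (k + N))).2 hgsummable
        refine h5.congr ?_
        rintro ⟨j, i⟩
        simpa using heval ⟨j, i⟩
      rw [Summable.tsum_prod' hsummprod (fun j => Summable.of_finite)]
      have hin : ∀ j : ℕ, ∑' i : Fin p, ξ ^ j * f ((i : ℕ) + N)
          = ξ ^ j * ∑ i ∈ Finset.range p, f (i + N) := by
        intro j
        rw [tsum_fintype, ← Finset.mul_sum]
        congr 1
        exact (Finset.sum_range fun i => f (i + N)).symm
      rw [tsum_congr hin, tsum_mul_right, tsum_geometric_of_norm_lt_one hξnorm]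
      ring
    rw [hx, ← Summable.sum_add_tsum_nat_add N hsummable]
    refine add_mem (sum_mem fun k _ => hfmem k) ?_
    rw [htail]
    exact mul_mem (sum_mem fun i _ => hfmem _)
      (inv_mem (sub_mem (one_mem _) (zpow_mem hβcmem _)))
end

section
/- Let n ≥ 2 and let G_n(x) = −1 + x + x^n. If n ≢ 5 (mod 6), then G_n is irreducible over ℚ. If n ≡ 5 (mod 6), then G_n factors as the product of the cyclotomic polynomial x² − x + 1 and the polynomial (−1 + x + x^n)/(x² − x + 1), which is irreducible over ℚ of degree n − 2 and nonreciprocal. -/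
open Polynomial

lemma selmerAux_common_root {n : ℕ} (hn : 1 ≤ n) (z : ℂ)
    (h1 : z ^ n + z - 1 = 0) (h2 : 1 + z ^ (n - 1) - z ^ n = 0) :
    z ^ 2 - z + 1 = 0 := by
  have h3 : z * z ^ (n - 1) = z ^ n := by
    rw [← pow_succ']
    congr 1
    omega
  linear_combination z * h2 - h3 + (z - 1) * h1

lemma selmerAux_no_common_root {n : ℕ} (hn : 2 ≤ n) (hn5 : n % 6 ≠ 5) (z : ℂ)
    (h1 : z ^ n + z - 1 = 0) (h2 : 1 + z ^ (n - 1) - z ^ n = 0) : False := by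
  have hC : z ^ 2 - z + 1 = 0 := selmerAux_common_root (by omega) z h1 h2
  have h6 : z ^ 6 = 1 := by linear_combination (z ^ 4 + z ^ 3 - z - 1) * hC
  have hm : z ^ (n % 6) = 1 - z := by
    have hsplit : z ^ (6 * (n / 6)) * z ^ (n % 6) = z ^ n := by
      rw [← pow_add]
      congr 1
      omega
    rw [pow_mul, h6, one_pow, one_mul] at hsplit
    rw [hsplit]
    linear_combination h1
  have h56 : n % 6 = 0 ∨ n % 6 = 1 ∨ n % 6 = 2 ∨ n % 6 = 3 ∨ n % 6 = 4 := by omega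
  rcases h56 with h | h | h | h | h <;> rw [h] at hm
  · exact one_ne_zero (α := ℂ) (by linear_combination hC - (z - 1) * hm)
  · exact one_ne_zero (α := ℂ) (by linear_combination (4/3 : ℂ) * hC - ((2*z-1)/3) * hm)
  · exact one_ne_zero (α := ℂ) (by linear_combination (1 + z/2) * hC - (z/2) * hm)
  · exact one_ne_zero (α := ℂ) (by linear_combination ((z^2+2*z+2)/3) * hC - ((z+1)/3) * hm)
  · exact one_ne_zero (α := ℂ) (by linear_combination (z^2+z) * hC - hm)

lemma selmerP_trinomial {n : ℕ} (hn : 2 ≤ n) :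
    (X ^ n + X - 1 : ℤ[X]) = trinomial 0 1 n (((-1 : ℤˣ) : ℤ)) ((1 : ℤˣ) : ℤ) ((1 : ℤˣ) : ℤ) := by
  simp only [trinomial, Units.val_one, Units.val_neg, C_1, C_neg]
  ring

lemma selmerP_isUnitTrinomial {n : ℕ} (hn : 2 ≤ n) : (X ^ n + X - 1 : ℤ[X]).IsUnitTrinomial :=
  ⟨0, 1, n, zero_lt_one, by omega, -1, 1, 1, selmerP_trinomial hn⟩

lemma selmerP_monic {n : ℕ} (hn : 2 ≤ n) : (X ^ n + X - 1 : ℤ[X]).Monic := by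
  rw [selmerP_trinomial hn]
  have := trinomial_monic (k := 0) (m := 1) (n := n) (u := ((-1 : ℤˣ) : ℤ)) (v := ((1 : ℤˣ) : ℤ))
    zero_lt_one (by omega)
  simpa using this

lemma selmerP_natDegree {n : ℕ} (hn : 2 ≤ n) : (X ^ n + X - 1 : ℤ[X]).natDegree = n := by
  rw [selmerP_trinomial hn]
  exact trinomial_natDegree zero_lt_one (by omega) one_ne_zero

lemma selmerP_mirror {n : ℕ} (hn : 2 ≤ n) :
    (X ^ n + X - 1 : ℤ[X]).mirror = 1 + X ^ (n - 1) - X ^ n := by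
  rw [selmerP_trinomial hn, trinomial_mirror zero_lt_one (by omega) (by simp) (by simp)]
  simp only [trinomial, Units.val_one, Units.val_neg, C_1, C_neg, add_zero]
  ring

lemma selmerKey_cases {p : ℤ[X]} (hp : p.IsUnitTrinomial) (q : ℤ[X])
    (hpq : p * p.mirror = q * q.mirror) :
    q = p ∨ q = -p ∨ q = p.mirror ∨ q = -p.mirror := by
  have hq : IsUnitTrinomial q := (isUnitTrinomial_iff'' hpq).mp hp
  obtain ⟨k, m, n, hkm, hmn, u, v, w, hp⟩ := hp
  obtain ⟨k', m', n', hkm', hmn', x, y, z, hq⟩ := hq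
  have hk : k = k' := by
    rw [← mul_right_inj' (show 2 ≠ 0 from two_ne_zero), ←
      trinomial_natTrailingDegree hkm hmn u.ne_zero, ← hp, ← natTrailingDegree_mul_mirror, hpq,
      natTrailingDegree_mul_mirror, hq, trinomial_natTrailingDegree hkm' hmn' x.ne_zero]
  have hn : n = n' := by
    rw [← mul_right_inj' (show 2 ≠ 0 from two_ne_zero), ← trinomial_natDegree hkm hmn w.ne_zero, ←
      hp, ← natDegree_mul_mirror, hpq, natDegree_mul_mirror, hq,
      trinomial_natDegree hkm' hmn' z.ne_zero]
  subst hk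
  subst hn
  rcases eq_or_eq_neg_of_sq_eq_sq (y : ℤ) (v : ℤ)
      ((Int.isUnit_sq y.isUnit).trans (Int.isUnit_sq v.isUnit).symm) with
    (h1 | h1)
  · rw [h1] at hq
    rcases Polynomial.IsUnitTrinomial.irreducible_aux3 hkm hmn hkm' hmn' u v w x z hp hq hpq with
      (h2 | h2)
    · exact Or.inl h2
    · exact Or.inr (Or.inr (Or.inl h2))
  · rw [h1] at hq
    rw [trinomial_def] at hp
    rw [← neg_inj, neg_add, neg_add, ← neg_mul, ← neg_mul, ← neg_mul, ← C_neg, ← C_neg, ← C_neg]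
      at hp
    rw [← neg_mul_neg, ← mirror_neg] at hpq
    rcases Polynomial.IsUnitTrinomial.irreducible_aux3 hkm hmn hkm' hmn' (-u) (-v) (-w) x z hp hq
      hpq with (rfl | rfl)
    · exact Or.inr (Or.inl rfl)
    · exact Or.inr (Or.inr (Or.inr p.mirror_neg))

lemma selmerC_monic : (X ^ 2 - X + 1 : ℚ[X]).Monic := by
  have : (X ^ 2 - X + 1 : ℚ[X]) = X ^ 2 + (-X + 1) := by ring
  rw [this]
  apply monic_X_pow_add
  apply lt_of_le_of_lt (degree_add_le _ _)
  simp only [degree_neg, degree_X, degree_one]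
  norm_num

lemma selmerC_natDegree : (X ^ 2 - X + 1 : ℚ[X]).natDegree = 2 := by
  compute_degree!

lemma selmerC_irred : Irreducible (X ^ 2 - X + 1 : ℚ[X]) := by
  rw [irreducible_iff_roots_eq_zero_of_degree_le_three (by rw [selmerC_natDegree])
    (by rw [selmerC_natDegree]; norm_num)]
  rw [Multiset.eq_zero_iff_forall_notMem]
  intro r hr
  rw [mem_roots selmerC_monic.ne_zero, IsRoot] at hr
  simp only [eval_add, eval_sub, eval_pow, eval_X, eval_one] at hr
  nlinarith [hr]

lemma selmerPQ_ne_zero {n : ℕ} (hn : 2 ≤ n) : (X ^ n + X - 1 : ℚ[X]) ≠ 0 := by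
  intro h
  have := congrArg (eval 0) h
  simp only [eval_add, eval_sub, eval_pow, eval_X, eval_one, eval_zero] at this
  rw [zero_pow (by omega : n ≠ 0)] at this
  norm_num at this

lemma selmer_common_dvd {n : ℕ} (hn : 2 ≤ n) (d : ℚ[X])
    (hd1 : d ∣ (X ^ n + X - 1)) (hd2 : d ∣ (1 + X ^ (n - 1) - X ^ n)) :
    IsUnit d ∨ (X ^ 2 - X + 1 : ℚ[X]) ∣ d := by
  by_cases hu : IsUnit d
  · exact Or.inl hu
  right
  have hd0 : d ≠ 0 := by
    rintro rfl
    exact selmerPQ_ne_zero hn (zero_dvd_iff.mp hd1)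
  obtain ⟨w, hwirr, hwd⟩ := WfDvdMonoid.exists_irreducible_factor hu hd0
  have hwq1 : w ∣ (X ^ n + X - 1 : ℚ[X]) := hwd.trans hd1
  have hwq2 : w ∣ (1 + X ^ (n - 1) - X ^ n : ℚ[X]) := hwd.trans hd2
  -- find a complex root of w
  have hdeg : 0 < (w.map (algebraMap ℚ ℂ)).degree := by
    rw [degree_map]
    exact natDegree_pos_iff_degree_pos.mp hwirr.natDegree_pos
  obtain ⟨z, hz⟩ := Complex.exists_root hdeg
  have hzw : aeval z w = 0 := by
    rwa [IsRoot, eval_map, ← aeval_def] at hz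
  have hz1 : z ^ n + z - 1 = 0 := by
    have h0 : aeval z (X ^ n + X - 1 : ℚ[X]) = 0 := by
      obtain ⟨t, ht⟩ := hwq1
      rw [ht, map_mul, hzw, zero_mul]
    simpa using h0
  have hz2 : 1 + z ^ (n - 1) - z ^ n = 0 := by
    have h0 : aeval z (1 + X ^ (n - 1) - X ^ n : ℚ[X]) = 0 := by
      obtain ⟨t, ht⟩ := hwq2
      rw [ht, map_mul, hzw, zero_mul]
    simpa using h0
  have hC : z ^ 2 - z + 1 = 0 := selmerAux_common_root (by omega) z hz1 hz2
  have hzc : aeval z (X ^ 2 - X + 1 : ℚ[X]) = 0 := by simpa using hC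
  have hint : IsIntegral ℚ z := ⟨X ^ 2 - X + 1, selmerC_monic, by
    simpa [eval₂_eq_eval_map] using hzc⟩
  have hmin1 : minpoly ℚ z ∣ (X ^ 2 - X + 1 : ℚ[X]) := minpoly.dvd ℚ z hzc
  have hmin2 : minpoly ℚ z ∣ w := minpoly.dvd ℚ z hzw
  have hminirr : Irreducible (minpoly ℚ z) := minpoly.irreducible hint
  have a1 : Associated (minpoly ℚ z) (X ^ 2 - X + 1 : ℚ[X]) :=
    hminirr.associated_of_dvd selmerC_irred hmin1
  have a2 : Associated (minpoly ℚ z) w := hminirr.associated_of_dvd hwirr hmin2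
  exact (a1.symm.dvd.trans a2.dvd).trans hwd

lemma selmerC_sq_not_dvd {n : ℕ} (hn : 2 ≤ n) (hn5 : n % 6 = 5) :
    ¬ ((X ^ 2 - X + 1 : ℚ[X]) ^ 2 ∣ (X ^ n + X - 1)) := by
  rintro ⟨R, hR⟩
  have hder : (X ^ 2 - X + 1 : ℚ[X]) ∣ derivative (X ^ n + X - 1) := by
    rw [hR, derivative_mul]
    have hsq : (X ^ 2 - X + 1 : ℚ[X]) ∣ derivative ((X ^ 2 - X + 1) ^ 2) := by
      rw [derivative_pow]
      exact ⟨C ((2 : ℕ) : ℚ) * derivative (X ^ 2 - X + 1 : ℚ[X]), by ring⟩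
    exact dvd_add (hsq.mul_right R) (((dvd_pow_self _ two_ne_zero).mul_right _))
  -- a complex root of c
  have hdeg : 0 < ((X ^ 2 - X + 1 : ℚ[X]).map (algebraMap ℚ ℂ)).degree := by
    rw [degree_map, degree_eq_natDegree selmerC_monic.ne_zero, selmerC_natDegree]
    norm_num
  obtain ⟨z, hz⟩ := Complex.exists_root hdeg
  have hzc : aeval z (X ^ 2 - X + 1 : ℚ[X]) = 0 := by
    rwa [IsRoot, eval_map, ← aeval_def] at hz
  have hC : z ^ 2 - z + 1 = 0 := by simpa using hzc
  have hzd : aeval z (derivative (X ^ n + X - 1 : ℚ[X])) = 0 := by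
    obtain ⟨t, ht⟩ := hder
    rw [ht, map_mul, hzc, zero_mul]
  have hd : (n : ℂ) * z ^ (n - 1) + 1 = 0 := by
    have : derivative (X ^ n + X - 1 : ℚ[X]) = C (n : ℚ) * X ^ (n - 1) + 1 := by
      rw [derivative_sub, derivative_add, derivative_X_pow, derivative_X, derivative_one]
      ring
    rw [this] at hzd
    simpa using hzd
  have h6 : z ^ 6 = 1 := by linear_combination (z ^ 4 + z ^ 3 - z - 1) * hC
  have h4 : z ^ (n - 1) = -z := by
    obtain ⟨k, hk⟩ : ∃ k, n - 1 = 6 * k + 4 := ⟨n / 6, by omega⟩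
    rw [hk, pow_add, pow_mul, h6, one_pow, one_mul]
    linear_combination (z ^ 2 + z) * hC
  rw [h4] at hd
  have hfin : ((n ^ 2 + 1 : ℕ) : ℂ) = ((n : ℕ) : ℂ) := by
    push_cast
    linear_combination ((n : ℂ) ^ 2) * hC + ((n : ℂ) * z + 1 - (n : ℂ)) * hd
  have : n ^ 2 + 1 = n := Nat.cast_injective hfin
  nlinarith [this]

lemma selmerC_dvd_int {n : ℕ} (hn5 : n % 6 = 5) :
    (X ^ 2 - X + 1 : ℤ[X]) ∣ X ^ n + X - 1 := by
  obtain ⟨k, hk⟩ : ∃ k, n = 6 * k + 5 := ⟨n / 6, by omega⟩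
  have h0 : (X ^ 2 - X + 1 : ℤ[X]) ∣ X ^ 6 - 1 := ⟨(X + 1) * (X ^ 3 - 1), by ring⟩
  have h1' := sub_dvd_pow_sub_pow (X ^ 6 : ℤ[X]) 1 k
  rw [one_pow] at h1'
  have h1 : (X ^ 2 - X + 1 : ℤ[X]) ∣ (X ^ 6) ^ k - 1 := h0.trans h1' 
  have h2 : (X ^ 2 - X + 1 : ℤ[X]) ∣ X ^ 5 + X - 1 := ⟨X ^ 3 + X ^ 2 - 1, by ring⟩
  have key : (X ^ n + X - 1 : ℤ[X]) = X ^ 5 * ((X ^ 6) ^ k - 1) + (X ^ 5 + X - 1) := by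
    subst hk
    ring
  rw [key]
  exact dvd_add (h1.mul_left _) h2

lemma selmerP_irred_int {n : ℕ} (hn : 2 ≤ n) (hn5 : n % 6 ≠ 5) :
    Irreducible (X ^ n + X - 1 : ℤ[X]) := by
  apply IsUnitTrinomial.irreducible_of_coprime' (selmerP_isUnitTrinomial hn)
  rintro z ⟨h1, h2⟩
  rw [selmerP_mirror hn] at h2
  simp only [map_add, map_sub, map_pow, map_one, aeval_X] at h1 h2
  exact selmerAux_no_common_root hn hn5 z h1 h2

lemma selmer_divisor_isUnit {n : ℕ} (hn : 2 ≤ n) (hn5 : n % 6 = 5) (q d : ℤ[X])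
    (hqmon : q.Monic) (hdq : d ∣ q)
    (hdp : d ∣ (X ^ n + X - 1 : ℤ[X]))
    (hdmp : d ∣ (X ^ n + X - 1 : ℤ[X]).mirror)
    (hcd : (X ^ 2 - X + 1) * d ∣ (X ^ n + X - 1 : ℤ[X])) : IsUnit d := by
  set f := Int.castRingHom ℚ with hf
  have hfi : Function.Injective f := Int.cast_injective
  have hmapp : (X ^ n + X - 1 : ℤ[X]).map f = (X ^ n + X - 1 : ℚ[X]) := by
    simp [Polynomial.map_sub, Polynomial.map_add, Polynomial.map_pow]
  have hd1' : d.map f ∣ (X ^ n + X - 1 : ℚ[X]) := by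
    rw [← hmapp]; exact Polynomial.map_dvd f hdp
  have hd2' : d.map f ∣ (1 + X ^ (n - 1) - X ^ n : ℚ[X]) := by
    have := Polynomial.map_dvd f hdmp
    rwa [selmerP_mirror hn, Polynomial.map_sub, Polynomial.map_add, Polynomial.map_pow,
      Polynomial.map_pow, Polynomial.map_one, Polynomial.map_X] at this
  rcases selmer_common_dvd hn (d.map f) hd1' hd2' with hu | hdvd
  · -- unit over ℚ, hence constant, hence unit over ℤ since it divides a monic
    have hdeg : d.natDegree = 0 := by
      rw [← natDegree_map_eq_of_injective hfi d]
      exact natDegree_eq_zero_of_isUnit hu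
    obtain ⟨r, hr⟩ := hdq
    have h1 : d.leadingCoeff * r.leadingCoeff = 1 := by
      rw [← leadingCoeff_mul, ← hr, hqmon.leadingCoeff]
    have hunit : IsUnit d.leadingCoeff := IsUnit.of_mul_eq_one _ h1
    rw [Polynomial.eq_C_of_natDegree_eq_zero hdeg]
    rw [Polynomial.leadingCoeff, hdeg] at hunit
    exact (isUnit_C).mpr hunit
  · exfalso
    apply selmerC_sq_not_dvd hn hn5
    have hmap2 : ((X ^ 2 - X + 1 : ℤ[X]) * d).map f = (X ^ 2 - X + 1 : ℚ[X]) * d.map f := by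
      rw [Polynomial.map_mul]
      congr 1
      simp [Polynomial.map_sub, Polynomial.map_add, Polynomial.map_pow]
    have hcd' : (X ^ 2 - X + 1 : ℚ[X]) * d.map f ∣ (X ^ n + X - 1 : ℚ[X]) := by
      rw [← hmap2, ← hmapp]; exact Polynomial.map_dvd f hcd
    calc (X ^ 2 - X + 1 : ℚ[X]) ^ 2 = (X ^ 2 - X + 1) * (X ^ 2 - X + 1) := sq _
    _ ∣ (X ^ 2 - X + 1 : ℚ[X]) * d.map f := mul_dvd_mul_left _ hdvd
    _ ∣ (X ^ n + X - 1 : ℚ[X]) := hcd'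

lemma selmerC_monic_int : (X ^ 2 - X + 1 : ℤ[X]).Monic := by
  have h : (X ^ 2 - X + 1 : ℤ[X]) = X ^ 2 + (-X + 1) := by ring
  rw [h]
  apply monic_X_pow_add
  apply lt_of_le_of_lt (degree_add_le _ _)
  simp only [degree_neg, degree_X, degree_one]
  norm_num

lemma selmerC_natDegree_int : (X ^ 2 - X + 1 : ℤ[X]).natDegree = 2 := by
  compute_degree!

lemma selmerQ_monic {n : ℕ} (hn : 2 ≤ n) {q : ℤ[X]}
    (hq : (X ^ n + X - 1 : ℤ[X]) = (X ^ 2 - X + 1) * q) : q.Monic := by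
  have h1 : ((X ^ 2 - X + 1 : ℤ[X]) * q).Monic := hq ▸ selmerP_monic hn
  exact selmerC_monic_int.of_mul_monic_left h1

lemma selmerQ_natDegree {n : ℕ} (hn : 2 ≤ n) {q : ℤ[X]}
    (hq : (X ^ n + X - 1 : ℤ[X]) = (X ^ 2 - X + 1) * q) : q.natDegree = n - 2 := by
  have hq0 : q ≠ 0 := (selmerQ_monic hn hq).ne_zero
  have := selmerP_natDegree hn
  rw [hq, natDegree_mul selmerC_monic_int.ne_zero hq0, selmerC_natDegree_int] at this
  omega

lemma selmerQ_irred_int {n : ℕ} (hn : 2 ≤ n) (hn5 : n % 6 = 5) (q : ℤ[X])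
    (hq : (X ^ n + X - 1 : ℤ[X]) = (X ^ 2 - X + 1) * q) : Irreducible q := by
  have hqmon : q.Monic := selmerQ_monic hn hq
  have hqdeg : q.natDegree = n - 2 := selmerQ_natDegree hn hq
  constructor
  · intro hu
    have := hqmon.eq_one_of_isUnit hu
    rw [this, natDegree_one] at hqdeg
    omega
  · intro g h hgh
    have hp_fact : (X ^ n + X - 1 : ℤ[X]) = (X ^ 2 - X + 1) * g * h := by
      rw [hq, hgh, mul_assoc]
    set p : ℤ[X] := X ^ n + X - 1 with hpdef
    set k : ℤ[X] := (X ^ 2 - X + 1) * g * h.mirror with hkdef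
    have hkey : p * p.mirror = k * k.mirror := by
      rw [hkdef, hp_fact, mirror_mul_of_domain, mirror_mul_of_domain, mirror_mul_of_domain,
        mirror_mul_of_domain, mirror_mirror]
      ring
    have h_dvd_p : h ∣ p := ⟨(X ^ 2 - X + 1) * g, by rw [hp_fact]; ring⟩
    have g_dvd_p : g ∣ p := ⟨(X ^ 2 - X + 1) * h, by rw [hp_fact]; ring⟩
    have h_dvd_kmirror : h ∣ k.mirror := by
      rw [hkdef, mirror_mul_of_domain, mirror_mirror]
      exact dvd_mul_left h _
    have g_dvd_k : g ∣ k := ⟨(X ^ 2 - X + 1) * h.mirror, by rw [hkdef]; ring⟩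
    rcases selmerKey_cases (selmerP_isUnitTrinomial hn) k hkey with hk | hk | hk | hk
    · -- k = p : h divides mirror p
      refine Or.inr (selmer_divisor_isUnit hn hn5 q h hqmon ⟨g, by rw [hgh]; ring⟩ h_dvd_p ?_ ?_)
      · rw [hk] at h_dvd_kmirror; exact h_dvd_kmirror
      · exact ⟨g, by rw [← hpdef, hp_fact]; try ring⟩
    · -- k = -p
      refine Or.inr (selmer_divisor_isUnit hn hn5 q h hqmon ⟨g, by rw [hgh]; ring⟩ h_dvd_p ?_ ?_)
      · rw [hk, mirror_neg, dvd_neg] at h_dvd_kmirror; exact h_dvd_kmirror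
      · exact ⟨g, by rw [← hpdef, hp_fact]; try ring⟩
    · -- k = mirror p : g divides mirror p
      refine Or.inl (selmer_divisor_isUnit hn hn5 q g hqmon ⟨h, hgh⟩ g_dvd_p ?_ ?_)
      · rw [hk] at g_dvd_k; exact g_dvd_k
      · exact ⟨h, by rw [← hpdef, hp_fact]; try ring⟩
    · -- k = -mirror p
      refine Or.inl (selmer_divisor_isUnit hn hn5 q g hqmon ⟨h, hgh⟩ g_dvd_p ?_ ?_)
      · rw [hk, dvd_neg] at g_dvd_k; exact g_dvd_k
      · exact ⟨h, by rw [← hpdef, hp_fact]; try ring⟩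

/-- Selmer's theorem on the factorization of the trinomials `-1 + x + x^n`. -/
theorem stmt_13
    (n : ℕ) (hn : 2 ≤ n)
    (G : Polynomial ℚ) (hG : G = X ^ n + X - 1) :
    (¬ n % 6 = 5 → Irreducible G) ∧
    (n % 6 = 5 →
      ∃ Q : Polynomial ℚ,
        G = (X ^ 2 - X + 1) * Q ∧ Irreducible Q ∧ Q.natDegree = n - 2 ∧
        Q.reverse ≠ Q) := by
  have hmapp : (X ^ n + X - 1 : ℤ[X]).map (Int.castRingHom ℚ) = (X ^ n + X - 1 : ℚ[X]) := by
    simp [Polynomial.map_sub, Polynomial.map_add, Polynomial.map_pow]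
  constructor
  · intro hn5
    have hint := selmerP_irred_int hn hn5
    have hprim : (X ^ n + X - 1 : ℤ[X]).IsPrimitive := (selmerP_monic hn).isPrimitive
    have := (IsPrimitive.Int.irreducible_iff_irreducible_map_cast hprim).mp hint
    rwa [hmapp, ← hG] at this
  · intro hn5
    obtain ⟨qz, hqz⟩ := selmerC_dvd_int (n := n) hn5
    have hqmon : qz.Monic := selmerQ_monic hn hqz
    have hqirr : Irreducible qz := selmerQ_irred_int hn hn5 qz hqz
    refine ⟨qz.map (Int.castRingHom ℚ), ?_, ?_, ?_, ?_⟩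
    · have := congrArg (Polynomial.map (Int.castRingHom ℚ)) hqz
      rw [hmapp, Polynomial.map_mul] at this
      rw [hG, this]
      congr 1
      simp [Polynomial.map_sub, Polynomial.map_add, Polynomial.map_pow]
    · exact (IsPrimitive.Int.irreducible_iff_irreducible_map_cast hqmon.isPrimitive).mp hqirr
    · rw [hqmon.natDegree_map, selmerQ_natDegree hn hqz]
    · intro hrev
      have hlead : (qz.map (Int.castRingHom ℚ)).leadingCoeff = 1 :=
        (hqmon.map (Int.castRingHom ℚ)).leadingCoeff
      have hc0 : (qz.map (Int.castRingHom ℚ)).coeff 0 = -1 := by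
        have hpc : (X ^ n + X - 1 : ℤ[X]).coeff 0 = -1 := by
          simp only [coeff_sub, coeff_add, coeff_X_pow, coeff_X_zero, coeff_one]
          rw [if_neg (by omega)]
          norm_num
        rw [hqz, mul_coeff_zero] at hpc
        have hcc : (X ^ 2 - X + 1 : ℤ[X]).coeff 0 = 1 := by simp
        rw [hcc, one_mul] at hpc
        rw [coeff_map, hpc]
        norm_num
      have := coeff_zero_reverse (qz.map (Int.castRingHom ℚ))
      rw [hrev, hc0, hlead] at this
      norm_num at this
end

section
/- Let n ≥ 3 and let f(x) = −1 + x + x^n + x^{m_1} + x^{m_2} + ⋯ + x^{m_s} with s ≥ 1, m_1 − n ≥ n − 1, and m_{q+1} − m_q ≥ n − 1 for 1 ≤ q < s (i.e. f belongs to the class B_n). Then f has exactly one real zero in the open interval (0,1), and this zero lies in the open interval (θ_{n−1}, θ_n). -/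
/-- Every polynomial of the class `B_n` has a unique real zero in `(0,1)`,
and this zero lies in `(θ_{n-1}, θ_n)`. -/
theorem stmt_15
    (n : ℕ) (hn : 3 ≤ n) (s : ℕ) (hs : 1 ≤ s)
    (m : ℕ → ℕ) (hm1 : n + (n - 1) ≤ m 1)
    (hmq : ∀ q, 1 ≤ q → q < s → m q + (n - 1) ≤ m (q + 1))
    (f : ℝ → ℝ)
    (hf : ∀ x, f x = -1 + x + x ^ n + ∑ q ∈ Finset.Icc 1 s, x ^ m q)
    (θa : ℝ) (hθa : θa ∈ Set.Ioo (0 : ℝ) 1) (hθa' : -1 + θa + θa ^ (n - 1) = 0)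
    (θb : ℝ) (hθb : θb ∈ Set.Ioo (0 : ℝ) 1) (hθb' : -1 + θb + θb ^ n = 0) :
    ∃ x : ℝ, x ∈ Set.Ioo θa θb ∧ f x = 0 ∧
      ∀ y ∈ Set.Ioo (0 : ℝ) 1, f y = 0 → y = x := by
  obtain ⟨ha0, ha1⟩ := hθa
  obtain ⟨hb0, hb1⟩ := hθb
  set t := θa ^ (n - 1) with ht
  have ht0 : 0 < t := pow_pos ha0 _
  have hat : θa + t = 1 := by linarith
  have ht1 : t < 1 := by linarith
  -- θa^n = θa * t
  have hpn : θa ^ n = θa * t := by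
    have : n = (n - 1) + 1 := by omega
    rw [this, pow_succ, mul_comm]
  -- strict monotonicity of f on [0,1]
  have hmono : StrictMonoOn f (Set.Icc (0 : ℝ) 1) := by
    intro x hx y hy hxy
    rw [hf, hf]
    have h1 : x ^ n ≤ y ^ n := pow_le_pow_left₀ hx.1 hxy.le n
    have h2 : ∀ q ∈ Finset.Icc 1 s, x ^ m q ≤ y ^ m q := fun q _ =>
      pow_le_pow_left₀ hx.1 hxy.le _
    have h3 := Finset.sum_le_sum h2
    linarith
  -- lower bound on the exponents
  have hmb : ∀ q, 1 ≤ q → q ≤ s → n + q * (n - 1) ≤ m q := by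
    intro q
    induction q with
    | zero => omega
    | succ p ih =>
      intro _ hqs
      rcases Nat.eq_zero_or_pos p with hp | hp
      · subst hp; simpa using hm1
      · have h1 := ih hp (by omega)
        have h2 := hmq p hp (by omega)
        have h3 : (p + 1) * (n - 1) = p * (n - 1) + (n - 1) := by ring
        omega
  -- f θa < 0
  have hfa : f θa < 0 := by
    rw [hf]
    -- bound each summand
    have hterm : ∀ q ∈ Finset.Icc 1 s, θa ^ m q ≤ θa ^ n * t ^ q := by
      intro q hq
      rw [Finset.mem_Icc] at hq
      have hle := hmb q hq.1 hq.2
      calc θa ^ m q ≤ θa ^ (n + q * (n - 1)) :=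
            pow_le_pow_of_le_one ha0.le ha1.le hle
        _ = θa ^ n * t ^ q := by rw [pow_add, ht, ← pow_mul, mul_comm q]
    have hS : (∑ q ∈ Finset.Icc 1 s, θa ^ m q) ≤
        θa ^ n * ∑ q ∈ Finset.Icc 1 s, t ^ q := by
      rw [Finset.mul_sum]
      exact Finset.sum_le_sum hterm
    -- geometric sum bound : (∑ q ∈ Icc 1 s, t^q) * θa < t
    have hG : (∑ q ∈ Finset.Icc 1 s, t ^ q) * θa < t := by
      have h1 : (∑ q ∈ Finset.Icc 1 s, t ^ q) =
          t * ∑ i ∈ Finset.range s, t ^ i := by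
        rw [← Finset.Ico_add_one_right_eq_Icc, Finset.sum_Ico_eq_sum_range, Finset.mul_sum]
        exact Finset.sum_congr (by simp) fun i _ => by rw [add_comm, pow_add, pow_one, mul_comm]
      have h2 : (∑ i ∈ Finset.range s, t ^ i) * (t - 1) = t ^ s - 1 :=
        geom_sum_mul t s
      have h3 : (0:ℝ) < t ^ s := pow_pos ht0 s
      have h4 : θa = 1 - t := by linarith
      rw [h1, h4]
      nlinarith [h2, h3]
    have hSθ : (∑ q ∈ Finset.Icc 1 s, θa ^ m q) * θa < θa ^ n * t := by
      calc (∑ q ∈ Finset.Icc 1 s, θa ^ m q) * θa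
          ≤ (θa ^ n * ∑ q ∈ Finset.Icc 1 s, t ^ q) * θa := by
            apply mul_le_mul_of_nonneg_right hS ha0.le
        _ = θa ^ n * ((∑ q ∈ Finset.Icc 1 s, t ^ q) * θa) := by ring
        _ < θa ^ n * t := by
            apply mul_lt_mul_of_pos_left hG (pow_pos ha0 n)
    -- so S < t^2, and f θa = -t + θa*t + S < -t + θa*t + t^2 = t(θa + t - 1) = 0
    have hS2 : (∑ q ∈ Finset.Icc 1 s, θa ^ m q) < t ^ 2 := by
      rw [hpn] at hSθ
      have := (mul_lt_mul_iff_of_pos_right ha0).mp (by linarith [hSθ] :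
        (∑ q ∈ Finset.Icc 1 s, θa ^ m q) * θa < (t ^ 2) * θa)
      exact this
    nlinarith [hS2, hpn, hat]
  -- f θb > 0
  have hfb : 0 < f θb := by
    rw [hf]
    have hpos : (0:ℝ) < ∑ q ∈ Finset.Icc 1 s, θb ^ m q := by
      apply Finset.sum_pos (fun q _ => pow_pos hb0 _)
      exact Finset.nonempty_Icc.mpr hs
    linarith
  -- θa < θb
  have hab : θa < θb := by
    by_contra h
    push_neg at h
    have h1 : θb ^ n ≤ θa ^ n := pow_le_pow_left₀ hb0.le h n
    have h2 : θa ^ n < θa ^ (n - 1) := by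
      apply pow_lt_pow_right_of_lt_one₀ ha0 ha1
      omega
    linarith
  -- continuity
  have hc : Continuous f := by
    have hfe : f = fun x => -1 + x + x ^ n + ∑ q ∈ Finset.Icc 1 s, x ^ m q :=
      funext hf
    rw [hfe]
    exact ((continuous_const.add continuous_id).add (continuous_pow n)).add
      (continuous_finset_sum _ fun q _ => continuous_pow (m q))
  -- IVT
  have hsub : Set.Ioo (f θa) (f θb) ⊆ f '' Set.Ioo θa θb :=
    intermediate_value_Ioo hab.le hc.continuousOn
  have h0 : (0:ℝ) ∈ Set.Ioo (f θa) (f θb) := ⟨hfa, hfb⟩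
  obtain ⟨x, hx, hfx⟩ := hsub h0
  have hx01 : x ∈ Set.Icc (0:ℝ) 1 := ⟨by linarith [hx.1], by linarith [hx.2]⟩
  refine ⟨x, hx, hfx, fun y hy hfy => ?_⟩
  exact hmono.injOn ⟨hy.1.le, hy.2.le⟩ hx01 (by rw [hfy, hfx])
end

section
/- Let n ≥ 3 and let f(x) = −1 + x + x^n + x^{m_1} + ⋯ + x^{m_s} belong to the class B_n (s ≥ 1, m_1 − n ≥ n − 1, m_{q+1} − m_q ≥ n − 1 for 1 ≤ q < s). Let γ > 1 be the real number such that γ^{−1} is the unique zero of f in (0,1). Then γ is a nonreciprocal real algebraic integer: its minimal polynomial P_γ over ℚ satisfies X^{deg P_γ} P_γ(1/X) ≠ ±P_γ(X); moreover P_γ has no root of modulus 1. -/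
open Polynomial

/-- For `f` in the class `B_n` with unique zero `γ⁻¹` in `(0,1)`, the number
`γ` is a nonreciprocal real algebraic integer whose minimal polynomial has
no root of modulus `1`. -/
theorem stmt_16
    (n : ℕ) (hn : 3 ≤ n) (s : ℕ) (hs : 1 ≤ s)
    (m : ℕ → ℕ) (hm1 : n + (n - 1) ≤ m 1)
    (hmq : ∀ q, 1 ≤ q → q < s → m q + (n - 1) ≤ m (q + 1))
    (f : ℝ → ℝ)
    (hf : ∀ x, f x = -1 + x + x ^ n + ∑ q ∈ Finset.Icc 1 s, x ^ m q)
    (γ : ℝ) (hγ : 1 < γ) (hγroot : f γ⁻¹ = 0)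
    (hγuniq : ∀ y ∈ Set.Ioo (0 : ℝ) 1, f y = 0 → y = γ⁻¹) :
    IsIntegral ℤ γ ∧
    (minpoly ℚ γ).reverse ≠ minpoly ℚ γ ∧
    (minpoly ℚ γ).reverse ≠ -(minpoly ℚ γ) ∧
    ∀ z : ℂ, Polynomial.aeval z (minpoly ℚ γ) = 0 → ‖z‖ ≠ 1 := by
  have hγ0 : (γ : ℝ) ≠ 0 := by positivity
  have hγpos : (0:ℝ) < γ := by linarith
  -- monotonicity of the exponents on [1, s]
  have mono : ∀ a b : ℕ, 1 ≤ a → a ≤ b → b ≤ s → m a ≤ m b := by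
    intro a b h1 hab hbs
    induction b, hab using Nat.le_induction with
    | base => exact le_rfl
    | succ b hab ih =>
      have hb1 : 1 ≤ b := le_trans h1 hab
      have hbs' : b ≤ s := by omega
      have := hmq b hb1 (by omega)
      have := ih hbs'
      omega
  have hm1' : n + 2 ≤ m 1 := by omega
  have hmem : ∀ q ∈ Finset.Icc 1 s, n + 2 ≤ m q ∧ m q ≤ m s := by
    intro q hq
    simp only [Finset.mem_Icc] at hq
    exact ⟨le_trans hm1' (mono 1 q le_rfl hq.1 hq.2), mono q s hq.1 hq.2 le_rfl⟩
  set D := m s with hD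
  have hDn : n + 2 ≤ D := (hmem s (by simp [hs])).1
  -- the root equation for γ⁻¹
  have hroot : γ⁻¹ + γ⁻¹ ^ n + ∑ q ∈ Finset.Icc 1 s, γ⁻¹ ^ m q = 1 := by
    have := hγroot
    rw [hf] at this
    linarith
  -- Part 1 : integrality over ℤ
  have hint : IsIntegral ℤ γ := by
    refine ⟨X ^ D - (X ^ (D - 1) + X ^ (D - n) + ∑ q ∈ Finset.Icc 1 s, X ^ (D - m q)), ?_, ?_⟩
    · apply Polynomial.monic_X_pow_sub
      have h1 : ((D : ℕ) - 1 : ℕ) < (D : WithBot ℕ) := by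
        exact_mod_cast (by omega : D - 1 < D)
      refine lt_of_le_of_lt ?_ h1
      refine le_trans (Polynomial.degree_add_le _ _) ?_
      refine max_le (le_trans (Polynomial.degree_add_le _ _) (max_le ?_ ?_)) ?_
      · simp only [Polynomial.degree_X_pow]; exact_mod_cast (by omega : D - 1 ≤ D - 1)
      · simp only [Polynomial.degree_X_pow]; exact_mod_cast (by omega : D - n ≤ D - 1)
      · refine le_trans (Polynomial.degree_sum_le _ _) ?_
        refine Finset.sup_le fun q hq => ?_
        simp only [Polynomial.degree_X_pow]
        have := (hmem q hq).1
        exact_mod_cast (by omega : D - m q ≤ D - 1)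
    · have key : ∀ k : ℕ, k ≤ D → γ ^ (D - k) = γ ^ D * γ⁻¹ ^ k := by
        intro k hk
        rw [inv_pow, ← pow_sub₀ γ hγ0 hk]
      rw [← Polynomial.aeval_def]
      simp only [map_sub, map_add, map_pow, map_sum, aeval_X]
      rw [key 1 (by omega), key n (by omega),
        Finset.sum_congr rfl (fun q hq => key (m q) (hmem q hq).2)]
      rw [← Finset.mul_sum]
      linear_combination (-(γ:ℝ) ^ D) * hroot
  -- the rational lacunary polynomial
  set gQ : ℚ[X] := -1 + X + X ^ n + ∑ q ∈ Finset.Icc 1 s, X ^ m q with hgQ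
  have hgγinv : (aeval (γ⁻¹ : ℝ)) gQ = 0 := by
    simp only [hgQ, map_add, map_neg, map_one, map_pow, map_sum, aeval_X]
    linarith [hroot]
  have hgγ : (aeval (γ : ℝ)) gQ ≠ 0 := by
    simp only [hgQ, map_add, map_neg, map_one, map_pow, map_sum, aeval_X]
    have h1 : (1:ℝ) ≤ γ ^ n := one_le_pow₀ hγ.le
    have h2 : (0:ℝ) ≤ ∑ q ∈ Finset.Icc 1 s, γ ^ m q :=
      Finset.sum_nonneg fun q _ => pow_nonneg (le_of_lt hγpos) _
    intro h
    linarith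
  -- basic facts about the minimal polynomial
  have hintQ : IsIntegral ℚ γ := hint.tower_top
  set P := minpoly ℚ γ with hP
  have hPmonic : P.Monic := minpoly.monic hintQ
  have hPirr : Irreducible P := minpoly.irreducible hintQ
  have hPne : P ≠ 0 := hPmonic.ne_zero
  -- key: γ⁻¹ is not a root of P
  have hnoroot : (aeval (γ⁻¹ : ℝ)) P ≠ 0 := by
    intro h0
    have hmin : minpoly ℚ (γ⁻¹ : ℝ) = P :=
      (minpoly.eq_of_irreducible_of_monic hPirr h0 hPmonic).symm
    have hdvd : P ∣ gQ := hmin ▸ minpoly.dvd ℚ (γ⁻¹ : ℝ) hgγinv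
    obtain ⟨t, ht⟩ := hdvd
    apply hgγ
    rw [ht, map_mul, hP, minpoly.aeval, zero_mul]
  -- γ⁻¹ is a root of reverse P
  have : Invertible (γ : ℝ) := invertibleOfNonzero hγ0
  have hrevroot : (aeval (γ⁻¹ : ℝ)) P.reverse = 0 := by
    have h := Polynomial.eval₂_reverse_mul_pow (algebraMap ℚ ℝ) γ P
    rw [invOf_eq_inv] at h
    have h2 : (aeval (γ : ℝ)) P = 0 := minpoly.aeval ℚ γ
    rw [aeval_def] at h2 ⊢
    have hpow : (γ : ℝ) ^ P.natDegree ≠ 0 := pow_ne_zero _ hγ0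
    rw [h2] at h
    exact (mul_eq_zero.mp h).resolve_right hpow
  have hrev1 : P.reverse ≠ P := by
    intro h; exact hnoroot (h ▸ hrevroot)
  have hrev2 : P.reverse ≠ -P := by
    intro h
    rw [h, map_neg, neg_eq_zero] at hrevroot
    exact hnoroot hrevroot
  refine ⟨hint, hrev1, hrev2, ?_⟩
  -- Part 4 : no root of modulus 1
  intro z hz hz1
  have hz0 : z ≠ 0 := by
    intro h; rw [h] at hz1; simp at hz1
  -- conj z is a root of P
  have hconj : (aeval ((starRingEnd ℂ) z)) P = 0 := by
    have σ : ℂ →ₐ[ℚ] ℂ := AlgHom.restrictScalars ℚ Complex.conjAe.toAlgHom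
    have := Polynomial.aeval_algHom_apply
      (AlgHom.restrictScalars ℚ Complex.conjAe.toAlgHom) z P
    simpa [hz] using this
  have hzinv : z⁻¹ = (starRingEnd ℂ) z := Complex.inv_eq_conj hz1
  -- z⁻¹ is a root of reverse P
  have : Invertible z := invertibleOfNonzero hz0
  have hrevz : (aeval (z⁻¹ : ℂ)) P.reverse = 0 := by
    have h := Polynomial.eval₂_reverse_mul_pow (algebraMap ℚ ℂ) z P
    rw [invOf_eq_inv] at h
    rw [aeval_def] at hz ⊢
    rw [hz] at h
    exact (mul_eq_zero.mp h).resolve_right (pow_ne_zero _ hz0)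
  -- hence P divides reverse P
  have hzinvP : (aeval (z⁻¹ : ℂ)) P = 0 := by rw [hzinv]; exact hconj
  have hmin : minpoly ℚ (z⁻¹ : ℂ) = P :=
    (minpoly.eq_of_irreducible_of_monic hPirr hzinvP hPmonic).symm
  have hdvd : P ∣ P.reverse := by
    have h := minpoly.dvd ℚ (z⁻¹ : ℂ) hrevz
    rwa [hmin] at h
  obtain ⟨u, hu⟩ := hdvd
  have hrevne : P.reverse ≠ 0 :=
    fun h => hPne (Polynomial.reverse_eq_zero.mp h)
  have hune : u ≠ 0 := by rintro rfl; rw [mul_zero] at hu; exact hrevne hu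
  have hdeg : u.natDegree = 0 := by
    have h1 : P.reverse.natDegree ≤ P.natDegree := Polynomial.reverse_natDegree_le P
    have h2 : P.reverse.natDegree = P.natDegree + u.natDegree := by
      rw [hu, Polynomial.natDegree_mul hPne hune]
    omega
  obtain ⟨c, rfl⟩ := Polynomial.natDegree_eq_zero.mp hdeg
  -- compare coefficients
  have hc0 : (1 : ℚ) = P.coeff 0 * c := by
    have := Polynomial.coeff_zero_reverse P
    rw [hu, Polynomial.coeff_mul_C, hPmonic.leadingCoeff] at this
    exact this.symm
  have hcd : P.coeff 0 = c := by
    have h1 : P.reverse.coeff P.natDegree = P.coeff 0 := by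
      rw [Polynomial.coeff_reverse, Polynomial.revAt_le le_rfl, Nat.sub_self]
    have h2 : P.reverse.coeff P.natDegree = P.coeff P.natDegree * c := by
      rw [hu, Polynomial.coeff_mul_C]
    rw [h1, hPmonic.coeff_natDegree, one_mul] at h2
    exact h2
  rw [hcd] at hc0
  rcases mul_self_eq_one_iff.mp hc0.symm with h | h
  · apply hrev1
    rw [hu, h, map_one, mul_one]
  · apply hrev2
    rw [hu, h, map_neg, map_one, mul_neg_one]
end
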